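/- arXiv:1804.08147 — 6 statements merged into one kernel-verified Lean document; each statement's English description precedes it below -/
import Mathlib

section
/- Let G be a finite simple connected graph of order at least 2. If x and y are adjacent vertices of G, then |cdim_G(x) − cdim_G(y)| ≤ 1. -/
open SimpleGraph

variable {V : Type*}

/-- `S` is a resolving set of `G`. -/
def IsResolving (G : SimpleGraph V) (S : Set V) : Prop :=
  ∀ x y : V, x ≠ y → ∃ z ∈ S, G.dist z x ≠ G.dist z y

/-- `S` is a connected resolving set of `G`. -/
def IsConnResolving (G : SimpleGraph V) (S : Set V) : Prop :=
  IsResolving G S ∧ (G.induce S).Connected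

/-- The metric dimension of `G`. -/
noncomputable def metricDim (G : SimpleGraph V) : ℕ :=
  sInf {n | ∃ S : Set V, IsResolving G S ∧ S.ncard = n}

/-- The connected metric dimension of `G`. -/
noncomputable def cdim (G : SimpleGraph V) : ℕ :=
  sInf {n | ∃ S : Set V, IsConnResolving G S ∧ S.ncard = n}

/-- The connected metric dimension of `G` at a vertex `v`. -/
noncomputable def cdimAt (G : SimpleGraph V) (v : V) : ℕ :=
  sInf {n | ∃ S : Set V, IsConnResolving G S ∧ v ∈ S ∧ S.ncard = n}

lemma univ_connResolving {V : Type*} (G : SimpleGraph V) (hG : G.Connected) :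
    IsConnResolving G Set.univ := by
  constructor
  · intro a b hab
    exact ⟨a, Set.mem_univ a, by
      rw [SimpleGraph.dist_self]
      exact fun h => hab (hG.dist_eq_zero_iff.mp h.symm)⟩
  · exact (G.induceUnivIso).connected_iff.mpr hG

lemma cdimAt_le_adj {V : Type*} [Fintype V] (G : SimpleGraph V) (hG : G.Connected)
    (x y : V) (hxy : G.Adj x y) : cdimAt G x ≤ cdimAt G y + 1 := by
  have hne : {n | ∃ S : Set V, IsConnResolving G S ∧ y ∈ S ∧ S.ncard = n}.Nonempty :=
    ⟨(Set.univ : Set V).ncard, Set.univ, univ_connResolving G hG, Set.mem_univ y, rfl⟩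
  obtain ⟨S, hS, hyS, hcard⟩ := Nat.sInf_mem hne
  have hconn' : (G.induce (S ∪ {x})).Connected := by
    refine connected_induce_union hS.2.preconnected (?_ : (G.induce {x}).Connected).preconnected hyS rfl hxy.symm
    rw [connected_iff_exists_forall_reachable]
    exact ⟨⟨x, rfl⟩, by rintro ⟨v, rfl⟩; rfl⟩
  have hres' : IsResolving G (S ∪ {x}) := by
    intro a b hab
    obtain ⟨z, hz, hd⟩ := hS.1 a b hab
    exact ⟨z, Or.inl hz, hd⟩
  have hmem : S.ncard + 1 ∈ {n | ∃ T : Set V, IsConnResolving G T ∧ x ∈ T ∧ T.ncard = n} ∨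
      S.ncard ∈ {n | ∃ T : Set V, IsConnResolving G T ∧ x ∈ T ∧ T.ncard = n} := by
    by_cases hx : x ∈ S
    · right; exact ⟨S ∪ {x}, ⟨hres', hconn'⟩, Or.inr rfl, by
        rw [Set.union_singleton, Set.insert_eq_self.mpr hx]⟩
    · left
      refine ⟨S ∪ {x}, ⟨hres', hconn'⟩, Or.inr rfl, ?_⟩
      rw [Set.union_singleton, Set.ncard_insert_of_notMem hx (Set.toFinite S)]
  have hy : cdimAt G y = S.ncard := hcard.symm
  rcases hmem with h | h
  · have hx : cdimAt G x ≤ S.ncard + 1 := Nat.sInf_le h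
    omega
  · have hx : cdimAt G x ≤ S.ncard := Nat.sInf_le h
    omega

/-- In a finite simple connected graph of order at least 2, adjacent
vertices `x, y` satisfy `|cdim_G(x) - cdim_G(y)| ≤ 1`. -/
theorem stmt_3 {V : Type*} [Fintype V] (G : SimpleGraph V) (hG : G.Connected)
    (hn : 2 ≤ Fintype.card V) (x y : V) (hxy : G.Adj x y) :
    |(cdimAt G x : ℤ) - (cdimAt G y : ℤ)| ≤ 1 := by
  have h1 := cdimAt_le_adj G hG x y hxy
  have h2 := cdimAt_le_adj G hG y x hxy.symm
  rw [abs_le]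
  omega
end

section
/- For every positive integer b, there exists a finite simple connected graph G such that rdiam(G) − rrad(G) = b. -/
open SimpleGraph

variable {V : Type*}

/-- The resolving radius of `G`: the minimum of `cdim_G(v)` over all vertices `v`. -/
noncomputable def rrad (G : SimpleGraph V) : ℕ :=
  sInf {n | ∃ v : V, cdimAt G v = n}

/-- The resolving diameter of `G`: the maximum of `cdim_G(v)` over all vertices `v`. -/
noncomputable def rdiam (G : SimpleGraph V) : ℕ :=
  sSup {n | ∃ v : V, cdimAt G v = n}

namespace Stmt7

/-- natural distance -/
def nd (a b : ℕ) : ℕ := (a - b) + (b - a)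

/-- Vertex type: path vertices `0..n+3` plus an extra leaf `y`. -/
abbrev Vn (n : ℕ) := Fin (n + 4) ⊕ Unit

/-- coordinate of a vertex -/
def fc {n : ℕ} : Vn n → ℕ
  | .inl i => i.val
  | .inr _ => 1

/-- The spider graph with legs 1, 1, n+2: a path `0 — 1 — ⋯ — (n+3)` together with a
pendant vertex `y` attached to vertex `1`. -/
def Gn (n : ℕ) : SimpleGraph (Vn n) where
  Adj u v :=
    match u, v with
    | .inl i, .inl j => i.val + 1 = j.val ∨ j.val + 1 = i.val
    | .inl i, .inr _ => i.val = 1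
    | .inr _, .inl j => j.val = 1
    | .inr _, .inr _ => False
  symm := ⟨by rintro (i | u) (j | v) h <;> simp_all <;> omega⟩
  loopless := ⟨by rintro (i | u) h <;> simp_all⟩

variable {n : ℕ}

@[simp] lemma val_mk {m : ℕ} (h : m < n + 4) : ((⟨m, h⟩ : Fin (n + 4)) : ℕ) = m := rfl

/-- the distance function of `Gn n` -/
def df : Vn n → Vn n → ℕ
  | .inl i, .inl j => nd i.val j.val
  | .inl i, .inr _ => nd i.val 1 + 1
  | .inr _, .inl j => nd j.val 1 + 1
  | .inr _, .inr _ => 0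

lemma df_eq_zero {u v : Vn n} (h : df u v = 0) : u = v := by
  rcases u with i | ⟨⟩ <;> rcases v with j | ⟨⟩ <;> simp [df, nd] at h ⊢
  exact Fin.ext (by omega)

lemma adj_df {u w : Vn n} (h : (Gn n).Adj u w) (v : Vn n) : df u v ≤ df w v + 1 := by
  rcases u with i | ⟨⟩ <;> rcases w with j | ⟨⟩ <;> rcases v with k | ⟨⟩ <;>
    simp [Gn, df, nd] at h ⊢ <;> omega

lemma df_self (u : Vn n) : df u u = 0 := by
  rcases u with i | ⟨⟩ <;> simp [df, nd]

lemma df_le_length {u v : Vn n} (p : (Gn n).Walk u v) : df u v ≤ p.length := by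
  induction p with
  | nil => simp [df_self]
  | cons h q ih =>
      calc df _ _ ≤ df _ _ + 1 := adj_df h _
      _ ≤ q.length + 1 := by omega

lemma df_step {u v : Vn n} {k : ℕ} (h : df u v = k + 1) :
    ∃ w : Vn n, (Gn n).Adj u w ∧ df w v = k := by
  rcases u with i | ⟨⟩ <;> rcases v with j | ⟨⟩
  · -- inl, inl
    simp only [df, nd] at h
    rcases lt_or_ge i.val j.val with hlt | hle
    · refine ⟨.inl ⟨i.val + 1, by omega⟩, Or.inl rfl, ?_⟩
      simp [df, nd]; omega
    · refine ⟨.inl ⟨i.val - 1, by omega⟩, Or.inr (by simp; omega), ?_⟩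
      simp [df, nd]; omega
  · -- inl, inr
    simp only [df, nd] at h
    rcases Nat.lt_or_ge i.val 1 with h0 | h1
    · refine ⟨.inl ⟨1, by omega⟩, Or.inl (by show i.val + 1 = 1; omega), ?_⟩
      simp [df, nd]; omega
    · rcases Nat.lt_or_ge i.val 2 with h1' | h2
      · refine ⟨.inr (), by simp [Gn]; omega, ?_⟩
        simp [df]; omega
      · refine ⟨.inl ⟨i.val - 1, by omega⟩, Or.inr (by simp; omega), ?_⟩
        simp [df, nd]; omega
  · -- inr, inl
    simp only [df, nd] at h
    refine ⟨.inl ⟨1, by omega⟩, by simp [Gn], ?_⟩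
    simp [df, nd]; omega
  · simp [df] at h

lemma reach_of_df : ∀ (k : ℕ) (u v : Vn n), df u v = k → (Gn n).Reachable u v := by
  intro k
  induction k with
  | zero => intro u v h; exact (df_eq_zero h) ▸ Reachable.refl u
  | succ k ih =>
      intro u v h
      obtain ⟨w, hadj, hw⟩ := df_step h
      exact (hadj.reachable).trans (ih w v hw)

lemma Gn_connected : (Gn n).Connected := by
  rw [connected_iff]
  exact ⟨fun u v => reach_of_df (df u v) u v rfl, ⟨.inr ()⟩⟩

lemma dist_le_df : ∀ (k : ℕ) (u v : Vn n), df u v = k → (Gn n).dist u v ≤ k := by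
  intro k
  induction k with
  | zero => intro u v h; rw [df_eq_zero h]; simp
  | succ k ih =>
      intro u v h
      obtain ⟨w, hadj, hw⟩ := df_step h
      calc (Gn n).dist u v ≤ (Gn n).dist u w + (Gn n).dist w v := Gn_connected.dist_triangle
        _ ≤ 1 + k := by
            have h1 : (Gn n).dist u w ≤ 1 := by
              have := SimpleGraph.dist_le (SimpleGraph.Walk.cons hadj SimpleGraph.Walk.nil)
              simpa using this
            have h2 := ih w v hw
            omega
        _ = k + 1 := by omega

lemma dist_eq (u v : Vn n) : (Gn n).dist u v = df u v := by
  refine le_antisymm (dist_le_df _ u v rfl) ?_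
  obtain ⟨p, hp⟩ := (reach_of_df (df u v) u v rfl).exists_walk_length_eq_dist
  calc df u v ≤ p.length := df_le_length p
    _ = (Gn n).dist u v := hp

/-! Shorthands for special vertices. -/

def vx : Vn n := .inl ⟨0, by omega⟩
def vc : Vn n := .inl ⟨1, by omega⟩
def vp : Vn n := .inl ⟨2, by omega⟩
def vy : Vn n := .inr ()

lemma adj_fc {u v : Vn n} (h : (Gn n).Adj u v) : fc u ≤ fc v + 1 ∧ fc v ≤ fc u + 1 := by
  rcases u with i | ⟨⟩ <;> rcases v with j | ⟨⟩ <;> simp [Gn, fc] at h ⊢ <;> omega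

/-- discrete intermediate value theorem along walks in an induced subgraph -/
lemma walk_ivt {S : Set (Vn n)} {a b : ↥S} (p : ((Gn n).induce S).Walk a b) :
    ∀ t : ℕ, ((fc a.1 ≤ t ∧ t ≤ fc b.1) ∨ (fc b.1 ≤ t ∧ t ≤ fc a.1)) →
      ∃ w ∈ S, fc w = t := by
  induction p with
  | nil =>
      rename_i w
      intro t ht
      exact ⟨w.1, w.2, by omega⟩
  | @cons A B C h q ih =>
      intro t ht
      by_cases hc : (fc B.1 ≤ t ∧ t ≤ fc C.1) ∨ (fc C.1 ≤ t ∧ t ≤ fc B.1)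
      · exact ih t hc
      · have hAB : (Gn n).Adj A.1 B.1 := h
        have := adj_fc hAB
        exact ⟨A.1, A.2, by omega⟩

lemma ivt_of_conn {S : Set (Vn n)} (hS : ((Gn n).induce S).Connected)
    {a b : Vn n} (ha : a ∈ S) (hb : b ∈ S) (t : ℕ)
    (ht : (fc a ≤ t ∧ t ≤ fc b) ∨ (fc b ≤ t ∧ t ≤ fc a)) :
    ∃ w ∈ S, fc w = t := by
  obtain ⟨p⟩ := hS ⟨a, ha⟩ ⟨b, hb⟩
  exact walk_ivt p t ht

/-- If `y ∈ S`, `S` is connected and contains another vertex, then the center `vc ∈ S`. -/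
lemma inr_step {S : Set (Vn n)} (hS : ((Gn n).induce S).Connected)
    (hy : (vy : Vn n) ∈ S) {u : Vn n} (hu : u ∈ S) (hne : u ≠ vy) :
    (vc : Vn n) ∈ S := by
  obtain ⟨p⟩ := hS ⟨vy, hy⟩ ⟨u, hu⟩
  have key : ∀ {a b : ↥S} (q : ((Gn n).induce S).Walk a b),
      a.1 = vy → b.1 ≠ vy → (vc : Vn n) ∈ S := by
    intro a b q
    induction q with
    | nil =>
        rename_i w
        intro h1 h2
        exact absurd h1 h2
    | @cons A B C h q ih =>
        intro h1 _
        have hAB : (Gn n).Adj A.1 B.1 := h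
        rw [h1] at hAB
        have : B.1 = vc := by
          rcases hB : B.1 with j | ⟨⟩
          · have hj1 : j.val = 1 := by rw [hB] at hAB; simpa [Gn, vy] using hAB
            show Sum.inl j = vc
            exact congrArg Sum.inl (Fin.ext (by simp [hj1, vc]))
          · rw [hB] at hAB; simp [Gn, vy] at hAB
        exact this ▸ B.2
  exact key p rfl hne

/-! ### counting lemmas -/

lemma ncard_interval (a b : ℕ) (hb : b ≤ n + 3) (hab : a ≤ b) :
    ({i : Fin (n + 4) | a ≤ i.val ∧ i.val ≤ b}).ncard = b + 1 - a := by
  have himg : {i : Fin (n + 4) | a ≤ i.val ∧ i.val ≤ b} =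
      (fun t : ℕ => (⟨min t (n + 3), by omega⟩ : Fin (n + 4))) '' Set.Icc a b := by
    ext i
    simp only [Set.mem_setOf_eq, Set.mem_image, Set.mem_Icc]
    constructor
    · rintro ⟨h1, h2⟩
      exact ⟨i.val, ⟨h1, h2⟩, Fin.ext (by simp; omega)⟩
    · rintro ⟨t, ⟨h1, h2⟩, rfl⟩
      simp; omega
  rw [himg, Set.ncard_image_of_injOn, ← Finset.coe_Icc, Set.ncard_coe_finset, Nat.card_Icc]
  intro s hs t ht hst
  simp only [Set.mem_Icc] at hs ht
  have := congrArg Fin.val hst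
  simp at this; omega

lemma ncard_Iic_nat (j : ℕ) : (Set.Iic j).ncard = j + 1 := by
  rw [← Finset.coe_Iic, Set.ncard_coe_finset, Nat.card_Iic]

/-! ### the candidate sets -/

/-- initial segment of the path -/
def Aset (n j : ℕ) : Set (Vn n) := Sum.inl '' {i : Fin (n + 4) | i.val ≤ j}

lemma Aset_ncard {j : ℕ} (hj : j ≤ n + 3) : (Aset n j).ncard = j + 1 := by
  rw [Aset, Set.ncard_image_of_injective _ Sum.inl_injective]
  have : {i : Fin (n + 4) | i.val ≤ j} = {i : Fin (n + 4) | 0 ≤ i.val ∧ i.val ≤ j} := by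
    ext i; simp
  rw [this, ncard_interval 0 j hj (by omega)]
  omega

lemma Aset_mem {j : ℕ} {i : Fin (n + 4)} (h : i.val ≤ j) : (Sum.inl i : Vn n) ∈ Aset n j :=
  ⟨i, h, rfl⟩

lemma Aset_connected (j : ℕ) : ((Gn n).induce (Aset n j)).Connected := by
  rw [connected_iff]
  constructor
  · -- preconnected: everything reachable to vx
    have key : ∀ (k : ℕ) (w : ↥(Aset n j)), fc w.1 = k →
        ((Gn n).induce (Aset n j)).Reachable w ⟨vx, Aset_mem (Nat.zero_le j)⟩ := by
      intro k
      induction k with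
      | zero =>
          intro w hw
          have hwx : w = (⟨vx, Aset_mem (Nat.zero_le j)⟩ : ↥(Aset n j)) := by
            refine Subtype.ext ?_
            obtain ⟨i, hi, hw'⟩ := w.2
            rw [← hw'] at hw ⊢
            show Sum.inl i = vx
            exact congrArg Sum.inl (Fin.ext (by simp [vx]; simpa [fc] using hw))
          rw [hwx]
      | succ k ih =>
          intro w hw
          obtain ⟨i, hi, hw'⟩ := w.2
          have hiv : i.val = k + 1 := by rw [← hw, ← hw']; rfl
          have hij : i.val ≤ j := hi
          have hmem : (Sum.inl ⟨k, by omega⟩ : Vn n) ∈ Aset n j := Aset_mem (by simp only [val_mk]; omega)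
          have hadj : ((Gn n).induce (Aset n j)).Adj w ⟨Sum.inl ⟨k, by omega⟩, hmem⟩ := by
            show (Gn n).Adj w.1 _
            rw [← hw']
            exact Or.inr (by simp [hiv])
          exact hadj.reachable.trans (ih _ rfl)
    intro u v
    exact (key (fc u.1) u rfl).trans (key (fc v.1) v rfl).symm
  · exact ⟨⟨vx, Aset_mem (Nat.zero_le j)⟩⟩

/-- the set `{y, c, p}` -/
def Bset (n : ℕ) : Set (Vn n) := {vy, vc, vp}

lemma Bset_ncard : (Bset n).ncard = 3 := by
  show ({vy, vc, vp} : Set (Vn n)).ncard = 3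
  rw [Set.ncard_insert_of_notMem (by simp [vy, vc, vp]),
    Set.ncard_insert_of_notMem (by simp [vc, vp]),
    Set.ncard_singleton]

lemma Bset_connected : ((Gn n).induce (Bset n)).Connected := by
  rw [connected_iff]
  have hc : (vc : Vn n) ∈ Bset n := by simp [Bset]
  constructor
  · have key : ∀ w : ↥(Bset n), ((Gn n).induce (Bset n)).Reachable w ⟨vc, hc⟩ := by
      intro w
      have hw := w.2
      simp only [Bset, Set.mem_insert_iff, Set.mem_singleton_iff] at hw
      rcases hw with h | h | h
      · refine SimpleGraph.Adj.reachable ?_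
        show (Gn n).Adj w.1 vc
        rw [h]; simp [Gn, vy, vc]
      · have hww : w = (⟨vc, hc⟩ : ↥(Bset n)) := Subtype.ext h
        rw [hww]
      · refine SimpleGraph.Adj.reachable ?_
        show (Gn n).Adj w.1 vc
        rw [h]; exact Or.inr (by simp [vp, vc])
    intro u v
    exact (key u).trans (key v).symm
  · exact ⟨⟨vc, hc⟩⟩

/-! ### resolving lemmas -/

lemma resolving_of_xp {S : Set (Vn n)} (h0 : (vx : Vn n) ∈ S) (h2 : (vp : Vn n) ∈ S) :
    IsResolving (Gn n) S := by
  intro u v huv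
  by_cases h : df (vx : Vn n) u ≠ df vx v
  · exact ⟨vx, h0, by rwa [dist_eq, dist_eq]⟩
  · push_neg at h
    refine ⟨vp, h2, ?_⟩
    rw [dist_eq, dist_eq]
    rcases u with i | ⟨⟩ <;> rcases v with j | ⟨⟩
    · exact absurd (by exact congrArg Sum.inl (Fin.ext (by simp [df, nd, vx] at h; omega))) huv
    · simp [df, nd, vx, vp] at h ⊢; omega
    · simp [df, nd, vx, vp] at h ⊢; omega
    · exact absurd rfl huv

lemma resolving_of_yp {S : Set (Vn n)} (h0 : (vy : Vn n) ∈ S) (h2 : (vp : Vn n) ∈ S) :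
    IsResolving (Gn n) S := by
  intro u v huv
  by_cases h : df (vy : Vn n) u ≠ df vy v
  · exact ⟨vy, h0, by rwa [dist_eq, dist_eq]⟩
  · push_neg at h
    refine ⟨vp, h2, ?_⟩
    rw [dist_eq, dist_eq]
    rcases u with i | ⟨⟩ <;> rcases v with j | ⟨⟩
    · have hij : i.val ≠ j.val := fun hh => huv (congrArg Sum.inl (Fin.ext hh))
      simp [df, nd, vy, vp] at h ⊢; omega
    · simp [df, nd, vy, vp] at h
    · simp [df, nd, vy, vp] at h
    · exact absurd rfl huv

/-- any resolving set contains `x` or `y` -/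
lemma resolving_xy {S : Set (Vn n)} (h : IsResolving (Gn n) S) :
    (vx : Vn n) ∈ S ∨ (vy : Vn n) ∈ S := by
  obtain ⟨z, hz, hd⟩ := h vx vy (by simp [vx, vy])
  rw [dist_eq, dist_eq] at hd
  rcases z with i | ⟨⟩
  · left
    have : i.val = 0 := by simp [df, nd, vx, vy] at hd; omega
    have : (Sum.inl i : Vn n) = vx := congrArg Sum.inl (Fin.ext (by simpa using this))
    exact this ▸ hz
  · exact Or.inr hz

/-- any resolving set contains `y` or some path vertex with coordinate at least 2 -/
lemma resolving_yp {S : Set (Vn n)} (h : IsResolving (Gn n) S) :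
    (vy : Vn n) ∈ S ∨ ∃ i : Fin (n + 4), (Sum.inl i : Vn n) ∈ S ∧ 2 ≤ i.val := by
  obtain ⟨z, hz, hd⟩ := h vy vp (by simp [vy, vp])
  rw [dist_eq, dist_eq] at hd
  rcases z with i | ⟨⟩
  · right
    refine ⟨i, hz, ?_⟩
    by_contra hlt
    simp [df, nd, vy, vp] at hd
    omega
  · exact Or.inl hz

/-- any resolving set contains a path vertex with coordinate different from 1 -/
lemma resolving_x_or_far {S : Set (Vn n)} (h : IsResolving (Gn n) S) :
    ∃ i : Fin (n + 4), (Sum.inl i : Vn n) ∈ S ∧ i.val ≠ 1 := by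
  obtain ⟨z, hz, hd⟩ := h vx vp (by simp [vx, vp])
  rw [dist_eq, dist_eq] at hd
  rcases z with i | ⟨⟩
  · refine ⟨i, hz, ?_⟩
    intro h1
    simp [df, nd, vx, vp, h1] at hd
  · simp [df, nd, vx, vp, vy] at hd

/-! ### lower bounds -/

/-- main lower bound: a connected resolving set containing path vertex `j ≥ 2`
has at least `j+1` elements. -/
lemma lb_far {S : Set (Vn n)} (hcr : IsConnResolving (Gn n) S)
    {i : Fin (n + 4)} (hi : (Sum.inl i : Vn n) ∈ S) (h2 : 2 ≤ i.val) :
    i.val + 1 ≤ S.ncard := by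
  obtain ⟨hres, hconn⟩ := hcr
  set j := i.val with hj
  rcases resolving_xy hres with hx | hy
  · -- x ∈ S : the coordinates 0,…,j are all hit by S
    have hsub : Set.Iic j ⊆ fc '' S := by
      intro t ht
      simp only [Set.mem_Iic] at ht
      obtain ⟨w, hw, hwt⟩ := ivt_of_conn hconn hx hi t (Or.inl ⟨by simp [fc, vx], by simpa [fc]⟩)
      exact ⟨w, hw, hwt⟩
    calc j + 1 = (Set.Iic j).ncard := (ncard_Iic_nat j).symm
      _ ≤ (fc '' S).ncard := Set.ncard_le_ncard hsub (S.toFinite.image fc)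
      _ ≤ S.ncard := Set.ncard_image_le S.toFinite
  · -- y ∈ S
    have hc : (vc : Vn n) ∈ S := inr_step hconn hy hi (by simp [vy])
    have hsub : insert (vy : Vn n) (Sum.inl '' {i' : Fin (n + 4) | 1 ≤ i'.val ∧ i'.val ≤ j}) ⊆ S := by
      intro w hw
      rcases hw with rfl | ⟨i', ⟨h1, h2'⟩, rfl⟩
      · exact hy
      · rcases Nat.lt_or_ge i'.val 2 with hlt | hge
        · have : i' = (⟨1, by omega⟩ : Fin (n + 4)) := Fin.ext (by simp only [val_mk]; omega)
          rw [this]; exact hc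
        · obtain ⟨w, hw, hwt⟩ := ivt_of_conn hconn hy hi i'.val
            (Or.inl ⟨by simp [fc, vy]; omega, by simpa [fc]⟩)
          rcases w with i'' | ⟨⟩
          · have : i'' = i' := Fin.ext (by simpa [fc] using hwt)
            exact this ▸ hw
          · simp [fc] at hwt; omega
    have hcard : (insert (vy : Vn n)
        (Sum.inl '' {i' : Fin (n + 4) | 1 ≤ i'.val ∧ i'.val ≤ j})).ncard = j + 1 := by
      rw [Set.ncard_insert_of_notMem (by simp [vy])
        ((Set.toFinite _).image Sum.inl),
        Set.ncard_image_of_injective _ Sum.inl_injective,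
        ncard_interval 1 j (by omega) (by omega)]
      omega
    calc j + 1 = _ := hcard.symm
      _ ≤ S.ncard := Set.ncard_le_ncard hsub S.toFinite

/-- any connected resolving set has at least 3 elements -/
lemma lb_three {S : Set (Vn n)} (hcr : IsConnResolving (Gn n) S) : 3 ≤ S.ncard := by
  obtain ⟨hres, hconn⟩ := hcr
  rcases resolving_yp hres with hy | ⟨i, hi, h2⟩
  · rcases resolving_x_or_far hres with ⟨i, hi, hne1⟩
    rcases Nat.lt_or_ge i.val 2 with hlt | hge
    · -- i.val = 0, so x ∈ S
      have hx : (vx : Vn n) ∈ S := by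
        have : (Sum.inl i : Vn n) = vx := congrArg Sum.inl (Fin.ext (by show i.val = 0; omega))
        exact this ▸ hi
      have hc : (vc : Vn n) ∈ S := inr_step hconn hy hx (by simp [vx, vy])
      have hsub : ({vx, vc, vy} : Set (Vn n)) ⊆ S := by
        intro w hw
        rcases hw with rfl | rfl | rfl
        exacts [hx, hc, hy]
      have : ({vx, vc, vy} : Set (Vn n)).ncard = 3 := by
        rw [Set.ncard_insert_of_notMem (by simp [vx, vc, vy]),
          Set.ncard_insert_of_notMem (by simp [vc, vy]), Set.ncard_singleton]
      calc 3 = _ := this.symm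
        _ ≤ S.ncard := Set.ncard_le_ncard hsub S.toFinite
    · have := lb_far ⟨hres, hconn⟩ hi hge
      omega
  · have := lb_far ⟨hres, hconn⟩ hi h2
    omega

/-! ### upper-bound sets are connected resolving -/

lemma Aset_connResolving {j : ℕ} (h2 : 2 ≤ j) : IsConnResolving (Gn n) (Aset n j) :=
  ⟨resolving_of_xp (Aset_mem (by simp only [val_mk]; omega)) (Aset_mem (by simp only [val_mk]; omega)), Aset_connected j⟩

lemma Bset_connResolving : IsConnResolving (Gn n) (Bset n) :=
  ⟨resolving_of_yp (by simp [Bset]) (by simp [Bset]), Bset_connected⟩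

/-! ### cdimAt computations -/

lemma univ_connResolving : IsConnResolving (Gn n) Set.univ := by
  constructor
  · intro u v huv
    refine ⟨u, trivial, ?_⟩
    rw [dist_eq, dist_eq]
    intro h
    have hu : df u u = 0 := by rcases u with i | ⟨⟩ <;> simp [df, nd]
    rw [hu] at h
    exact huv (df_eq_zero h.symm)
  · exact (SimpleGraph.Connected.map (SimpleGraph.induceUnivIso (Gn n)).symm.toHom
      ((SimpleGraph.induceUnivIso (Gn n)).symm.toEquiv.surjective) Gn_connected)

lemma cdimAt_set_nonempty (v : Vn n) :
    {k | ∃ S : Set (Vn n), IsConnResolving (Gn n) S ∧ v ∈ S ∧ S.ncard = k}.Nonempty :=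
  ⟨(Set.univ : Set (Vn n)).ncard, Set.univ, univ_connResolving, trivial, rfl⟩

lemma cdimAt_ge_three (v : Vn n) : 3 ≤ cdimAt (Gn n) v := by
  rw [cdimAt]
  refine le_csInf (cdimAt_set_nonempty v) ?_
  rintro k ⟨S, hS, _, rfl⟩
  exact lb_three hS

lemma cdimAt_far {i : Fin (n + 4)} (h2 : 2 ≤ i.val) :
    cdimAt (Gn n) (Sum.inl i) = i.val + 1 := by
  rw [cdimAt]
  refine le_antisymm (Nat.sInf_le ⟨Aset n i.val, Aset_connResolving h2,
    Aset_mem le_rfl, Aset_ncard (by omega)⟩) ?_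
  refine le_csInf (cdimAt_set_nonempty _) ?_
  rintro k ⟨S, hS, hv, rfl⟩
  exact lb_far hS hv h2

lemma cdimAt_le_max (v : Vn n) : cdimAt (Gn n) v ≤ n + 4 := by
  rw [cdimAt]
  rcases v with i | u
  · exact Nat.sInf_le ⟨Aset n (n + 3), Aset_connResolving (by omega),
      Aset_mem (by omega), Aset_ncard le_rfl⟩
  · cases u
    refine le_trans (Nat.sInf_le ⟨Bset n, Bset_connResolving, ?_, rfl⟩) ?_
    · simp [Bset, vy]
    · rw [Bset_ncard]; omega

lemma rrad_eq : rrad (Gn n) = 3 := by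
  rw [rrad]
  have h3 : (3 : ℕ) ∈ {k | ∃ v : Vn n, cdimAt (Gn n) v = k} :=
    ⟨Sum.inl ⟨2, by omega⟩, by rw [cdimAt_far (by simp)]⟩
  refine le_antisymm (Nat.sInf_le h3) (le_csInf ⟨3, h3⟩ ?_)
  rintro k ⟨v, rfl⟩
  exact cdimAt_ge_three v

lemma rdiam_eq : rdiam (Gn n) = n + 4 := by
  rw [rdiam]
  have hmem : (n + 4 : ℕ) ∈ {k | ∃ v : Vn n, cdimAt (Gn n) v = k} :=
    ⟨Sum.inl ⟨n + 3, by omega⟩, by rw [cdimAt_far (by simp)]⟩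
  have hbdd : ∀ k ∈ {k | ∃ v : Vn n, cdimAt (Gn n) v = k}, k ≤ n + 4 := by
    rintro k ⟨v, rfl⟩
    exact cdimAt_le_max v
  exact le_antisymm (csSup_le ⟨n + 4, hmem⟩ hbdd) (le_csSup ⟨n + 4, hbdd⟩ hmem)

end Stmt7

/-- For every positive integer `b`, there is a finite simple connected
graph `G` with `rdiam(G) - rrad(G) = b`. -/
theorem stmt_7 (b : ℕ) (hb : 0 < b) :
    ∃ (V : Type) (_ : Fintype V) (G : SimpleGraph V), G.Connected ∧
      rdiam G = rrad G + b := by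
  obtain ⟨n, rfl⟩ : ∃ n : ℕ, b = n + 1 := ⟨b - 1, by omega⟩
  exact ⟨Stmt7.Vn n, inferInstance, Stmt7.Gn n, Stmt7.Gn_connected,
    by rw [Stmt7.rdiam_eq, Stmt7.rrad_eq]; omega⟩
end

section
/- Let G be a finite simple connected graph of order n ≥ 2 and let v be a vertex of G. Then cdim_G(v) = 1 if and only if G is isomorphic to the path P_n on n vertices and v is an end vertex (a vertex of degree one) of G. -/
open SimpleGraph

variable {V : Type*}

section helpers
variable {W : Type*}

lemma walk_len_ge {G : SimpleGraph V} (f : V → ℕ)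
    (hf : ∀ x y, G.Adj x y → Nat.dist (f x) (f y) ≤ 1) :
    ∀ {x y : V} (w : G.Walk x y), Nat.dist (f x) (f y) ≤ w.length := by
  intro x y w
  induction w with
  | nil => simp [Nat.dist_self]
  | cons h p ih =>
    calc Nat.dist (f _) (f _) ≤ Nat.dist (f _) (f _) + Nat.dist (f _) (f _) :=
          Nat.dist.triangle_inequality _ _ _
      _ ≤ 1 + p.length := Nat.add_le_add (hf _ _ h) ih
      _ = (SimpleGraph.Walk.cons h p).length := by simp [Nat.add_comm]

lemma nat_dist_le_dist {G : SimpleGraph V} (f : V → ℕ)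
    (hf : ∀ x y, G.Adj x y → Nat.dist (f x) (f y) ≤ 1) {x y : V} (h : G.Reachable x y) :
    Nat.dist (f x) (f y) ≤ G.dist x y := by
  obtain ⟨w, hw⟩ := h.exists_walk_length_eq_dist
  exact hw ▸ walk_len_ge f hf w

lemma pathGraph_walk (n : ℕ) : ∀ (k : ℕ) (i j : Fin n), i.val + k = j.val →
    ∃ w : (pathGraph n).Walk i j, w.length = k := by
  intro k
  induction k with
  | zero =>
    intro i j h
    have hij : i = j := Fin.ext (by omega)
    subst hij
    exact ⟨SimpleGraph.Walk.nil, rfl⟩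
  | succ k ih =>
    intro i j h
    have hi1 : i.val + 1 < n := by omega
    obtain ⟨w, hw⟩ := ih ⟨i.val + 1, hi1⟩ j (by simp; omega)
    exact ⟨SimpleGraph.Walk.cons (pathGraph_adj.mpr (Or.inl rfl)) w, by simp [hw]⟩

lemma pathGraph_dist {n : ℕ} (i j : Fin n) :
    (pathGraph n).dist i j = Nat.dist i.val j.val := by
  have hadj : ∀ x y : Fin n, (pathGraph n).Adj x y → Nat.dist x.val y.val ≤ 1 := by
    intro x y h
    rcases pathGraph_adj.mp h with h | h <;> simp [Nat.dist] <;> omega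
  have hub : (pathGraph n).dist i j ≤ Nat.dist i.val j.val := by
    rcases le_total i.val j.val with h | h
    · obtain ⟨w, hw⟩ := pathGraph_walk n (j.val - i.val) i j (by omega)
      calc (pathGraph n).dist i j ≤ w.length := SimpleGraph.dist_le w
        _ = Nat.dist i.val j.val := by rw [hw]; simp [Nat.dist]; omega
    · obtain ⟨w, hw⟩ := pathGraph_walk n (i.val - j.val) j i (by omega)
      calc (pathGraph n).dist i j ≤ w.reverse.length := SimpleGraph.dist_le _
        _ = Nat.dist i.val j.val := by
            rw [SimpleGraph.Walk.length_reverse, hw]; simp [Nat.dist]; omega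
  refine le_antisymm hub ?_
  rcases le_or_gt (Nat.dist i.val j.val) 0 with h | h
  · omega
  · have hreach : (pathGraph n).Reachable i j := by
      rcases le_total i.val j.val with h' | h'
      · obtain ⟨w, _⟩ := pathGraph_walk n (j.val - i.val) i j (by omega)
        exact ⟨w⟩
      · obtain ⟨w, _⟩ := pathGraph_walk n (i.val - j.val) j i (by omega)
        exact ⟨w.reverse⟩
    exact nat_dist_le_dist Fin.val hadj hreach

lemma iso_dist_le {G : SimpleGraph V} {G' : SimpleGraph W} (e : G ≃g G') {u v : V}
    (h : G.Reachable u v) : G'.dist (e u) (e v) ≤ G.dist u v := by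
  obtain ⟨w, hw⟩ := h.exists_walk_length_eq_dist
  calc G'.dist (e u) (e v) ≤ (w.map e.toHom).length := SimpleGraph.dist_le _
    _ = G.dist u v := by rw [SimpleGraph.Walk.length_map, hw]

lemma iso_dist_eq {G : SimpleGraph V} {G' : SimpleGraph W} (e : G ≃g G') {u v : V}
    (h : G.Reachable u v) : G'.dist (e u) (e v) = G.dist u v := by
  refine le_antisymm (iso_dist_le e h) ?_
  have h' : G'.Reachable (e u) (e v) := ⟨(h.exists_walk_length_eq_dist.choose.map e.toHom)⟩
  have := iso_dist_le e.symm h'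
  simpa using this

end helpers

/-- For a finite simple connected graph `G` of order `n ≥ 2` and a
vertex `v`, `cdim_G(v) = 1` iff `G ≅ P_n` and `v` is an end vertex (degree one). -/
theorem stmt_8 {V : Type*} [Fintype V] (G : SimpleGraph V) (hG : G.Connected)
    (hn : 2 ≤ Fintype.card V) (v : V) :
    cdimAt G v = 1 ↔
      Nonempty (G ≃g pathGraph (Fintype.card V)) ∧ (G.neighborSet v).ncard = 1 := by
  set n := Fintype.card V with hncard
  set T := {k | ∃ S : Set V, IsConnResolving G S ∧ v ∈ S ∧ S.ncard = k} with hT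
  constructor
  · intro h
    have hTne : T.Nonempty := by
      by_contra hc
      rw [Set.not_nonempty_iff_eq_empty] at hc
      rw [cdimAt, ← hT, hc, Nat.sInf_empty] at h
      exact one_ne_zero h.symm
    have hmem : (1 : ℕ) ∈ T := by
      have := Nat.sInf_mem hTne
      rwa [show sInf T = 1 from h] at this
    obtain ⟨S, ⟨hres, _⟩, hvS, hS1⟩ := hmem
    obtain ⟨a, ha⟩ := Set.ncard_eq_one.mp hS1
    have hSv : S = {v} := by rw [ha] at hvS ⊢; simp at hvS; rw [hvS]
    have hinj : ∀ x y : V, G.dist v x = G.dist v y → x = y := by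
      intro x y hxy
      by_contra hne
      obtain ⟨z, hz, hzd⟩ := hres x y hne
      rw [hSv] at hz
      simp at hz
      exact hzd (hz ▸ hxy)
    classical
    have hlt : ∀ x, G.dist v x < n := by
      intro x
      obtain ⟨w, hw⟩ := (hG v x).exists_walk_length_eq_dist
      calc G.dist v x ≤ w.bypass.length := SimpleGraph.dist_le _
        _ < n := w.bypass_isPath.length_lt
    let f0 : V → Fin n := fun x => ⟨G.dist v x, hlt x⟩
    have hf0 : Function.Injective f0 := by
      intro x y hxy
      exact hinj x y (by simpa [f0, Fin.ext_iff] using hxy)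
    have hbij : Function.Bijective f0 :=
      (Fintype.bijective_iff_injective_and_card f0).mpr ⟨hf0, by simp [hncard]⟩
    have hadj1 : ∀ x y : V, G.Adj x y →
        (G.dist v x + 1 = G.dist v y ∨ G.dist v y + 1 = G.dist v x) := by
      intro x y hxy
      have h1 : G.dist x y = 1 := SimpleGraph.dist_eq_one_iff_adj.mpr hxy
      have h2 : G.dist v y ≤ G.dist v x + G.dist x y := hG.dist_triangle
      have h3 : G.dist v x ≤ G.dist v y + G.dist y x := hG.dist_triangle
      rw [SimpleGraph.dist_comm (u := y)] at h3
      have h4 : G.dist v x ≠ G.dist v y := fun hc => hxy.ne (hinj x y hc)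
      omega
    have hadj2 : ∀ x y : V, G.dist v x + 1 = G.dist v y → G.Adj x y := by
      intro x y hxy
      have hyv : y ≠ v := by
        intro hc
        subst hc
        rw [SimpleGraph.dist_self] at hxy
        omega
      obtain ⟨w, hw⟩ := (hG y v).exists_walk_length_eq_dist
      cases w with
      | nil => exact absurd rfl hyv
      | @cons _ u _ ha p =>
        have hpl : p.length + 1 = G.dist v y := by
          rw [SimpleGraph.dist_comm (u := v)]
          simpa using hw
        have h5 : G.dist v u ≤ p.length := by
          have := SimpleGraph.dist_le p.reverse
          rwa [SimpleGraph.Walk.length_reverse] at this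
        have h6 : G.dist v y ≤ G.dist v u + 1 := by
          have := hG.dist_triangle (u := v) (v := u) (w := y)
          rwa [SimpleGraph.dist_eq_one_iff_adj.mpr ha.symm] at this
        have h7 : G.dist v u = G.dist v x := by omega
        have := hinj u x h7
        subst this
        exact ha.symm
    refine ⟨⟨⟨Equiv.ofBijective f0 hbij, ?_⟩⟩, ?_⟩
    · intro a b
      simp only [Equiv.ofBijective_apply, pathGraph_adj]
      constructor
      · intro hab
        rcases hab with hab | hab
        · exact hadj2 a b hab
        · exact (hadj2 b a hab).symm
      · intro hab
        exact hadj1 a b hab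
    · have h1n : 1 < n := hn
      obtain ⟨x0, hx0⟩ := hbij.2 ⟨1, h1n⟩
      have hx0d : G.dist v x0 = 1 := by
        have := congrArg Fin.val hx0
        simpa [f0] using this
      have hset : G.neighborSet v = {x0} := by
        ext u
        simp only [SimpleGraph.mem_neighborSet, Set.mem_singleton_iff]
        constructor
        · intro hu
          have : G.dist v u = 1 := SimpleGraph.dist_eq_one_iff_adj.mpr hu
          exact hinj u x0 (by rw [this, hx0d])
        · intro hu
          subst hu
          exact SimpleGraph.dist_eq_one_iff_adj.mp hx0d
      rw [hset, Set.ncard_singleton]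
  · rintro ⟨⟨e⟩, hdeg⟩
    have hev : (e v).val = 0 ∨ (e v).val = n - 1 := by
      by_contra hc
      push_neg at hc
      have h1 : 1 ≤ (e v).val := by omega
      have h2 : (e v).val + 1 < n := by have := (e v).isLt; omega
      let a : Fin n := ⟨(e v).val - 1, by omega⟩
      let b : Fin n := ⟨(e v).val + 1, h2⟩
      have hab : e.symm a ≠ e.symm b := by
        intro hc'
        have := e.symm.injective hc'
        simp only [a, b, Fin.mk.injEq] at this
        omega
      have hadja : G.Adj v (e.symm a) := by
        have : G.Adj (e.symm (e v)) (e.symm a) :=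
          e.symm.map_rel_iff.mpr (pathGraph_adj.mpr (Or.inr (by simp [a]; omega)))
        simpa using this
      have hadjb : G.Adj v (e.symm b) := by
        have : G.Adj (e.symm (e v)) (e.symm b) :=
          e.symm.map_rel_iff.mpr (pathGraph_adj.mpr (Or.inl (by simp [b])))
        simpa using this
      have hsub : {e.symm a, e.symm b} ⊆ G.neighborSet v := by
        intro x hx
        rcases hx with hx | hx
        · exact hx ▸ hadja
        · exact hx ▸ hadjb
      have : 2 ≤ (G.neighborSet v).ncard := by
        calc 2 = ({e.symm a, e.symm b} : Set V).ncard := (Set.ncard_pair hab).symm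
          _ ≤ (G.neighborSet v).ncard := Set.ncard_le_ncard hsub (Set.toFinite _)
      omega
    have hdist : ∀ x, G.dist v x = Nat.dist (e v).val (e x).val := by
      intro x
      rw [← iso_dist_eq e (hG v x), pathGraph_dist]
    have hinj : ∀ x y : V, G.dist v x = G.dist v y → x = y := by
      intro x y hxy
      rw [hdist x, hdist y] at hxy
      apply e.injective
      apply Fin.ext
      have hx := (e x).isLt
      have hy := (e y).isLt
      simp only [Nat.dist] at hxy
      rcases hev with h | h <;> omega
    have hres : IsResolving G {v} := by
      intro x y hxy
      exact ⟨v, rfl, fun hc => hxy (hinj x y hc)⟩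
    have hconn : (G.induce ({v} : Set V)).Connected := by
      rw [SimpleGraph.connected_iff]
      refine ⟨?_, ⟨⟨v, rfl⟩⟩⟩
      intro a b
      have : a = b := Subtype.ext (by
        have ha := a.2
        have hb := b.2
        simp only [Set.mem_singleton_iff] at ha hb
        rw [ha, hb])
      rw [this]
    have h1T : (1 : ℕ) ∈ T :=
      ⟨{v}, ⟨hres, hconn⟩, rfl, Set.ncard_singleton v⟩
    have hle : cdimAt G v ≤ 1 := Nat.sInf_le h1T
    have hne0 : cdimAt G v ≠ 0 := by
      intro hc
      rw [cdimAt, ← hT] at hc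
      rcases Nat.sInf_eq_zero.mp hc with h0 | h0
      · obtain ⟨S, _, hvS, hS0⟩ := h0
        rw [Set.ncard_eq_zero (Set.toFinite S)] at hS0
        rw [hS0] at hvS
        exact hvS
      · rw [h0] at h1T
        exact h1T
    omega
end

section
/- Let G be a finite simple connected graph of order n ≥ 2. Then cdim(G) = n − 1 if and only if G is isomorphic to the complete graph K_n, or n ≥ 4 and G is isomorphic to the star K_{1,n−1}. -/
open SimpleGraph

variable {V : Type*}

/-- distance-twins -/
def Twinp (G : SimpleGraph V) (x y : V) : Prop :=
  x ≠ y ∧ ∀ z, z ≠ x → z ≠ y → G.dist z x = G.dist z y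

lemma Twinp.symm {G : SimpleGraph V} {x y : V} (h : Twinp G x y) : Twinp G y x :=
  ⟨h.1.symm, fun z hz1 hz2 => (h.2 z hz2 hz1).symm⟩

lemma twinp_adj {G : SimpleGraph V} {x y z : V} (h : Twinp G x y) (hz1 : z ≠ x) (hz2 : z ≠ y)
    (ha : G.Adj z x) : G.Adj z y := by
  have := h.2 z hz1 hz2
  rw [← dist_eq_one_iff_adj] at ha ⊢
  omega

lemma exists_adj_dist_pred {G : SimpleGraph V} (hG : G.Connected) {u v : V} (h : G.dist u v ≠ 0) :
    ∃ w, G.Adj w v ∧ G.dist u w + 1 = G.dist u v := by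
  have h' : G.dist v u ≠ 0 := by rwa [dist_comm]
  obtain ⟨p, hp⟩ := exists_walk_of_dist_ne_zero h'
  cases p with
  | nil => simp at hp h h'
  | @cons _ w _ hadj q =>
      refine ⟨w, hadj.symm, ?_⟩
      have h1 : G.dist u w ≤ q.length := by rw [SimpleGraph.dist_comm]; exact dist_le q
      have h2 : G.dist u v ≤ G.dist u w + 1 := by
        calc G.dist u v ≤ G.dist u w + G.dist w v := hG.dist_triangle
        _ ≤ G.dist u w + 1 := by
            have : G.dist w v ≤ 1 := by rw [SimpleGraph.dist_comm, ← Nat.lt_succ_iff];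
                                        have := dist_eq_one_iff_adj.mpr hadj; omega
            omega
      simp only [Walk.length_cons] at hp
      rw [SimpleGraph.dist_comm] at hp
      omega

/-- Lemma F: removing the top two vertices (as seen from `u`) keeps the graph connected. -/
lemma lemF {G : SimpleGraph V} (hG : G.Connected) {u x y : V} (hxy : x ≠ y)
    (h3 : 0 < G.dist u y) (h2 : G.dist u y ≤ G.dist u x)
    (h1 : ∀ v, v ≠ x → v ≠ y → G.dist u v ≤ G.dist u y) :
    (G.induce ({x, y}ᶜ : Set V)).Connected := by
  have hux : u ≠ x := fun h => by
    subst h; rw [SimpleGraph.dist_self] at h2; omega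
  have huy : u ≠ y := fun h => by
    subst h; rw [SimpleGraph.dist_self] at h3; omega
  have hu : u ∈ ({x, y}ᶜ : Set V) := by simp [hux, huy]
  have key : ∀ k (v : V) (hv : v ∈ ({x, y}ᶜ : Set V)), G.dist u v = k →
      (G.induce ({x, y}ᶜ : Set V)).Reachable ⟨u, hu⟩ ⟨v, hv⟩ := by
    intro k
    induction k using Nat.strong_induction_on with
    | _ k ih =>
      intro v hv hd
      rcases Nat.eq_zero_or_pos k with hk | hk
      · subst hk
        have : u = v := hG.dist_eq_zero_iff.mp hd
        subst this; rfl
      · obtain ⟨w, hadj, hw⟩ := exists_adj_dist_pred hG (by omega : G.dist u v ≠ 0)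
        have hvx : v ≠ x := by simp [Set.mem_compl_iff] at hv; tauto
        have hvy : v ≠ y := by simp [Set.mem_compl_iff] at hv; tauto
        have hwlt : G.dist u w < k := by omega
        have hwy : G.dist u w < G.dist u y := by
          have := h1 v hvx hvy; omega
        have hwmem : w ∈ ({x, y}ᶜ : Set V) := by
          simp only [Set.mem_compl_iff, Set.mem_insert_iff, Set.mem_singleton_iff]
          push_neg
          constructor
          · rintro rfl; omega
          · rintro rfl; omega
        have hr := ih _ hwlt w hwmem rfl
        have : (G.induce ({x, y}ᶜ : Set V)).Adj ⟨w, hwmem⟩ ⟨v, hv⟩ := by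
          simpa using hadj
        exact hr.trans this.reachable
  rw [connected_iff]
  refine ⟨?_, ⟨⟨u, hu⟩⟩⟩
  rintro ⟨a, ha⟩ ⟨b, hb⟩
  exact (key _ a ha rfl).symm.trans (key _ b hb rfl)

/-- Lemma J: if `x` and `y` each have a twin outside `{x,y}`, then `G - {x,y}` is connected. -/
lemma lemJ {G : SimpleGraph V} (hG : G.Connected) {x y x' y' : V} (hxy : x ≠ y)
    (htx : Twinp G x x') (hty : Twinp G y y') (hx'y : x' ≠ y) (hy'x : y' ≠ x) :
    (G.induce ({x, y}ᶜ : Set V)).Connected := by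
  classical
  set S : Set V := {x, y}ᶜ with hS
  have hx'x : x' ≠ x := htx.1.symm
  have hy'y : y' ≠ y := hty.1.symm
  let f : V → V := fun v => if v = x then x' else if v = y then y' else v
  have hfS : ∀ v, f v ∈ S := by
    intro v
    simp only [f]
    split_ifs with h1 h2 <;>
      simp only [hS, Set.mem_compl_iff, Set.mem_insert_iff, Set.mem_singleton_iff] <;>
      push_neg <;> tauto
  have hfid : ∀ v, v ∈ S → f v = v := by
    intro v hv
    simp only [hS, Set.mem_compl_iff, Set.mem_insert_iff, Set.mem_singleton_iff] at hv
    push_neg at hv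
    simp only [f, if_neg hv.1, if_neg hv.2]
  have step : ∀ a b, G.Adj a b → f a = f b ∨ G.Adj (f a) (f b) := by
    intro a b hab
    have hne := hab.ne
    by_cases ha1 : a = x
    · by_cases hb1 : b = y
      · rw [ha1, hb1] at hab ⊢
        simp only [f, if_pos rfl, if_neg hxy, if_neg hxy.symm]
        by_cases hxy' : x' = y'
        · exact Or.inl hxy'
        · right
          have h1 : G.Adj y x' := twinp_adj htx hxy.symm (Ne.symm hx'y) hab.symm
          exact twinp_adj hty hx'y hxy' h1.symm
      · have hbx : b ≠ x := by rw [ha1] at hne; exact hne.symm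
        rw [ha1] at hab ⊢
        simp only [f, if_pos rfl, if_neg hbx, if_neg hb1]
        by_cases hbx' : b = x'
        · exact Or.inl hbx'.symm
        · exact Or.inr (twinp_adj htx hbx hbx' hab.symm).symm
    · by_cases ha2 : a = y
      · by_cases hb1 : b = x
        · rw [ha2, hb1] at hab ⊢
          simp only [f, if_neg (Ne.symm hxy), if_pos rfl]
          by_cases hxy' : x' = y'
          · exact Or.inl hxy'.symm
          · right
            have h1 : G.Adj x y' := twinp_adj hty hxy (Ne.symm hy'x) hab.symm
            exact twinp_adj htx hy'x (fun h => hxy' h.symm) h1.symm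
        · have hby : b ≠ y := by rw [ha2] at hne; exact hne.symm
          rw [ha2] at hab ⊢
          simp only [f, if_neg (Ne.symm hxy), if_pos rfl, if_neg hb1, if_neg hby]
          by_cases hby' : b = y'
          · exact Or.inl hby'.symm
          · exact Or.inr (twinp_adj hty hby hby' hab.symm).symm
      · by_cases hb1 : b = x
        · rw [hb1] at hab ⊢
          simp only [f, if_neg ha1, if_neg ha2, if_pos rfl]
          by_cases hax' : a = x'
          · exact Or.inl hax'
          · exact Or.inr (twinp_adj htx ha1 hax' hab)
        · by_cases hb2 : b = y
          · rw [hb2] at hab ⊢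
            simp only [f, if_neg ha1, if_neg ha2, if_neg hxy.symm, if_pos rfl]
            by_cases hay' : a = y'
            · exact Or.inl hay'
            · exact Or.inr (twinp_adj hty ha2 hay' hab)
          · simp only [f, if_neg ha1, if_neg ha2, if_neg hb1, if_neg hb2]
            exact Or.inr hab
  have key : ∀ (a b : V) (_ : G.Walk a b),
      (G.induce S).Reachable ⟨f a, hfS a⟩ ⟨f b, hfS b⟩ := by
    intro a b p
    induction p with
    | nil => rfl
    | @cons a c b hadj p ih =>
        rcases step a c hadj with heq | hadj'
        · have : (⟨f a, hfS a⟩ : S) = ⟨f c, hfS c⟩ := Subtype.ext heq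
          rw [this]; exact ih
        · have : (G.induce S).Adj ⟨f a, hfS a⟩ ⟨f c, hfS c⟩ := by simpa using hadj'
          exact this.reachable.trans ih
  rw [connected_iff]
  constructor
  · rintro ⟨a, ha⟩ ⟨b, hb⟩
    have := (hG a b).elim (fun p => key a b p)
    have e1 : (⟨f a, hfS a⟩ : S) = ⟨a, ha⟩ := Subtype.ext (hfid a ha)
    have e2 : (⟨f b, hfS b⟩ : S) = ⟨b, hb⟩ := Subtype.ext (hfid b hb)
    rwa [e1, e2] at this
  · exact ⟨⟨x', by simp only [hS, Set.mem_compl_iff, Set.mem_insert_iff,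
      Set.mem_singleton_iff]; push_neg; exact ⟨hx'x, hx'y⟩⟩⟩

section Card
variable [Fintype V]

lemma ncard_compl_singleton (x : V) : ({x}ᶜ : Set V).ncard = Fintype.card V - 1 := by
  have h := Set.ncard_add_ncard_compl ({x} : Set V)
  rw [Set.ncard_singleton, Nat.card_eq_fintype_card] at h
  omega

lemma ncard_compl_pair {x y : V} (hxy : x ≠ y) :
    ({x, y}ᶜ : Set V).ncard = Fintype.card V - 2 := by
  have h := Set.ncard_add_ncard_compl ({x, y} : Set V)
  rw [Set.ncard_pair hxy, Nat.card_eq_fintype_card] at h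
  omega
end Card

lemma isResolving_compl_singleton {G : SimpleGraph V} (hG : G.Connected) (x : V) :
    IsResolving G ({x}ᶜ : Set V) := by
  intro a b hab
  by_cases ha : a = x
  · refine ⟨b, by simp; exact fun h => hab (by rw [ha, h]), ?_⟩
    · have := hG.pos_dist_of_ne (Ne.symm hab)
      rw [SimpleGraph.dist_self]
      omega
  · refine ⟨a, by simp [ha], ?_⟩
    have := hG.pos_dist_of_ne hab
    rw [SimpleGraph.dist_self]
    omega

lemma isResolving_compl_pair {G : SimpleGraph V} (hG : G.Connected) {x y z : V}
    (hzx : z ≠ x) (hzy : z ≠ y) (hd : G.dist z x ≠ G.dist z y) :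
    IsResolving G ({x, y}ᶜ : Set V) := by
  intro a b hab
  by_cases ha : a ∈ ({x, y}ᶜ : Set V)
  · refine ⟨a, ha, ?_⟩
    have := hG.pos_dist_of_ne hab
    rw [SimpleGraph.dist_self]
    omega
  · by_cases hb : b ∈ ({x, y}ᶜ : Set V)
    · refine ⟨b, hb, ?_⟩
      have := hG.pos_dist_of_ne (Ne.symm hab)
      rw [SimpleGraph.dist_self]
      omega
    · simp only [Set.mem_compl_iff, Set.mem_insert_iff, Set.mem_singleton_iff, not_not] at ha hb
      have hz : z ∈ ({x, y}ᶜ : Set V) := by simp [hzx, hzy]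
      rcases ha with rfl | rfl <;> rcases hb with rfl | rfl
      · exact absurd rfl hab
      · exact ⟨z, hz, hd⟩
      · exact ⟨z, hz, hd.symm⟩
      · exact absurd rfl hab

lemma connected_induce_hub {G : SimpleGraph V} {S : Set V} {c : V} (hc : c ∈ S)
    (h : ∀ v ∈ S, v ≠ c → G.Adj c v) : (G.induce S).Connected := by
  rw [connected_iff]
  refine ⟨?_, ⟨⟨c, hc⟩⟩⟩
  have key : ∀ (a : V) (ha : a ∈ S), (G.induce S).Reachable ⟨c, hc⟩ ⟨a, ha⟩ := by
    intro a ha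
    by_cases hac : a = c
    · subst hac; rfl
    · have : (G.induce S).Adj ⟨c, hc⟩ ⟨a, ha⟩ := by simpa using h a ha hac
      exact this.reachable
  rintro ⟨a, ha⟩ ⟨b, hb⟩
  exact (key a ha).symm.trans (key b hb)

lemma cdim_eq_of_mem_of_lb {G : SimpleGraph V} {m : ℕ}
    (hmem : ∃ S : Set V, IsConnResolving G S ∧ S.ncard = m)
    (hlb : ∀ S : Set V, IsConnResolving G S → m ≤ S.ncard) : cdim G = m := by
  refine le_antisymm (Nat.sInf_le hmem) (le_csInf ⟨m, hmem⟩ ?_)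
  rintro k ⟨S, h1, rfl⟩
  exact hlb S h1

section Complete
variable [Fintype V] {G : SimpleGraph V}

lemma cdim_complete (hG : G.Connected) (hn : 2 ≤ Fintype.card V)
    (hcomp : ∀ x y : V, x ≠ y → G.Adj x y) : cdim G = Fintype.card V - 1 := by
  have hne : Nonempty V := Fintype.card_pos_iff.mp (by omega)
  obtain ⟨x₀⟩ := hne
  obtain ⟨y₀, hy₀⟩ := Fintype.exists_ne_of_one_lt_card (by omega) x₀
  apply cdim_eq_of_mem_of_lb
  · refine ⟨({x₀}ᶜ : Set V), ⟨isResolving_compl_singleton hG x₀, ?_⟩,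
      ncard_compl_singleton x₀⟩
    exact connected_induce_hub (c := y₀) (by simp [hy₀]) fun v hv hvy =>
      hcomp y₀ v (Ne.symm hvy)
  · intro S ⟨hres, _⟩
    by_contra hlt
    push_neg at hlt
    have hcompl : 1 < (Sᶜ : Set V).ncard := by
      have h := Set.ncard_add_ncard_compl S
      rw [Nat.card_eq_fintype_card] at h
      omega
    obtain ⟨a, b, ha, hb, hab⟩ := (Set.one_lt_ncard_iff (Set.toFinite _)).mp hcompl
    obtain ⟨z, hz, hd⟩ := hres a b hab
    have hza : z ≠ a := fun h => ha (h ▸ hz)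
    have hzb : z ≠ b := fun h => hb (h ▸ hz)
    rw [dist_eq_one_iff_adj.mpr (hcomp z a hza), dist_eq_one_iff_adj.mpr (hcomp z b hzb)] at hd
    exact hd rfl
end Complete

section Star
variable [Fintype V] {G : SimpleGraph V} {c : V}

lemma star_dist_two (hG : G.Connected) (hstar : ∀ x y, G.Adj x y ↔ (x ≠ y ∧ (x = c ∨ y = c)))
    {a b : V} (hac : a ≠ c) (hbc : b ≠ c) (hab : a ≠ b) : G.dist a b = 2 := by
  have hnadj : ¬ G.Adj a b := by rw [hstar]; tauto
  have h1 : G.dist a b ≠ 1 := fun h => hnadj (dist_eq_one_iff_adj.mp h)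
  have h0 : 0 < G.dist a b := hG.pos_dist_of_ne hab
  have h2 : G.dist a b ≤ 2 := by
    have := dist_le (Walk.cons ((hstar a c).mpr ⟨hac, Or.inr rfl⟩)
        (Walk.cons ((hstar c b).mpr ⟨Ne.symm hbc, Or.inl rfl⟩) Walk.nil))
    simpa using this
  omega

lemma cdim_star (hG : G.Connected) (hn : 4 ≤ Fintype.card V)
    (hstar : ∀ x y, G.Adj x y ↔ (x ≠ y ∧ (x = c ∨ y = c))) :
    cdim G = Fintype.card V - 1 := by
  obtain ⟨ℓ, hℓ⟩ := Fintype.exists_ne_of_one_lt_card (by omega) c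
  apply cdim_eq_of_mem_of_lb
  · refine ⟨({ℓ}ᶜ : Set V), ⟨isResolving_compl_singleton hG ℓ, ?_⟩,
      ncard_compl_singleton ℓ⟩
    exact connected_induce_hub (c := c) (by simp [Ne.symm hℓ]) fun v hv hvc =>
      (hstar c v).mpr ⟨Ne.symm hvc, Or.inl rfl⟩
  · intro S ⟨hres, hconn⟩
    by_contra hlt
    push_neg at hlt
    have hcard := Set.ncard_add_ncard_compl S
    rw [Nat.card_eq_fintype_card] at hcard
    have hcompl : 1 < (Sᶜ : Set V).ncard := by omega
    -- at most one non-center vertex is missing from S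
    have claim1 : ∀ a ∈ (Sᶜ : Set V), ∀ b ∈ (Sᶜ : Set V), a ≠ b → a = c ∨ b = c := by
      intro a ha b hb hab
      by_contra hcc
      push_neg at hcc
      obtain ⟨z, hz, hd⟩ := hres a b hab
      have hza : z ≠ a := fun h => ha (h ▸ hz)
      have hzb : z ≠ b := fun h => hb (h ▸ hz)
      by_cases hzc : z = c
      · subst hzc
        rw [dist_eq_one_iff_adj.mpr ((hstar z a).mpr ⟨hza, Or.inl rfl⟩),
          dist_eq_one_iff_adj.mpr ((hstar z b).mpr ⟨hzb, Or.inl rfl⟩)] at hd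
        exact hd rfl
      · rw [star_dist_two hG hstar hzc hcc.1 hza,
          star_dist_two hG hstar hzc hcc.2 hzb] at hd
        exact hd rfl
    -- the center is missing from S
    have hcS : c ∉ S := by
      intro hcS
      obtain ⟨a, b, ha, hb, hab⟩ := (Set.one_lt_ncard_iff (Set.toFinite _)).mp hcompl
      rcases claim1 a ha b hb hab with rfl | rfl
      · exact ha hcS
      · exact hb hcS
    -- Sᶜ has at most 2 elements
    have hsub : (Sᶜ : Set V) ⊆ insert c ((Sᶜ : Set V) \ {c}) := by
      intro v hv
      by_cases hvc : v = c <;> simp [hvc, hv]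
    have hss : ((Sᶜ : Set V) \ {c}).ncard ≤ 1 := by
      rw [Set.ncard_le_one_iff_eq]
      by_cases hne : ((Sᶜ : Set V) \ {c}) = ∅
      · exact Or.inl hne
      · obtain ⟨a, ha⟩ := Set.nonempty_iff_ne_empty.mpr hne
        right
        refine ⟨a, Set.eq_singleton_iff_unique_mem.mpr ⟨ha, ?_⟩⟩
        intro b hb
        by_contra hba
        rcases claim1 b hb.1 a ha.1 hba with rfl | rfl
        · exact hb.2 rfl
        · exact ha.2 rfl
    have hSc2 : (Sᶜ : Set V).ncard ≤ 2 := by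
      calc (Sᶜ : Set V).ncard ≤ (insert c ((Sᶜ : Set V) \ {c})).ncard :=
            Set.ncard_le_ncard hsub (Set.toFinite _)
      _ ≤ ((Sᶜ : Set V) \ {c}).ncard + 1 := Set.ncard_insert_le _ _
      _ ≤ 2 := by omega
    -- so S has at least two elements, all leaves, pairwise non-adjacent: contradiction
    have hS2 : 1 < S.ncard := by omega
    obtain ⟨a, b, ha, hb, hab⟩ := (Set.one_lt_ncard_iff (Set.toFinite _)).mp hS2
    have hr : (G.induce S).Reachable ⟨a, ha⟩ ⟨b, hb⟩ := hconn ⟨a, ha⟩ ⟨b, hb⟩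
    obtain ⟨p⟩ := hr
    cases p with
    | nil => exact hab rfl
    | @cons _ w _ hadj q =>
        have hGadj : G.Adj a ↑w := by simpa using hadj
        have haS : a ≠ c := fun h => hcS (h ▸ ha)
        have hwS : (↑w : V) ≠ c := fun h => hcS (h ▸ w.2)
        rw [hstar] at hGadj
        tauto

section Iso
variable [Fintype V] {G : SimpleGraph V}

lemma complete_of_iso {W : Type*} (e : G ≃g completeGraph W) :
    ∀ x y : V, x ≠ y → G.Adj x y := by
  intro x y hxy
  have : (completeGraph W).Adj (e x) (e y) := by
    simp only [completeGraph, top_adj]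
    exact fun h => hxy (e.injective h)
  exact e.map_adj_iff.mp this

lemma iso_complete_of (hcomp : ∀ x y : V, x ≠ y → G.Adj x y) :
    Nonempty (G ≃g completeGraph (Fin (Fintype.card V))) := by
  refine ⟨⟨Fintype.equivFin V, ?_⟩⟩
  intro a b
  simp only [completeGraph, top_adj, ne_eq, EmbeddingLike.apply_eq_iff_eq]
  constructor
  · exact fun h => hcomp a b h
  · exact fun h => h.ne
end Iso

section IsoStar
variable [Fintype V] {G : SimpleGraph V}

lemma star_of_iso (e : G ≃g completeBipartiteGraph (Fin 1) (Fin (Fintype.card V - 1))) :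
    ∃ c, ∀ x y, G.Adj x y ↔ (x ≠ y ∧ (x = c ∨ y = c)) := by
  refine ⟨e.symm (Sum.inl 0), ?_⟩
  intro x y
  have hx : x = e.symm (Sum.inl 0) ↔ e x = Sum.inl 0 := by
    constructor
    · intro h; rw [h]; simp
    · intro h; rw [← h]; simp
  have hy : y = e.symm (Sum.inl 0) ↔ e y = Sum.inl 0 := by
    constructor
    · intro h; rw [h]; simp
    · intro h; rw [← h]; simp
  rw [← e.map_adj_iff]
  have hne : x ≠ y ↔ e x ≠ e y := by
    constructor
    · exact fun h hh => h (e.injective hh)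
    · exact fun h hh => h (by rw [hh])
  rw [hx, hy, hne]
  cases hex : e x with
  | inl a =>
      have ha : a = 0 := Subsingleton.elim a 0
      cases hey : e y with
      | inl b =>
          have hb : b = 0 := Subsingleton.elim b 0
          subst ha hb
          simp [completeBipartiteGraph]
      | inr b => subst ha; simp [completeBipartiteGraph]
  | inr a =>
      cases hey : e y with
      | inl b =>
          have hb : b = 0 := Subsingleton.elim b 0
          subst hb
          simp [completeBipartiteGraph]
      | inr b => simp [completeBipartiteGraph]

lemma iso_of_star {c : V} (hstar : ∀ x y, G.Adj x y ↔ (x ≠ y ∧ (x = c ∨ y = c))) :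
    Nonempty (G ≃g completeBipartiteGraph (Fin 1) (Fin (Fintype.card V - 1))) := by
  classical
  have hc1 : Fintype.card {v : V // v = c} = 1 := Fintype.card_subtype_eq c
  have hc2 : Fintype.card {v : V // ¬ v = c} = Fintype.card V - 1 := by
    rw [Fintype.card_subtype_compl, Fintype.card_subtype_eq]
  let ec : {v : V // v = c} ≃ Fin 1 := Fintype.equivFinOfCardEq hc1
  let el : {v : V // ¬ v = c} ≃ Fin (Fintype.card V - 1) := Fintype.equivFinOfCardEq hc2
  let E : V ≃ (Fin 1 ⊕ Fin (Fintype.card V - 1)) :=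
    (Equiv.sumCompl (· = c)).symm.trans (Equiv.sumCongr ec el)
  have hEpos : ∀ (v : V) (h : v = c), E v = Sum.inl (ec ⟨v, h⟩) := by
    intro v h
    simp only [E, Equiv.trans_apply]
    have hv : (Equiv.sumCompl (· = c)).symm v = Sum.inl ⟨v, h⟩ := by
      rw [Equiv.symm_apply_eq]; simp
    rw [hv]; rfl
  have hEneg : ∀ (v : V) (h : ¬ v = c), E v = Sum.inr (el ⟨v, h⟩) := by
    intro v h
    simp only [E, Equiv.trans_apply]
    have hv : (Equiv.sumCompl (· = c)).symm v = Sum.inr ⟨v, h⟩ := by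
      rw [Equiv.symm_apply_eq]; simp
    rw [hv]; rfl
  refine ⟨⟨E, ?_⟩⟩
  intro a b
  by_cases hac : a = c <;> by_cases hbc : b = c
  · rw [hEpos a hac, hEpos b hbc]
    subst hac hbc
    simp [completeBipartiteGraph]
  · rw [hEpos a hac, hEneg b hbc, hstar]
    subst hac
    simp [completeBipartiteGraph, Ne.symm hbc]
  · rw [hEneg a hac, hEpos b hbc, hstar]
    subst hbc
    simp [completeBipartiteGraph, hac]
  · rw [hEneg a hac, hEneg b hbc, hstar]
    simp [completeBipartiteGraph, hac, hbc]
end IsoStar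

section Main
variable [Fintype V] {G : SimpleGraph V}

/-- A graph in which every removable pair is a distance-twin pair and which is not complete
must be a star on at least 4 vertices. -/
theorem structure_of_bad (hG : G.Connected)
    (hbad : ∀ x y : V, x ≠ y → (G.induce ({x, y}ᶜ : Set V)).Connected →
      ∀ z, z ≠ x → z ≠ y → G.dist z x = G.dist z y)
    (hnc : ¬ ∀ x y : V, x ≠ y → G.Adj x y) :
    4 ≤ Fintype.card V ∧ ∃ c, ∀ x y, G.Adj x y ↔ (x ≠ y ∧ (x = c ∨ y = c)) := by
  classical
  push_neg at hnc
  obtain ⟨a, c0, hac_ne, hac_nadj⟩ := hnc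
  -- a middle vertex b between a and c0
  have hd_ac : 2 ≤ G.dist a c0 := by
    have h0 := hG.pos_dist_of_ne hac_ne
    have h1 : G.dist a c0 ≠ 1 := fun h => hac_nadj (dist_eq_one_iff_adj.mp h)
    omega
  obtain ⟨b, hb_adj_c0, hb_dist⟩ := exists_adj_dist_pred hG (by omega : G.dist a c0 ≠ 0)
  have hab_pos : 0 < G.dist a b := by omega
  have hab_ne : a ≠ b := fun h => by rw [← h, SimpleGraph.dist_self] at hab_pos; omega
  have hbc_ne : b ≠ c0 := hb_adj_c0.ne
  -- card ≥ 3
  have h3 : 3 ≤ Fintype.card V := by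
    have hsub := Finset.card_le_univ ({a, b, c0} : Finset V)
    have hcard : ({a, b, c0} : Finset V).card = 3 := by
      rw [Finset.card_insert_of_notMem (by simp [hab_ne, hac_ne]),
        Finset.card_insert_of_notMem (by simp [hbc_ne]), Finset.card_singleton]
    omega
  have hthird : ∀ u x : V, ∃ w, w ≠ u ∧ w ≠ x := by
    intro u x
    by_contra h
    push_neg at h
    have hsub : (Finset.univ : Finset V) ⊆ {u, x} := by
      intro w _
      simp only [Finset.mem_insert, Finset.mem_singleton]
      by_cases hwu : w = u
      · exact Or.inl hwu
      · exact Or.inr (h w hwu)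
    have := Finset.card_le_card hsub
    have h2 : ({u, x} : Finset V).card ≤ 2 := Finset.card_insert_le _ _ |>.trans (by simp)
    rw [Finset.card_univ] at this
    omega
  -- the sphere lemma
  have S1 : ∀ u x : V, (∀ v, G.dist u v ≤ G.dist u x) → 0 < G.dist u x →
      ∃ x', Twinp G x x' ∧ G.dist u x' = G.dist u x := by
    intro u x hmax hpos
    obtain ⟨w, hwu, hwx⟩ := hthird u x
    obtain ⟨y, hy_mem, hy_max⟩ := Finset.exists_max_image
      (Finset.univ.filter (· ≠ x)) (fun v => G.dist u v)
      ⟨w, by simp [hwx]⟩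
    have hyx : y ≠ x := by simpa using hy_mem
    have hy_pos : 0 < G.dist u y := by
      have h1 : G.dist u w ≤ G.dist u y := hy_max w (by simp [hwx])
      have h2 : 0 < G.dist u w := hG.pos_dist_of_ne (fun h => hwu h.symm)
      omega
    have h1 : ∀ v, v ≠ x → v ≠ y → G.dist u v ≤ G.dist u y :=
      fun v hvx _ => hy_max v (by simp [hvx])
    have hconn' := lemF hG (Ne.symm hyx) hy_pos (hmax y) h1
    have htw : Twinp G x y := ⟨Ne.symm hyx, hbad x y (Ne.symm hyx) hconn'⟩
    have hux : u ≠ x := fun h => by rw [← h, SimpleGraph.dist_self] at hpos; omega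
    have huy : u ≠ y := fun h => by rw [← h, SimpleGraph.dist_self] at hy_pos; omega
    exact ⟨y, htw, (htw.2 u hux huy).symm⟩
  -- diameter at most 2
  have hdiam : ∀ p q : V, G.dist p q ≤ 2 := by
    by_contra h
    push_neg at h
    obtain ⟨p0, q0, h3d⟩ := h
    have hne : (Finset.univ : Finset (V × V)).Nonempty := ⟨(p0, q0), Finset.mem_univ _⟩
    obtain ⟨PQ, _, hmaxPQ⟩ := Finset.exists_max_image Finset.univ
      (fun z : V × V => G.dist z.1 z.2) hne
    set P := PQ.1
    set Q := PQ.2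
    have hmax' : ∀ x y : V, G.dist x y ≤ G.dist P Q :=
      fun x y => hmaxPQ (x, y) (Finset.mem_univ _)
    have hD3 : 3 ≤ G.dist P Q := le_trans (by omega) (hmax' p0 q0)
    have hPQ : P ≠ Q := fun h => by rw [h, SimpleGraph.dist_self] at hD3; omega
    obtain ⟨q', htwQ, hdq'⟩ := S1 P Q (fun v => hmax' P v) (by omega)
    have hQPdist : G.dist Q P = G.dist P Q := dist_comm
    obtain ⟨p', htwP, hdp'⟩ := S1 Q P (fun v => by rw [hQPdist]; exact hmax' Q v)
      (by omega)
    have hp'Q : p' ≠ Q := fun h => by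
      rw [h, SimpleGraph.dist_self] at hdp'; omega
    have hq'P : q' ≠ P := fun h => by
      rw [h, SimpleGraph.dist_self] at hdq'; omega
    have hconn2 := lemJ hG hPQ htwP htwQ hp'Q hq'P
    have htwPQ : Twinp G P Q := ⟨hPQ, hbad P Q hPQ hconn2⟩
    obtain ⟨w, hadj, hw⟩ := exists_adj_dist_pred hG (by omega : G.dist P Q ≠ 0)
    have hwP : w ≠ P := fun h => by rw [h, SimpleGraph.dist_self] at hw; omega
    have hwQ : w ≠ Q := hadj.ne
    have h1 := htwPQ.2 w hwP hwQ
    have h2 : G.dist w Q = 1 := dist_eq_one_iff_adj.mpr hadj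
    have hcomm : G.dist w P = G.dist P w := SimpleGraph.dist_comm
    omega
  -- universal vertices
  set IsU : V → Prop := fun u => ∀ v, v ≠ u → G.Adj u v with hIsU
  have hWtwin : ∀ w : V, ¬ IsU w → ∃ t, Twinp G w t ∧ ¬ IsU t := by
    intro w hw
    obtain ⟨v, hv_ne, hv_nadj⟩ : ∃ v, v ≠ w ∧ ¬ G.Adj w v := by
      by_contra hcon
      push_neg at hcon
      exact hw fun v hv => hcon v hv
    have hd2 : G.dist v w = 2 := by
      have h0 := hG.pos_dist_of_ne hv_ne
      have h1 : G.dist v w ≠ 1 := fun h => hv_nadj (dist_eq_one_iff_adj.mp h).symm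
      have h2 := hdiam v w
      omega
    obtain ⟨t, htw, hdt⟩ := S1 v w (fun u => by rw [hd2]; exact hdiam v u) (by omega)
    refine ⟨t, htw, ?_⟩
    intro hU
    have hvt : v ≠ t := fun h => by rw [← h, SimpleGraph.dist_self] at hdt; omega
    have := dist_eq_one_iff_adj.mpr ((hU v hvt).symm)
    omega
  have ha_nu : ¬ IsU a := fun h => hac_nadj (h c0 (fun hh => hac_ne hh.symm))
  have hc0_nu : ¬ IsU c0 := fun h => hac_nadj ((h a hac_ne).symm)
  have hd_ac2 : G.dist a c0 = 2 := le_antisymm (hdiam a c0) hd_ac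
  have hb_adj_a : G.Adj a b := by
    have h1 : G.dist a b = 1 := by omega
    exact dist_eq_one_iff_adj.mp h1
  have ha_ne_b : a ≠ b := hb_adj_a.ne
  have hd_c0a : G.dist c0 a = 2 := SimpleGraph.dist_comm.trans hd_ac2
  have hd_c0b : G.dist c0 b = 1 := dist_eq_one_iff_adj.mpr hb_adj_c0.symm
  have hd_ab1 : G.dist a b = 1 := dist_eq_one_iff_adj.mpr hb_adj_a
  -- a universal vertex exists
  have hU_exists : ∃ u, IsU u := by
    by_contra hno
    push_neg at hno
    obtain ⟨tb, htb, _⟩ := hWtwin b (hno b)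
    obtain ⟨tc, htc, _⟩ := hWtwin c0 (hno c0)
    have hnt : ¬ Twinp G b c0 := by
      intro ht
      have := ht.2 a ha_ne_b hac_ne
      rw [hd_ab1, hd_ac2] at this  -- note : dist a b = dist a c0
      omega
    have h1 : tb ≠ c0 := fun h => hnt (h ▸ htb)
    have h2 : tc ≠ b := fun h => hnt ((h ▸ htc).symm)
    exact hnt ⟨hbc_ne, hbad b c0 hbc_ne (lemJ hG hbc_ne htb htc h1 h2)⟩
  obtain ⟨c, hc⟩ := hU_exists
  have ha_ne_c : a ≠ c := fun h => ha_nu (h ▸ hc)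
  have hc0_ne_c : c0 ≠ c := fun h => hc0_nu (h ▸ hc)
  -- the universal vertex is unique
  have hUuniq : ∀ u, IsU u → u = c := by
    intro u hu
    by_contra hne
    have htwcu : Twinp G c u := by
      refine ⟨fun h => hne h.symm, ?_⟩
      intro z hz1 hz2
      have e1 : G.dist z c = 1 := dist_eq_one_iff_adj.mpr (hc z hz1).symm
      have e2 : G.dist z u = 1 := dist_eq_one_iff_adj.mpr (hu z hz2).symm
      rw [e1, e2]
    obtain ⟨ta, hta, hta_nu⟩ := hWtwin a ha_nu
    have hca : c ≠ a := Ne.symm ha_ne_c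
    have hua : u ≠ a := fun h => ha_nu (h ▸ hu)
    have htac : ta ≠ c := fun h => hta_nu (h ▸ hc)
    have htw := hbad c a hca (lemJ hG hca htwcu hta hua htac)
    have := htw c0 hc0_ne_c (fun h => hac_ne h.symm)
    have e1 : G.dist c0 c = 1 := dist_eq_one_iff_adj.mpr (hc c0 hc0_ne_c).symm
    rw [hd_c0a, e1] at this
    omega
  -- leaves are pairwise non-adjacent
  have hindep : ∀ w1 w2 : V, w1 ≠ c → w2 ≠ c → ¬ G.Adj w1 w2 := by
    intro w1 w2 hw1 hw2 hadj12
    have hbne : w1 ≠ w2 := hadj12.ne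
    have hnu1 : ¬ IsU w1 := fun h => hw1 (hUuniq w1 h)
    have hnu2 : ¬ IsU w2 := fun h => hw2 (hUuniq w2 h)
    have htw12 : Twinp G w1 w2 := by
      by_contra hnt
      obtain ⟨t1, ht1, _⟩ := hWtwin w1 hnu1
      obtain ⟨t2, ht2, _⟩ := hWtwin w2 hnu2
      have h1 : t1 ≠ w2 := fun h => hnt (h ▸ ht1)
      have h2 : t2 ≠ w1 := fun h => hnt ((h ▸ ht2).symm)
      exact hnt ⟨hbne, hbad w1 w2 hbne (lemJ hG hbne ht1 ht2 h1 h2)⟩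
    obtain ⟨v1, hv1ne, hv1nadj⟩ : ∃ v, v ≠ w1 ∧ ¬ G.Adj w1 v := by
      by_contra hcon
      push_neg at hcon
      exact hnu1 fun v hv => hcon v hv
    have hv1w2 : v1 ≠ w2 := fun h => hv1nadj (h ▸ hadj12)
    have hd_v1w1 : G.dist v1 w1 = 2 := by
      have h0 := hG.pos_dist_of_ne hv1ne
      have h1 : G.dist v1 w1 ≠ 1 := fun h => hv1nadj (dist_eq_one_iff_adj.mp h).symm
      have h2 := hdiam v1 w1
      omega
    have hd_v1w2 : G.dist v1 w2 = 2 := by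
      rw [← htw12.2 v1 hv1ne hv1w2]
      exact hd_v1w1
    have hnt2 : ¬ Twinp G w1 v1 := by
      intro ht
      have := ht.2 w2 hbne.symm (Ne.symm hv1w2)
      have e1 : G.dist w2 w1 = 1 := dist_eq_one_iff_adj.mpr hadj12.symm
      have e2 : G.dist w2 v1 = G.dist v1 w2 := SimpleGraph.dist_comm
      rw [e1, e2, hd_v1w2] at this
      omega
    have hnuv1 : ¬ IsU v1 := fun h => hv1nadj ((h w1 (Ne.symm hv1ne)).symm)
    obtain ⟨tv, htv, _⟩ := hWtwin v1 hnuv1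
    have htvw1 : tv ≠ w1 := fun h => hnt2 ((h ▸ htv).symm)
    exact hnt2 ⟨Ne.symm hv1ne,
      hbad w1 v1 (Ne.symm hv1ne) (lemJ hG (Ne.symm hv1ne) htw12 htv (Ne.symm hv1w2) htvw1)⟩
  have hstar : ∀ x y, G.Adj x y ↔ (x ≠ y ∧ (x = c ∨ y = c)) := by
    intro x y
    constructor
    · intro h
      refine ⟨h.ne, ?_⟩
      by_contra hh
      push_neg at hh
      exact hindep x y hh.1 hh.2 h
    · rintro ⟨hne, rfl | rfl⟩
      · exact hc y (Ne.symm hne)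
      · exact (hc x hne).symm
  refine ⟨?_, c, hstar⟩
  -- at least 4 vertices
  by_contra h4
  have hc3 : Fintype.card V = 3 := by omega
  have hcard1 : ({a, b}ᶜ : Set V).ncard = 1 := by
    rw [ncard_compl_pair hab_ne]
    omega
  obtain ⟨z0, hz0⟩ := Set.ncard_eq_one.mp hcard1
  have hconn1 : (G.induce ({a, b}ᶜ : Set V)).Connected := by
    rw [connected_iff]
    refine ⟨?_, ⟨⟨z0, by simp [hz0]⟩⟩⟩
    rintro ⟨p, hp⟩ ⟨q, hq⟩
    have hp' : p = z0 := by have h := hp; rw [hz0] at h; simpa using h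
    have hq' : q = z0 := by have h := hq; rw [hz0] at h; simpa using h
    have heq : (⟨p, hp⟩ : ({a, b}ᶜ : Set V)) = ⟨q, hq⟩ := Subtype.ext (hp'.trans hq'.symm)
    rw [heq]
  have := hbad a b hab_ne hconn1 c0 (fun h => hac_ne h.symm) (Ne.symm hbc_ne)
  rw [hd_c0a, hd_c0b] at this
  omega
end Main

/-- For a finite simple connected graph `G` of order `n ≥ 2`,
`cdim(G) = n - 1` iff `G ≅ K_n`, or `n ≥ 4` and `G ≅ K_{1,n-1}`. -/
theorem stmt_10 {V : Type*} [Fintype V] (G : SimpleGraph V) (hG : G.Connected)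
    (hn : 2 ≤ Fintype.card V) :
    cdim G = Fintype.card V - 1 ↔
      Nonempty (G ≃g completeGraph (Fin (Fintype.card V))) ∨
        (4 ≤ Fintype.card V ∧
          Nonempty (G ≃g completeBipartiteGraph (Fin 1) (Fin (Fintype.card V - 1)))) := by
  classical
  constructor
  · intro hcd
    by_cases hcomp : ∀ x y : V, x ≠ y → G.Adj x y
    · exact Or.inl (iso_complete_of hcomp)
    · have hbad : ∀ x y : V, x ≠ y → (G.induce ({x, y}ᶜ : Set V)).Connected →
          ∀ z, z ≠ x → z ≠ y → G.dist z x = G.dist z y := by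
        intro x y hxy hconn z hzx hzy
        by_contra hd
        have hmem : (Fintype.card V - 2) ∈
            {n | ∃ S : Set V, IsConnResolving G S ∧ S.ncard = n} :=
          ⟨({x, y}ᶜ : Set V), ⟨isResolving_compl_pair hG hzx hzy hd, hconn⟩,
            ncard_compl_pair hxy⟩
        have hle : cdim G ≤ Fintype.card V - 2 := Nat.sInf_le hmem
        rw [hcd] at hle
        omega
      obtain ⟨h4, c, hstar⟩ := structure_of_bad hG hbad hcomp
      exact Or.inr ⟨h4, iso_of_star hstar⟩
  · rintro (he | ⟨h4, he⟩)
    · obtain ⟨e⟩ := he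
      exact cdim_complete hG hn (complete_of_iso e)
    · obtain ⟨e⟩ := he
      obtain ⟨c, hstar⟩ := star_of_iso e
      exact cdim_star hG h4 hstar
end Star
end

section
/- Let T be a finite tree (a connected acyclic simple graph) having exactly one exterior major vertex, i.e., ex(T) = 1. Then cdim(T) = σ(T), the number of end vertices of T. -/
open SimpleGraph

variable {V : Type*}

/-- The degree of a vertex, as the size of its neighbor set. -/
noncomputable def deg (G : SimpleGraph V) (v : V) : ℕ := (G.neighborSet v).ncard

/-- An end vertex is a vertex of degree one. -/
def IsEndVertex (G : SimpleGraph V) (v : V) : Prop := deg G v = 1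

/-- A major vertex is a vertex of degree at least three. -/
def IsMajorVertex (G : SimpleGraph V) (v : V) : Prop := 3 ≤ deg G v

/-- `ℓ` is a terminal vertex of the major vertex `v` if `ℓ` is an end vertex and
`d(ℓ,v) < d(ℓ,w)` for every other major vertex `w`. -/
def IsTerminalOf (G : SimpleGraph V) (ℓ v : V) : Prop :=
  IsEndVertex G ℓ ∧ IsMajorVertex G v ∧
    ∀ w : V, IsMajorVertex G w → w ≠ v → G.dist ℓ v < G.dist ℓ w

/-- An exterior major vertex is a major vertex with at least one terminal vertex. -/
def IsExteriorMajor (G : SimpleGraph V) (v : V) : Prop :=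
  IsMajorVertex G v ∧ ∃ ℓ : V, IsTerminalOf G ℓ v


section Aux
open SimpleGraph Walk
set_option linter.unusedSectionVars false
variable {V : Type*} [DecidableEq V] {T : SimpleGraph V}


variable {V : Type*} [DecidableEq V] {T : SimpleGraph V}

lemma tree_path_length (hT : T.IsTree) {x y : V} (p : T.Walk x y) (hp : p.IsPath) :
    p.length = T.dist x y := by
  obtain ⟨q, hq, hlen⟩ := hT.isConnected.exists_path_of_dist x y
  have := (hT.existsUnique_path x y).unique hp hq
  rw [this, hlen]

lemma onPath_of_mem_support (hT : T.IsTree) {x y w : V} (p : T.Walk x y) (hp : p.IsPath)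
    (hw : w ∈ p.support) : T.dist x w + T.dist w y = T.dist x y := by
  have h1 : (p.takeUntil w hw).IsPath := hp.takeUntil hw
  have h2 : (p.dropUntil w hw).IsPath := hp.dropUntil hw
  have hlen := congrArg Walk.length (p.take_spec hw)
  rw [length_append] at hlen
  rw [← tree_path_length hT _ hp, ← tree_path_length hT _ h1, ← tree_path_length hT _ h2, hlen]

lemma mem_support_of_onPath (hT : T.IsTree) {x y w : V} (p : T.Walk x y) (hp : p.IsPath)
    (h : T.dist x w + T.dist w y = T.dist x y) : w ∈ p.support := by
  obtain ⟨q1, hq1, l1⟩ := hT.isConnected.exists_path_of_dist x w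
  obtain ⟨q2, hq2, l2⟩ := hT.isConnected.exists_path_of_dist w y
  have hql : (q1.append q2).length = T.dist x y := by rw [length_append, l1, l2, h]
  have hqp : (q1.append q2).IsPath := (q1.append q2).isPath_of_length_eq_dist hql
  have heq := (hT.existsUnique_path x y).unique hp hqp
  rw [heq, mem_support_append_iff]
  exact Or.inl q1.end_mem_support

/-- Existence of the neighbor toward `x`. -/
lemma exists_toward (hT : T.IsTree) {w x : V} (hne : x ≠ w) :
    ∃ b, T.Adj w b ∧ T.dist b x + 1 = T.dist w x := by
  obtain ⟨p, hp, hl⟩ := hT.isConnected.exists_path_of_dist w x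
  cases p with
  | nil => exact absurd rfl hne.symm
  | cons h q =>
    refine ⟨_, h, ?_⟩
    have hq : q.IsPath := hp.of_cons
    have := tree_path_length hT q hq
    simp only [Walk.length_cons] at hl
    omega

/-- Uniqueness of the neighbor toward `x`. -/
lemma toward_unique (hT : T.IsTree) {w x b b' : V} (hb : T.Adj w b) (hb' : T.Adj w b')
    (h : T.dist b x + 1 = T.dist w x) (h' : T.dist b' x + 1 = T.dist w x) : b = b' := by
  have key : ∀ (c : V), T.Adj w c → T.dist c x + 1 = T.dist w x →
      ∃ p : T.Walk w x, p.IsPath ∧ p.getVert 1 = c := by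
    intro c hc hcx
    obtain ⟨p, hp, hl⟩ := hT.isConnected.exists_path_of_dist c x
    have hwp : w ∉ p.support := by
      intro hw
      have h1 := onPath_of_mem_support hT p hp hw
      have h2 : T.dist c w = 1 := by rw [dist_comm]; exact (dist_eq_one_iff_adj).2 hc
      omega
    refine ⟨Walk.cons hc p, hp.cons hwp, ?_⟩
    rw [Walk.getVert_cons_succ (n := 0), Walk.getVert_zero]
  obtain ⟨p, hp, hv⟩ := key b hb h
  obtain ⟨p', hp', hv'⟩ := key b' hb' h'
  have := (hT.existsUnique_path w x).unique hp hp'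
  rw [← hv, ← hv', this]

/-- dichotomy of distances across an edge. -/
lemma adj_dist_dichotomy (hT : T.IsTree) {z y : V} (h : T.Adj z y) (x : V) :
    T.dist x y = T.dist x z + 1 ∨ T.dist x z = T.dist x y + 1 := by
  have hzy : T.dist z y = 1 := (dist_eq_one_iff_adj).2 h
  have t1 : T.dist x y ≤ T.dist x z + 1 := by
    have := hT.isConnected.dist_triangle (u := x) (v := z) (w := y); omega
  have t2 : T.dist x z ≤ T.dist x y + 1 := by
    have := hT.isConnected.dist_triangle (u := x) (v := y) (w := z)
    have : T.dist y z = 1 := by rw [dist_comm]; exact hzy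
    omega
  have hne : T.dist x y ≠ T.dist x z := by
    intro heq
    by_cases hxz : x = z
    · subst hxz
      rw [SimpleGraph.dist_self] at heq
      have hxy : x = y := (hT.isConnected.dist_eq_zero_iff).1 heq
      exact h.ne hxy
    · obtain ⟨p, hp, hl⟩ := hT.isConnected.exists_path_of_dist x y
      have hzp : z ∉ p.support := by
        intro hz
        have h1 := onPath_of_mem_support hT p hp hz
        omega
      have hq : (Walk.cons h p.reverse).IsPath :=
        (hp.reverse).cons (by simpa using hzp)
      have := tree_path_length hT _ hq
      simp only [Walk.length_cons, Walk.length_reverse] at this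
      have hcomm : T.dist z x = T.dist x z := SimpleGraph.dist_comm
      omega
  omega

/-- Closure of a branch: a neighbor of a branch vertex is in the branch or is the root. -/
lemma branch_closure (hT : T.IsTree) {w b z y : V} (hwb : T.Adj w b)
    (hz : T.dist b z + 1 = T.dist w z) (hzy : T.Adj z y)
    (hy : ¬ (T.dist b y + 1 = T.dist w y)) : y = w := by
  by_contra hyw
  have hdwb : T.dist w b = 1 := (dist_eq_one_iff_adj).2 hwb
  have hdbw : T.dist b w = 1 := by rw [dist_comm]; exact hdwb
  obtain ⟨p, hp, hl⟩ := hT.isConnected.exists_path_of_dist w z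
  have hb : b ∈ p.support := mem_support_of_onPath hT p hp (by omega)
  by_cases hyp : y ∈ p.support
  · have h1 : (p.takeUntil y hyp).IsPath := hp.takeUntil hyp
    have h2 : (p.dropUntil y hyp).IsPath := hp.dropUntil hyp
    rw [← p.take_spec hyp, mem_support_append_iff] at hb
    cases hb with
    | inl hb =>
      have := onPath_of_mem_support hT _ h1 hb
      omega
    | inr hb =>
      have h3 := onPath_of_mem_support hT _ h2 hb
      have hdyz : T.dist y z = 1 := by
        rw [dist_comm]; exact (dist_eq_one_iff_adj).2 hzy
      rw [hdyz] at h3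
      rcases Nat.le_one_iff_eq_zero_or_eq_one.1 (Nat.le.intro h3 : T.dist y b ≤ 1) with h0 | h1'
      · have hyb : y = b := (hT.isConnected.dist_eq_zero_iff).1 h0
        subst hyb
        omega
      · have hbz0 : T.dist b z = 0 := by omega
        have hbz : b = z := (hT.isConnected.dist_eq_zero_iff).1 hbz0
        subst hbz
        have hdby : T.dist b y = 1 := by rw [dist_comm]; exact h1'
        rcases adj_dist_dichotomy hT hzy w with hc | hc
        · omega
        · have : T.dist w y = 0 := by omega
          exact hyw ((hT.isConnected.dist_eq_zero_iff).1 (by rw [dist_comm] at this ⊢; exact this) |>.symm ▸ rfl)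
  · have hq : (Walk.cons hzy.symm p.reverse).IsPath :=
      (hp.reverse).cons (by simpa using hyp)
    have hbq : b ∈ (Walk.cons hzy.symm p.reverse).support := by
      rw [Walk.support_cons]
      exact List.mem_cons_of_mem _ (by simpa using hb)
    have := onPath_of_mem_support hT _ hq hbq
    have hcomm1 : T.dist y b = T.dist b y := SimpleGraph.dist_comm
    have hcomm2 : T.dist y w = T.dist w y := SimpleGraph.dist_comm
    omega

/-- Any walk from inside a branch to outside it passes through the root. -/
lemma crossing (hT : T.IsTree) {w b : V} (hwb : T.Adj w b) {x y : V} (q : T.Walk x y)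
    (hx : T.dist b x + 1 = T.dist w x) (hy : ¬ (T.dist b y + 1 = T.dist w y)) :
    w ∈ q.support := by
  induction q with
  | nil => exact absurd hx hy
  | cons hadj q ih =>
    rename_i u u' y' _
    by_cases h' : T.dist b y' + 1 = T.dist w y'
    · rw [Walk.support_cons]
      exact List.mem_cons_of_mem _ (ih h' hy)
    · have huw : y' = w := branch_closure hT hwb hx hadj h'
      rw [Walk.support_cons]
      exact List.mem_cons_of_mem _ (huw ▸ q.start_mem_support)

/-- branch-to-outside distances split at the root. -/
lemma dist_split (hT : T.IsTree) {w b x y : V} (hwb : T.Adj w b)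
    (hx : T.dist b x + 1 = T.dist w x) (hy : ¬ (T.dist b y + 1 = T.dist w y)) :
    T.dist x y = T.dist x w + T.dist w y := by
  obtain ⟨p, hp, _⟩ := hT.isConnected.exists_path_of_dist x y
  have hw := crossing hT hwb p hx hy
  exact (onPath_of_mem_support hT p hp hw).symm

lemma two_le_deg [Fintype V] {v a b : V} (ha : T.Adj v a) (hb : T.Adj v b) (hab : a ≠ b) :
    2 ≤ deg T v := by
  have : 1 < (T.neighborSet v).ncard :=
    (Set.one_lt_ncard (Set.toFinite _)).2 ⟨a, ha, b, hb, hab⟩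
  unfold deg; omega

lemma three_le_deg [Fintype V] {v a b c : V} (ha : T.Adj v a) (hb : T.Adj v b) (hc : T.Adj v c)
    (hab : a ≠ b) (hac : a ≠ c) (hbc : b ≠ c) : 3 ≤ deg T v := by
  have hsub : ({a, b, c} : Set V) ⊆ T.neighborSet v := by
    intro z hz
    rcases hz with rfl | rfl | rfl <;> assumption
  have h3 : ({a, b, c} : Set V).ncard = 3 := by
    rw [Set.ncard_insert_of_notMem (by simp [hab, hac]) (Set.toFinite _), Set.ncard_pair hbc]
  have := Set.ncard_le_ncard hsub (Set.toFinite _)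
  unfold deg; omega

lemma exists_ne_nbr [Fintype V] {v : V} (h2 : 2 ≤ deg T v) (a : V) :
    ∃ b, T.Adj v b ∧ b ≠ a := by
  by_contra h
  push_neg at h
  have hsub : T.neighborSet v ⊆ {a} := by
    intro z hz; exact h z hz
  have := Set.ncard_le_ncard hsub (Set.toFinite _)
  rw [Set.ncard_singleton] at this
  unfold deg at h2; omega

/-- Every branch contains an end vertex maximizing the distance from any outside root. -/
lemma exists_leaf_in_branch [Fintype V] (hT : T.IsTree) {w b r : V} (hwb : T.Adj w b)
    (hr : ¬ (T.dist b r + 1 = T.dist w r)) :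
    ∃ ℓ, (T.dist b ℓ + 1 = T.dist w ℓ) ∧ IsEndVertex T ℓ ∧
      ∀ x, (T.dist b x + 1 = T.dist w x) → T.dist r x ≤ T.dist r ℓ := by
  classical
  have hdwb : T.dist w b = 1 := (dist_eq_one_iff_adj).2 hwb
  set s : Finset V := Finset.univ.filter (fun x => T.dist b x + 1 = T.dist w x) with hs
  have hbs : b ∈ s := by
    simp only [hs, Finset.mem_filter, Finset.mem_univ, true_and, SimpleGraph.dist_self]
    omega
  obtain ⟨ℓ, hℓs, hmax⟩ := s.exists_max_image (fun x => T.dist r x) ⟨b, hbs⟩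
  simp only [hs, Finset.mem_filter, Finset.mem_univ, true_and] at hℓs
  have hmax' : ∀ x, T.dist b x + 1 = T.dist w x → T.dist r x ≤ T.dist r ℓ := by
    intro x hx
    exact hmax x (by simp only [hs, Finset.mem_filter, Finset.mem_univ, true_and]; exact hx)
  refine ⟨ℓ, hℓs, ?_, hmax'⟩
  have hℓr : r ≠ ℓ := fun h => hr (h ▸ hℓs)
  obtain ⟨n, hn, hnr⟩ := exists_toward hT (w := ℓ) (x := r) hℓr
  by_contra hend
  have h2 : 2 ≤ deg T ℓ := by
    have h1 : 0 < (T.neighborSet ℓ).ncard :=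
      (Set.ncard_pos (Set.toFinite _)).2 ⟨n, hn⟩
    unfold IsEndVertex at hend
    unfold deg at hend ⊢
    omega
  obtain ⟨y, hy, hyn⟩ := exists_ne_nbr h2 n
  rcases adj_dist_dichotomy hT hy r with hcase | hcase
  · -- y is further from r
    by_cases hyb : T.dist b y + 1 = T.dist w y
    · have := hmax' y hyb
      have c1 : T.dist r y = T.dist y r := SimpleGraph.dist_comm
      have c2 : T.dist r ℓ = T.dist ℓ r := SimpleGraph.dist_comm
      omega
    · have hyw : y = w := branch_closure hT hwb hℓs hy hyb
      have hdwℓ : T.dist w ℓ = 1 := by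
        rw [dist_eq_one_iff_adj]; exact (hyw ▸ hy).symm
      have hbℓ0 : T.dist b ℓ = 0 := by omega
      have hbℓ : b = ℓ := (hT.isConnected.dist_eq_zero_iff).1 hbℓ0
      have hsplit := dist_split hT hwb (by rw [SimpleGraph.dist_self]; omega) hr
      have c1 : T.dist b w = 1 := by rw [SimpleGraph.dist_comm]; exact hdwb
      have c2 : T.dist r w = T.dist w r := SimpleGraph.dist_comm
      have c3 : T.dist r b = T.dist b r := SimpleGraph.dist_comm
      have c4 : T.dist r ℓ = T.dist r b := by rw [hbℓ]
      have c5 : T.dist r y = T.dist r w := by rw [hyw]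
      omega
  · -- y is toward r : y = n, contradiction
    have hcomm1 : T.dist y r = T.dist r y := SimpleGraph.dist_comm
    have hcomm2 : T.dist ℓ r = T.dist r ℓ := SimpleGraph.dist_comm
    exact hyn (toward_unique hT hy hn (by omega) hnr)

/-- If there were a major vertex other than `c`, there would be an exterior major
vertex other than `c`. -/
lemma all_major_eq [Fintype V] (hT : T.IsTree) {c : V}
    (hc : {v : V | IsExteriorMajor T v} = {c}) (w0 : V) (hw0 : IsMajorVertex T w0) :
    w0 = c := by
  classical
  by_contra hne
  set s : Finset V := Finset.univ.filter (fun v => IsMajorVertex T v ∧ v ≠ c) with hs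
  have hw0s : w0 ∈ s := by
    simp only [hs, Finset.mem_filter, Finset.mem_univ, true_and]; exact ⟨hw0, hne⟩
  obtain ⟨w, hws, hmax⟩ := s.exists_max_image (fun v => T.dist c v) ⟨w0, hw0s⟩
  simp only [hs, Finset.mem_filter, Finset.mem_univ, true_and] at hws
  obtain ⟨hwmaj, hwc⟩ := hws
  obtain ⟨a, haw, hac⟩ := exists_toward hT (w := w) (x := c) (Ne.symm hwc)
  have h2 : 2 ≤ deg T w := le_trans (by norm_num) hwmaj
  obtain ⟨b, hbw, hba⟩ := exists_ne_nbr h2 a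
  have hcb : ¬ (T.dist b c + 1 = T.dist w c) := fun h => hba (toward_unique hT hbw haw h hac)
  obtain ⟨ℓ, hℓbr, hℓend, _⟩ := exists_leaf_in_branch hT hbw hcb
  have hbrdist : ∀ x, T.dist b x + 1 = T.dist w x → T.dist c x = T.dist c w + T.dist w x := by
    intro x hx
    have hsp := dist_split hT hbw hx hcb
    have c1 : T.dist c x = T.dist x c := SimpleGraph.dist_comm
    have c2 : T.dist c w = T.dist w c := SimpleGraph.dist_comm
    have c3 : T.dist w x = T.dist x w := SimpleGraph.dist_comm
    omega
  have hnomaj : ∀ u, IsMajorVertex T u → ¬ (T.dist b u + 1 = T.dist w u) := by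
    intro u hu hub
    have huc : u ≠ c := fun h => hcb (h ▸ hub)
    have h1 := hmax u (by simp only [hs, Finset.mem_filter, Finset.mem_univ, true_and]; exact ⟨hu, huc⟩)
    have h2' := hbrdist u hub
    omega
  have hterm : IsTerminalOf T ℓ w := by
    refine ⟨hℓend, hwmaj, ?_⟩
    intro u hu huw
    have hsp := dist_split hT hbw hℓbr (hnomaj u hu)
    have hpos : 0 < T.dist w u := hT.isConnected.pos_dist_of_ne (Ne.symm huw)
    omega
  have : w ∈ {v : V | IsExteriorMajor T v} := ⟨hwmaj, ℓ, hterm⟩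
  rw [hc] at this
  exact hwc this

/-- In a spider, vertices in the same branch at the same depth coincide. -/
lemma depth_inj [Fintype V] (hT : T.IsTree) {c : V}
    (hdeg2 : ∀ x : V, x ≠ c → deg T x ≤ 2) {b : V} (hb : T.Adj c b) :
    ∀ d x y, T.dist c x = d → T.dist c y = d →
      T.dist b x + 1 = T.dist c x → T.dist b y + 1 = T.dist c y → x = y := by
  intro d
  induction d with
  | zero => intro x y hx hy hbx _; omega
  | succ d ih =>
    intro x y hx hy hbx hby
    rcases Nat.eq_zero_or_pos d with hd | hd
    · subst hd
      have hxb : b = x := (hT.isConnected.dist_eq_zero_iff).1 (by omega)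
      have hyb : b = y := (hT.isConnected.dist_eq_zero_iff).1 (by omega)
      rw [← hxb, ← hyb]
    · have hxc : x ≠ c := by
        intro h; subst h; rw [SimpleGraph.dist_self] at hx; omega
      have hyc : y ≠ c := by
        intro h; subst h; rw [SimpleGraph.dist_self] at hy; omega
      obtain ⟨x', hx'adj, hx'⟩ := exists_toward hT (w := x) (x := c) (Ne.symm hxc)
      obtain ⟨y', hy'adj, hy'⟩ := exists_toward hT (w := y) (x := c) (Ne.symm hyc)
      have hcx : T.dist c x = T.dist x c := SimpleGraph.dist_comm
      have hcy : T.dist c y = T.dist y c := SimpleGraph.dist_comm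
      have hcx' : T.dist c x' = T.dist x' c := SimpleGraph.dist_comm
      have hcy' : T.dist c y' = T.dist y' c := SimpleGraph.dist_comm
      have hx'br : T.dist b x' + 1 = T.dist c x' := by
        by_contra hnot
        have hxc' : x' = c := branch_closure hT hb hbx hx'adj hnot
        rw [hxc'] at hx'
        rw [SimpleGraph.dist_self] at hx'
        omega
      have hy'br : T.dist b y' + 1 = T.dist c y' := by
        by_contra hnot
        have hyc' : y' = c := branch_closure hT hb hby hy'adj hnot
        rw [hyc'] at hy'
        rw [SimpleGraph.dist_self] at hy'
        omega
      have hzz : x' = y' := ih x' y' (by omega) (by omega) hx'br hy'br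
      by_contra hxy
      have hzc : x' ≠ c := by
        intro h; rw [h, SimpleGraph.dist_self] at hx'br; omega
      obtain ⟨n, hnadj, hn⟩ := exists_toward hT (w := x') (x := c) (Ne.symm hzc)
      have hcn : T.dist c n = T.dist n c := SimpleGraph.dist_comm
      have hnx : n ≠ x := by
        intro h; rw [h] at hn; omega
      have hny : n ≠ y := by
        intro h; rw [h, hzz] at hn; omega
      have h3 : 3 ≤ deg T x' :=
        three_le_deg hnadj hx'adj.symm (hzz ▸ hy'adj.symm) hnx hny hxy
      have := hdeg2 x' hzc
      omega

/-- An end vertex of a branch has maximal depth in the branch. -/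
lemma leaf_le_of_end [Fintype V] (hT : T.IsTree) {c : V}
    (hdeg2 : ∀ x : V, x ≠ c → deg T x ≤ 2) {b : V} (hb : T.Adj c b) {ℓ : V}
    (hℓ : T.dist b ℓ + 1 = T.dist c ℓ) (hend : IsEndVertex T ℓ) :
    ∀ x, T.dist b x + 1 = T.dist c x → T.dist c x ≤ T.dist c ℓ := by
  intro x hx
  by_contra hgt
  push_neg at hgt
  set d := T.dist c ℓ with hd
  have hd1 : 1 ≤ d := by omega
  have descend : ∀ m (z : V), T.dist b z + 1 = T.dist c z → T.dist c z = (d + 1) + m →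
      ∃ y, T.dist b y + 1 = T.dist c y ∧ T.dist c y = d + 1 := by
    intro m
    induction m with
    | zero => exact fun z hbz hdz => ⟨z, hbz, hdz⟩
    | succ m ih =>
      intro z hbz hdz
      have hzc : z ≠ c := by
        intro h; rw [h, SimpleGraph.dist_self] at hdz; omega
      obtain ⟨z', hz'adj, hz'⟩ := exists_toward hT (w := z) (x := c) (Ne.symm hzc)
      have hcz : T.dist c z = T.dist z c := SimpleGraph.dist_comm
      have hcz' : T.dist c z' = T.dist z' c := SimpleGraph.dist_comm
      have hz'br : T.dist b z' + 1 = T.dist c z' := by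
        by_contra hnot
        have h' : z' = c := branch_closure hT hb hbz hz'adj hnot
        rw [h', SimpleGraph.dist_self] at hz'
        omega
      exact ih z' hz'br (by omega)
  obtain ⟨y, hby, hdy⟩ := descend (T.dist c x - d - 1) x hx (by omega)
  have hyc : y ≠ c := by
    intro h; rw [h, SimpleGraph.dist_self] at hdy; omega
  obtain ⟨y', hy'adj, hy'⟩ := exists_toward hT (w := y) (x := c) (Ne.symm hyc)
  have hcy : T.dist c y = T.dist y c := SimpleGraph.dist_comm
  have hcy' : T.dist c y' = T.dist y' c := SimpleGraph.dist_comm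
  have hy'br : T.dist b y' + 1 = T.dist c y' := by
    by_contra hnot
    have h' : y' = c := branch_closure hT hb hby hy'adj hnot
    rw [h', SimpleGraph.dist_self] at hy'
    omega
  have hy'ℓ : y' = ℓ := depth_inj hT hdeg2 hb d y' ℓ (by omega) hd.symm hy'br hℓ
  have hℓc : ℓ ≠ c := by
    intro h; rw [h, SimpleGraph.dist_self] at hd; omega
  obtain ⟨n, hnadj, hn⟩ := exists_toward hT (w := ℓ) (x := c) (Ne.symm hℓc)
  have hcn : T.dist c n = T.dist n c := SimpleGraph.dist_comm
  have hcℓ : T.dist c ℓ = T.dist ℓ c := SimpleGraph.dist_comm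
  have hyn : y ≠ n := by
    intro h; rw [h] at hdy; omega
  have h2 : 2 ≤ deg T ℓ := two_le_deg (hy'ℓ ▸ hy'adj.symm) hnadj hyn
  unfold IsEndVertex at hend
  omega

/-- A walk in an induced subgraph gives a walk in the ambient graph with support in the set. -/
lemma walk_in_set {S : Set V} : ∀ {a b : S} (_ : (T.induce S).Walk a b),
    ∃ p : T.Walk a.1 b.1, ∀ v ∈ p.support, v ∈ S := by
  intro a b q
  induction q with
  | nil =>
    refine ⟨Walk.nil, ?_⟩
    intro v hv
    rw [Walk.support_nil, List.mem_singleton] at hv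
    rw [hv]
    exact Subtype.coe_prop _
  | @cons a a' b' h q ih =>
    obtain ⟨p, hp⟩ := ih
    refine ⟨Walk.cons (by exact h) p, ?_⟩
    intro v hv
    change v ∈ (a : V) :: p.support at hv
    rcases List.mem_cons.1 hv with rfl | hv'
    · exact a.2
    · exact hp v hv'

end Aux
/-- For a finite tree `T` with exactly one exterior major vertex,
`cdim(T) = σ(T)`, the number of end vertices of `T`. -/
theorem stmt_11 {V : Type*} [Fintype V] (T : SimpleGraph V) (hT : T.IsTree)
    (hex : {v : V | IsExteriorMajor T v}.ncard = 1) :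
    cdim T = {v : V | IsEndVertex T v}.ncard := by
  classical
  obtain ⟨c, hc⟩ := Set.ncard_eq_one.mp hex
  have hcex : IsExteriorMajor T c := by
    have h : c ∈ {v : V | IsExteriorMajor T v} := by rw [hc]; exact Set.mem_singleton c
    exact h
  have hcmaj : IsMajorVertex T c := hcex.1
  have hmajeq : ∀ w, IsMajorVertex T w → w = c := all_major_eq hT hc
  have hdeg2 : ∀ x : V, x ≠ c → deg T x ≤ 2 := by
    intro x hx
    by_contra h
    exact hx (hmajeq x (by unfold IsMajorVertex; omega))
  set N : Set V := T.neighborSet c with hN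
  set k : ℕ := N.ncard with hk
  have hk3 : 3 ≤ k := by
    unfold IsMajorVertex deg at hcmaj
    exact hcmaj
  have hcN : c ∉ N := fun h => T.irrefl h
  have hbr : ∀ x : V, x ≠ c → ∃ b, T.Adj c b ∧ T.dist b x + 1 = T.dist c x :=
    fun x hx => exists_toward hT (w := c) hx
  have hbrc : ∀ b, T.Adj c b → T.dist b b + 1 = T.dist c b := by
    intro b hb
    rw [SimpleGraph.dist_self, dist_eq_one_iff_adj.2 hb]
  have hbselfne : ∀ b x, T.dist b x + 1 = T.dist c x → x ≠ c := by
    intro b x h hxc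
    rw [hxc, SimpleGraph.dist_self] at h
    omega
  have houtside : ∀ b, T.Adj c b → ∀ z, ¬ (T.dist b z + 1 = T.dist c z) →
      T.dist z b = T.dist z c + 1 := by
    intro b hb z hz
    have hsp := dist_split hT hb (hbrc b hb) hz
    have c1 : T.dist b c = 1 := by rw [SimpleGraph.dist_comm]; exact dist_eq_one_iff_adj.2 hb
    have c2 : T.dist z b = T.dist b z := SimpleGraph.dist_comm
    have c3 : T.dist z c = T.dist c z := SimpleGraph.dist_comm
    omega
  -- upper bound set
  obtain ⟨b₀, hb₀⟩ : ∃ b, b ∈ N := Set.nonempty_of_ncard_ne_zero (by omega)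
  set S₀ : Set V := insert c (N \ {b₀}) with hS₀
  have hcS₀ : c ∈ S₀ := Set.mem_insert _ _
  have hmemS₀ : ∀ z, T.Adj c z → z ≠ b₀ → z ∈ S₀ := by
    intro z hz hzb
    exact Set.mem_insert_iff.mpr (Or.inr ⟨hz, by simpa using hzb⟩)
  have hS₀card : S₀.ncard = k := by
    rw [hS₀, Set.ncard_insert_of_notMem (fun h => hcN h.1) (Set.toFinite _),
      Set.ncard_diff_singleton_of_mem hb₀]
    omega
  have hS₀res : IsResolving T S₀ := by
    intro x y hxy
    by_cases hdxy : T.dist c x = T.dist c y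
    · have hxc : x ≠ c := by
        intro h
        rw [h, SimpleGraph.dist_self] at hdxy
        have h2 := (hT.isConnected.dist_eq_zero_iff).1 hdxy.symm
        exact hxy (h.trans h2)
      have hyc : y ≠ c := by
        intro h
        rw [h, SimpleGraph.dist_self] at hdxy
        have h2 := (hT.isConnected.dist_eq_zero_iff).1 hdxy
        exact hxy (h2.symm.trans h.symm)
      obtain ⟨bx, hbxadj, hbx⟩ := hbr x hxc
      obtain ⟨by', hbyadj, hby⟩ := hbr y hyc
      have hbne : bx ≠ by' := by
        intro h
        exact hxy (depth_inj hT hdeg2 hbxadj (T.dist c x) x y rfl hdxy.symm hbx (h ▸ hby))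
      have main : ∀ (u v' bu bv : V), T.Adj c bu → T.Adj c bv → bu ≠ bv →
          T.dist c u = T.dist c v' →
          T.dist bu u + 1 = T.dist c u → T.dist bv v' + 1 = T.dist c v' →
          T.dist bu u ≠ T.dist bu v' := by
        intro u v' bu bv hbu hbv hne hduv hu hv
        have hvnb : ¬ (T.dist bu v' + 1 = T.dist c v') :=
          fun h => hne (toward_unique hT hbu hbv h hv)
        have h1 := houtside bu hbu v' hvnb
        have c1 : T.dist bu v' = T.dist v' bu := SimpleGraph.dist_comm
        have c2 : T.dist v' c = T.dist c v' := SimpleGraph.dist_comm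
        omega
      by_cases hbxb : bx = b₀
      · have hbyb : by' ≠ b₀ := fun h => hbne (hbxb.trans h.symm)
        exact ⟨by', hmemS₀ by' hbyadj hbyb,
          (main y x by' bx hbyadj hbxadj (Ne.symm hbne) hdxy.symm hby hbx).symm⟩
      · exact ⟨bx, hmemS₀ bx hbxadj hbxb,
          main x y bx by' hbxadj hbyadj hbne hdxy hbx hby⟩
    · exact ⟨c, hcS₀, hdxy⟩
  have hS₀conn : (T.induce S₀).Connected := by
    rw [connected_iff]
    refine ⟨?_, ⟨⟨c, hcS₀⟩⟩⟩
    have key : ∀ u : S₀, (T.induce S₀).Reachable u ⟨c, hcS₀⟩ := by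
      rintro ⟨u, hu⟩
      rcases Set.mem_insert_iff.1 hu with rfl | hu'
      · exact Reachable.refl _
      · have hadj : (T.induce S₀).Adj ⟨u, hu⟩ ⟨c, hcS₀⟩ := by
          exact (hu'.1 : T.Adj c u).symm
        exact hadj.reachable
    intro u v
    exact (key u).trans (key v).symm
  have hub : k ∈ {n | ∃ S : Set V, IsConnResolving T S ∧ S.ncard = n} :=
    ⟨S₀, ⟨hS₀res, hS₀conn⟩, hS₀card⟩
  -- lower bound
  have hlb : ∀ n ∈ {n | ∃ S : Set V, IsConnResolving T S ∧ S.ncard = n}, k ≤ n := by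
    rintro n ⟨S, ⟨hres, hconn⟩, rfl⟩
    set Q : Set V := {b | b ∈ N ∧ ∀ s ∈ S, ¬ (T.dist b s + 1 = T.dist c s)} with hQ
    have hQ1 : Q.ncard ≤ 1 := by
      rw [Set.ncard_le_one (Set.toFinite _)]
      intro b hb b' hb'
      by_contra hne
      obtain ⟨z, hzS, hz⟩ := hres b b' hne
      have h1 := houtside b hb.1 z (hb.2 z hzS)
      have h2 := houtside b' hb'.1 z (hb'.2 z hzS)
      have c1 : T.dist z b = T.dist b z := SimpleGraph.dist_comm
      have c2 : T.dist z b' = T.dist b' z := SimpleGraph.dist_comm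
      omega
    have hQN : Q ⊆ N := fun b hb => hb.1
    set N' : Set V := N \ Q with hN'
    have hN'card : k - 1 ≤ N'.ncard := by
      rw [hN', Set.ncard_diff hQN (Set.toFinite _)]
      omega
    have hN'good : ∀ b ∈ N', ∃ s ∈ S, T.dist b s + 1 = T.dist c s := by
      intro b hb
      by_contra h
      push_neg at h
      exact hb.2 ⟨hb.1, fun s hs => h s hs⟩
    obtain ⟨b1, hb1, b2, hb2, hb12⟩ :=
      (Set.one_lt_ncard (Set.toFinite _)).1 (show 1 < N'.ncard by omega)
    obtain ⟨s1, hs1S, hs1⟩ := hN'good b1 hb1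
    obtain ⟨s2, hs2S, hs2⟩ := hN'good b2 hb2
    have hb1adj : T.Adj c b1 := hb1.1
    have hb2adj : T.Adj c b2 := hb2.1
    have hs2nb1 : ¬ (T.dist b1 s2 + 1 = T.dist c s2) :=
      fun h => hb12 (toward_unique hT hb1adj hb2adj h hs2)
    obtain ⟨q⟩ := hconn.preconnected ⟨s1, hs1S⟩ ⟨s2, hs2S⟩
    obtain ⟨p, hp⟩ := walk_in_set q
    have hcS : c ∈ S := hp c (crossing hT hb1adj p hs1 hs2nb1)
    have hchoice : ∀ b ∈ N', ∃ s, s ∈ S \ {c} ∧ T.dist b s + 1 = T.dist c s := by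
      intro b hb
      obtain ⟨s, hsS, hs⟩ := hN'good b hb
      exact ⟨s, ⟨hsS, by simpa using hbselfne b s hs⟩, hs⟩
    choose f hf1 hf2 using hchoice
    set g : V → V := fun b => if h : b ∈ N' then f b h else b with hg
    have hgmaps : ∀ b ∈ N', g b ∈ S \ {c} := by
      intro b hb
      simp only [hg, dif_pos hb]
      exact hf1 b hb
    have hginj : Set.InjOn g N' := by
      intro b hb b' hb' heq
      simp only [hg, dif_pos hb, dif_pos hb'] at heq
      have h1 := hf2 b hb
      have h2 := hf2 b' hb'
      rw [heq] at h1
      exact toward_unique hT hb.1 hb'.1 h1 h2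
    have hcount := Set.ncard_le_ncard_of_injOn g hgmaps hginj (Set.toFinite _)
    have hSc : (S \ {c}).ncard = S.ncard - 1 :=
      Set.ncard_diff_singleton_of_mem hcS
    have hSpos : S.ncard ≠ 0 := Set.ncard_ne_zero_of_mem hcS (Set.toFinite _)
    omega
  have hcdim : cdim T = k := by
    unfold cdim
    exact le_antisymm (Nat.sInf_le hub) (le_csInf ⟨k, hub⟩ hlb)
  -- counting the end vertices
  have hleaf : ∀ b, T.Adj c b → ∃ ℓ, (T.dist b ℓ + 1 = T.dist c ℓ) ∧ IsEndVertex T ℓ ∧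
      ∀ x, (T.dist b x + 1 = T.dist c x) → T.dist c x ≤ T.dist c ℓ := by
    intro b hb
    have hrc : ¬ (T.dist b c + 1 = T.dist c c) := by
      rw [SimpleGraph.dist_self]; omega
    have hmax := exists_leaf_in_branch hT hb hrc
    obtain ⟨ℓ, h1, h2, h3⟩ := hmax
    refine ⟨ℓ, h1, h2, ?_⟩
    intro x hx
    have := h3 x hx
    have c1 : T.dist c x = T.dist c x := rfl
    exact this
  choose g' hg1 hg2 hg3 using hleaf
  set L : V → V := fun b => if h : T.Adj c b then g' b h else b with hL
  have himg : {v : V | IsEndVertex T v} = L '' N := by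
    apply Set.Subset.antisymm
    · intro ℓ hℓ
      have hℓend : IsEndVertex T ℓ := hℓ
      have hℓc : ℓ ≠ c := by
        intro h
        unfold IsEndVertex at hℓend
        unfold IsMajorVertex at hcmaj
        rw [h] at hℓend
        omega
      obtain ⟨b, hbadj, hbx⟩ := hbr ℓ hℓc
      refine ⟨b, hbadj, ?_⟩
      have hLb : L b = g' b hbadj := by simp only [hL, dif_pos hbadj]
      have e1 := hg3 b hbadj ℓ hbx
      have e2 := leaf_le_of_end hT hdeg2 hbadj hbx hℓend (g' b hbadj) (hg1 b hbadj)
      have heq : g' b hbadj = ℓ :=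
        depth_inj hT hdeg2 hbadj (T.dist c ℓ) _ ℓ (le_antisymm e2 e1) rfl (hg1 b hbadj) hbx
      rw [hLb, heq]
    · rintro v ⟨b, hbN, rfl⟩
      have hbadj : T.Adj c b := hbN
      have : L b = g' b hbadj := by simp only [hL, dif_pos hbadj]
      rw [this]
      exact hg2 b hbadj
  have hLinj : Set.InjOn L N := by
    intro b hb b' hb' heq
    have hbadj : T.Adj c b := hb
    have hbadj' : T.Adj c b' := hb'
    simp only [hL, dif_pos hbadj, dif_pos hbadj'] at heq
    have h1 := hg1 b hbadj
    have h2 := hg1 b' hbadj'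
    rw [heq] at h1
    exact toward_unique hT hbadj hbadj' h1 h2
  have hσ : {v : V | IsEndVertex T v}.ncard = k := by
    rw [himg, Set.ncard_image_of_injOn hLinj]
  rw [hcdim, hσ]
end

section
/- Let T be a finite tree of order at least 2 that is not a path. Let D denote the set of vertices of T consisting of all interior degree-two vertices together with all major vertices of terminal degree zero. Then cdim(T) = |D| + σ(T), where σ(T) is the number of end vertices of T. -/
open SimpleGraph

variable {V : Type*}

/-- The terminal degree of a vertex `v`: the number of terminal vertices of `v`. -/
noncomputable def terminalDeg (G : SimpleGraph V) (v : V) : ℕ :=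
  {ℓ : V | IsTerminalOf G ℓ v}.ncard

/-- An exterior degree-two vertex: a vertex of degree two lying on the path from some
terminal vertex to its major vertex (in a tree, `x` lies on the `ℓ`-`v` path iff
`d(ℓ,x) + d(x,v) = d(ℓ,v)`). -/
def IsExteriorDeg2 (G : SimpleGraph V) (x : V) : Prop :=
  deg G x = 2 ∧ ∃ v ℓ : V, IsTerminalOf G ℓ v ∧ G.dist ℓ x + G.dist x v = G.dist ℓ v

/-- An interior degree-two vertex: a degree-two vertex that is not exterior. -/
def IsInteriorDeg2 (G : SimpleGraph V) (x : V) : Prop :=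
  deg G x = 2 ∧ ¬ IsExteriorDeg2 G x


namespace TreeAux

variable {V : Type*} {T : SimpleGraph V}

/-- Betweenness via distances. -/
def Btw (T : SimpleGraph V) (a b c : V) : Prop :=
  T.dist a b + T.dist b c = T.dist a c

lemma dist_pos (hT : T.IsTree) {a b : V} (h : a ≠ b) : 0 < T.dist a b :=
  hT.isConnected.pos_dist_of_ne h

lemma eq_of_dist_eq_zero (hT : T.IsTree) {a b : V} (h : T.dist a b = 0) : a = b :=
  (hT.isConnected.dist_eq_zero_iff.mp h)

lemma dist_adj (hT : T.IsTree) {a b : V} (h : T.Adj a b) : T.dist a b = 1 :=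
  dist_eq_one_iff_adj.mpr h

/-- In a tree, every path is a geodesic. -/
lemma path_length_eq_dist (hT : T.IsTree) {u v : V} {p : T.Walk u v} (hp : p.IsPath) :
    p.length = T.dist u v := by
  obtain ⟨q, hq, hlen⟩ := hT.isConnected.exists_path_of_dist u v
  have h : (⟨p, hp⟩ : T.Path u v) = ⟨q, hq⟩ := hT.IsAcyclic.path_unique _ _
  rw [Subtype.ext_iff] at h
  rw [show p = q from h, hlen]

lemma adj_dist (hT : T.IsTree) {a c : V} (h : T.Adj a c) (b : V) :
    T.dist a b = T.dist c b + 1 ∨ T.dist c b = T.dist a b + 1 := by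
  classical
  obtain ⟨p, hp, hlen⟩ := hT.isConnected.exists_path_of_dist c b
  by_cases ha : a ∈ p.support
  · right
    have h1 : (p.takeUntil a ha).length = T.dist c a :=
      path_length_eq_dist hT (hp.takeUntil ha)
    have h2 : (p.dropUntil a ha).length = T.dist a b :=
      path_length_eq_dist hT (hp.dropUntil ha)
    have h3 : (p.takeUntil a ha).length + (p.dropUntil a ha).length = p.length := by
      rw [← Walk.length_append, Walk.take_spec]
    have hca : T.dist c a = 1 := dist_adj hT h.symm
    omega
  · left
    have hp' : (Walk.cons h p).IsPath := hp.cons ha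
    have h4 := path_length_eq_dist hT hp'
    rw [Walk.length_cons] at h4
    omega

lemma adj_dist_ne (hT : T.IsTree) {a c : V} (h : T.Adj a c) (b : V) :
    T.dist a b ≠ T.dist c b := by
  rcases adj_dist hT h b with h' | h' <;> omega

lemma gate_exists (hT : T.IsTree) {x y : V} (hxy : x ≠ y) :
    ∃ g, T.Adj x g ∧ T.dist g y + 1 = T.dist x y := by
  obtain ⟨p, hp, hlen⟩ := hT.isConnected.exists_path_of_dist x y
  cases p with
  | nil => exact absurd rfl hxy
  | @cons _ c _ h q =>
    refine ⟨c, h, ?_⟩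
    have h1 : q.length = T.dist c y := path_length_eq_dist hT hp.of_cons
    rw [Walk.length_cons] at hlen
    omega

lemma gate_unique (hT : T.IsTree) {x y g g' : V} (hxy : x ≠ y)
    (h1 : T.Adj x g) (d1 : T.dist g y + 1 = T.dist x y)
    (h2 : T.Adj x g') (d2 : T.dist g' y + 1 = T.dist x y) : g = g' := by
  classical
  obtain ⟨p, hp, hlp⟩ := hT.isConnected.exists_path_of_dist g y
  obtain ⟨p', hp', hlp'⟩ := hT.isConnected.exists_path_of_dist g' y
  have hxp : ∀ {gg : V} {pp : T.Walk gg y}, pp.IsPath → pp.length = T.dist gg y →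
      T.Adj x gg → T.dist gg y + 1 = T.dist x y → x ∉ pp.support := by
    intro gg pp hpp hlpp hadj hgate hx
    have hd : (pp.dropUntil x hx).length = T.dist x y :=
      path_length_eq_dist hT (hpp.dropUntil hx)
    have ht : (pp.takeUntil x hx).length = T.dist gg x :=
      path_length_eq_dist hT (hpp.takeUntil hx)
    have h3 : (pp.takeUntil x hx).length + (pp.dropUntil x hx).length = pp.length := by
      rw [← Walk.length_append, Walk.take_spec]
    have hgx : 0 < T.dist gg x := dist_pos hT (fun h => hadj.ne h.symm)
    omega
  have hq1 : (Walk.cons h1 p).IsPath := hp.cons (hxp hp hlp h1 d1)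
  have hq2 : (Walk.cons h2 p').IsPath := hp'.cons (hxp hp' hlp' h2 d2)
  have he : (⟨Walk.cons h1 p, hq1⟩ : T.Path x y) = ⟨Walk.cons h2 p', hq2⟩ :=
    hT.IsAcyclic.path_unique _ _
  rw [Subtype.ext_iff] at he
  have hs := congrArg Walk.support he
  rw [Walk.support_cons, Walk.support_cons, p.support_eq_cons, p'.support_eq_cons] at hs
  have h5 : g :: p.support.tail = g' :: p'.support.tail :=
    List.cons_injective.eq_iff.mp hs
  exact ((List.cons.injEq _ _ _ _).mp h5).1


lemma btw_symm {a b c : V} (h : Btw T a b c) : Btw T c b a := by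
  have h1 : T.dist c b = T.dist b c := SimpleGraph.dist_comm
  have h2 : T.dist b a = T.dist a b := SimpleGraph.dist_comm
  have h3 : T.dist c a = T.dist a c := SimpleGraph.dist_comm
  unfold Btw at *
  omega

lemma btw_left (a c : V) : Btw T a a c := by
  unfold Btw; simp

lemma btw_right (a c : V) : Btw T a c c := by
  unfold Btw; simp

lemma btw_of_mem_support (hT : T.IsTree) {u v t : V} {p : T.Walk u v} (hp : p.IsPath)
    (ht : t ∈ p.support) : Btw T u t v := by
  classical
  have h1 : (p.takeUntil t ht).length = T.dist u t :=
    path_length_eq_dist hT (hp.takeUntil ht)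
  have h2 : (p.dropUntil t ht).length = T.dist t v :=
    path_length_eq_dist hT (hp.dropUntil ht)
  have h3 : (p.takeUntil t ht).length + (p.dropUntil t ht).length = p.length := by
    rw [← Walk.length_append, Walk.take_spec]
  have h4 : p.length = T.dist u v := path_length_eq_dist hT hp
  unfold Btw; omega

/-- `gate_of_btw`: a gate towards `t` is a gate towards anything beyond `t`. -/
lemma gate_of_btw (hT : T.IsTree) {m t x g : V} (hbtw : Btw T m t x) (htm : t ≠ m)
    (hg : T.Adj m g) (hd : T.dist g t + 1 = T.dist m t) :
    T.dist g x + 1 = T.dist m x := by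
  have tri1 : T.dist g x ≤ T.dist g t + T.dist t x := hT.isConnected.dist_triangle
  have tri2 : T.dist m x ≤ T.dist m g + T.dist g x := hT.isConnected.dist_triangle
  have hmg : T.dist m g = 1 := dist_adj hT hg
  unfold Btw at hbtw
  omega

lemma gate_ne_of_btw (hT : T.IsTree) {a m b ga gb : V} (h : Btw T a m b)
    (hma : m ≠ a) (hmb : m ≠ b)
    (hga : T.Adj m ga) (da : T.dist ga a + 1 = T.dist m a)
    (hgb : T.Adj m gb) (db : T.dist gb b + 1 = T.dist m b) : ga ≠ gb := by
  intro he
  subst he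
  have tri : T.dist a b ≤ T.dist a ga + T.dist ga b := hT.isConnected.dist_triangle
  have h1 : T.dist a ga = T.dist ga a := SimpleGraph.dist_comm
  have h2 : T.dist m a = T.dist a m := SimpleGraph.dist_comm
  unfold Btw at h
  have hpa : 0 < T.dist m a := dist_pos hT (fun h => hma h)
  have hpb : 0 < T.dist m b := dist_pos hT (fun h => hmb h)
  omega

/-- Vertices in different branches at `m` are separated by `m`. -/
lemma btw_of_gate_ne (hT : T.IsTree) {m g1 g2 x y : V}
    (h1 : T.Adj m g1) (h2 : T.Adj m g2) (hne : g1 ≠ g2)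
    (dx : T.dist g1 x + 1 = T.dist m x) (dy : T.dist g2 y + 1 = T.dist m y) :
    Btw T x m y := by
  classical
  obtain ⟨p, hp, hlp⟩ := hT.isConnected.exists_path_of_dist x m
  obtain ⟨q, hq, hlq⟩ := hT.isConnected.exists_path_of_dist m y
  have hpath : (p.append q).IsPath := by
    rw [Walk.isPath_def, Walk.support_append, List.nodup_append]
    refine ⟨hp.support_nodup, hq.support_nodup.tail, ?_⟩
    intro t htp s htq hts
    subst hts
    have htq' : t ∈ q.support := List.mem_of_mem_tail htq
    have htm : t ≠ m := by
      intro he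
      subst he
      have := hq.support_nodup
      rw [q.support_eq_cons] at this
      exact (List.nodup_cons.mp this).1 htq
    have hb1 : Btw T m t x := btw_symm (btw_of_mem_support hT hp htp)
    have hb2 : Btw T m t y := btw_of_mem_support hT hq htq'
    obtain ⟨g, hg, hgd⟩ := gate_exists hT (Ne.symm htm)
    have hmx : m ≠ x := by
      intro he; subst he
      simp [SimpleGraph.dist_self] at dx
    have hmy : m ≠ y := by
      intro he; subst he
      simp [SimpleGraph.dist_self] at dy
    have e1 : T.dist g x + 1 = T.dist m x := gate_of_btw hT hb1 htm hg hgd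
    have e2 : T.dist g y + 1 = T.dist m y := gate_of_btw hT hb2 htm hg hgd
    have u1 : g = g1 := gate_unique hT hmx hg e1 h1 dx
    have u2 : g = g2 := gate_unique hT hmy hg e2 h2 dy
    exact hne (u1 ▸ u2)
  have hlen := path_length_eq_dist hT hpath
  rw [Walk.length_append] at hlen
  unfold Btw
  omega

/-- Pure-metric transitivity: from `Btw a b c` and `Btw a c d` infer `Btw b c d`
and `Btw a b d`. -/
lemma btw_trans (hT : T.IsTree) {a b c d : V} (h1 : Btw T a b c) (h2 : Btw T a c d) :
    Btw T b c d ∧ Btw T a b d := by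
  have tri1 : T.dist b d ≤ T.dist b c + T.dist c d := hT.isConnected.dist_triangle
  have tri2 : T.dist a d ≤ T.dist a b + T.dist b d := hT.isConnected.dist_triangle
  unfold Btw at *
  omega

lemma Set.Finite.exists_maximal_wrt {α β : Type*} [PartialOrder β] (f : α → β) (s : Set α)
    (h : s.Finite) (hs : s.Nonempty) : ∃ a ∈ s, ∀ a' ∈ s, f a ≤ f a' → f a = f a' := by
  obtain ⟨a, ha, hm⟩ := Set.Finite.exists_maximalFor f s h hs
  exact ⟨a, ha, fun a' ha' hle => le_antisymm hle (hm ha' hle)⟩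

lemma Set.Finite.exists_minimal_wrt {α β : Type*} [PartialOrder β] (f : α → β) (s : Set α)
    (h : s.Finite) (hs : s.Nonempty) : ∃ a ∈ s, ∀ a' ∈ s, f a' ≤ f a → f a' = f a := by
  obtain ⟨a, ha, hm⟩ := Set.Finite.exists_minimalFor f s h hs
  exact ⟨a, ha, fun a' ha' hle => le_antisymm hle (hm ha' hle)⟩

/-- Median of three vertices. -/
lemma median [Finite V] (hT : T.IsTree) (a b c : V) :
    ∃ m, Btw T a m b ∧ Btw T a m c ∧ Btw T b m c := by
  have hfin : ({m | Btw T a m b ∧ Btw T a m c} : Set V).Finite := Set.toFinite _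
  obtain ⟨m, hm, hmax⟩ := Set.Finite.exists_maximal_wrt (fun x => T.dist a x) _ hfin
    ⟨a, btw_left a b, btw_left a c⟩
  obtain ⟨hab, hac⟩ := hm
  by_cases hmb : m = b
  · subst hmb; exact ⟨m, hab, hac, btw_left _ _⟩
  by_cases hmc : m = c
  · subst hmc; exact ⟨m, hab, hac, btw_right _ _⟩
  obtain ⟨gb, hgb, dgb⟩ := gate_exists hT hmb
  obtain ⟨gc, hgc, dgc⟩ := gate_exists hT hmc
  by_cases hg : gb = gc
  · exfalso
    subst hg
    have tri1 : T.dist a b ≤ T.dist a gb + T.dist gb b := hT.isConnected.dist_triangle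
    have tri2 : T.dist a gb ≤ T.dist a m + T.dist m gb := hT.isConnected.dist_triangle
    have tri3 : T.dist a c ≤ T.dist a gb + T.dist gb c := hT.isConnected.dist_triangle
    have hmgb : T.dist m gb = 1 := dist_adj hT hgb
    have hag : T.dist a gb = T.dist a m + 1 := by
      unfold Btw at hab; omega
    have hgbb : Btw T a gb b := by
      unfold Btw at *; omega
    have hgbc : Btw T a gb c := by
      unfold Btw at *; omega
    have := hmax gb ⟨hgbb, hgbc⟩ (by omega)
    omega
  · exact ⟨m, hab, hac, btw_of_gate_ne hT hgb hgc hg dgb dgc⟩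


/-- Points strictly between `a` and `b` are determined by their distance to `a`. -/
lemma btw_inj [Finite V] (hT : T.IsTree) {a b x y : V} (h1 : Btw T a x b) (h2 : Btw T a y b)
    (hd : T.dist a x = T.dist a y) : x = y := by
  by_contra hxy
  obtain ⟨m, hxmy, hxma, hyma⟩ := median hT x y a
  have cxm : T.dist x m = T.dist m x := SimpleGraph.dist_comm
  have cym : T.dist y m = T.dist m y := SimpleGraph.dist_comm
  have cax : T.dist x a = T.dist a x := SimpleGraph.dist_comm
  have cay : T.dist y a = T.dist a y := SimpleGraph.dist_comm
  have hmm : T.dist m x = T.dist m y := by unfold Btw at hxma hyma; omega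
  have hmx : m ≠ x := by
    intro he; subst he
    have : T.dist m y = 0 := by rw [← hmm, T.dist_self]
    exact hxy (eq_of_dist_eq_zero hT this)
  have hmy : m ≠ y := by
    intro he; subst he
    have : T.dist m x = 0 := by rw [hmm, T.dist_self]
    exact (hxy (eq_of_dist_eq_zero hT this).symm)
  have hamx : Btw T a m x := btw_symm hxma
  have hamy : Btw T a m y := btw_symm hyma
  have hmxb : Btw T m x b := (btw_trans hT hamx h1).1
  have hmyb : Btw T m y b := (btw_trans hT hamy h2).1
  have hmb : m ≠ b := by
    intro he; subst he
    have h0 : 0 < T.dist m x := dist_pos hT hmx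
    unfold Btw at hmxb
    have : T.dist m m = 0 := SimpleGraph.dist_self
    omega
  obtain ⟨gx, hgx, dgx⟩ := gate_exists hT hmx
  obtain ⟨gy, hgy, dgy⟩ := gate_exists hT hmy
  have hne : gx ≠ gy := gate_ne_of_btw hT hxmy hmx hmy hgx dgx hgy dgy
  have e1 : T.dist gx b + 1 = T.dist m b := gate_of_btw hT hmxb (Ne.symm hmx) hgx dgx
  have e2 : T.dist gy b + 1 = T.dist m b := gate_of_btw hT hmyb (Ne.symm hmy) hgy dgy
  exact hne (gate_unique hT hmb hgx e1 hgy e2)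

/-- Every walk from `a` to `b` passes through every vertex between them. -/
lemma walk_passes (hT : T.IsTree) {a b t : V} (hbtw : Btw T a t b) (p : T.Walk a b) :
    t ∈ p.support := by
  induction p with
  | nil =>
    rename_i u
    have c1 : T.dist t u = T.dist u t := SimpleGraph.dist_comm
    have c2 : T.dist u u = 0 := SimpleGraph.dist_self
    have hta : T.dist u t = 0 := by unfold Btw at hbtw; omega
    rw [show u = t from eq_of_dist_eq_zero hT hta]
    simp
  | @cons a c b h q ih =>
    by_cases hta : t = a
    · simp [hta]
    by_cases htb : t = b
    · subst htb; simp [Walk.support_cons, q.end_mem_support]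
    by_cases htc : t = c
    · subst htc; simp [Walk.support_cons, q.start_mem_support]
    obtain ⟨ga, hga, dga⟩ := gate_exists hT hta
    obtain ⟨gb, hgb, dgb⟩ := gate_exists hT htb
    obtain ⟨gc, hgc, dgc⟩ := gate_exists hT htc
    have hgagb : ga ≠ gb := gate_ne_of_btw hT hbtw hta htb hga dga hgb dgb
    have hgcga : gc = ga := by
      by_contra hcc
      have := btw_of_gate_ne hT hgc hga hcc dgc dga
      unfold Btw at this
      have h1 : T.dist c a = 1 := dist_adj hT h.symm
      have h2 : 0 < T.dist c t := by
        have cc : T.dist c t = T.dist t c := SimpleGraph.dist_comm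
        have := dist_pos hT htc
        omega
      have h3 : 0 < T.dist t a := by
        have := dist_pos hT hta
        omega
      omega
    have hbtw' : Btw T c t b := btw_of_gate_ne hT hgc hgb (hgcga ▸ hgagb) dgc dgb
    simp [Walk.support_cons, ih hbtw']

lemma induce_reachable {S : Set V} : ∀ {a b : V} (p : T.Walk a b) (ha : a ∈ S) (hb : b ∈ S),
    (∀ t ∈ p.support, t ∈ S) → (T.induce S).Reachable ⟨a, ha⟩ ⟨b, hb⟩ := by
  intro a b p
  induction p with
  | nil => intro ha _ _; exact Reachable.refl _
  | @cons a c b h q ih =>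
    intro ha hb hsup
    have hc : c ∈ S := hsup c (by simp [Walk.support_cons])
    have hadj : (T.induce S).Adj ⟨a, ha⟩ ⟨c, hc⟩ := h
    exact hadj.reachable.trans (ih hc hb (fun t ht => hsup t (by simp [Walk.support_cons]; exact Or.inr ht)))

lemma induce_connected_of_walks {S : Set V} (hne : S.Nonempty)
    (h : ∀ a ∈ S, ∀ b ∈ S, ∃ p : T.Walk a b, ∀ t ∈ p.support, t ∈ S) :
    (T.induce S).Connected := by
  rw [connected_iff]
  refine ⟨?_, ⟨⟨hne.choose, hne.choose_spec⟩⟩⟩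
  rintro ⟨a, ha⟩ ⟨b, hb⟩
  obtain ⟨p, hsup⟩ := h a ha b hb
  exact induce_reachable p ha hb hsup

/-- A connected induced subgraph of a tree is closed under betweenness. -/
lemma mem_of_btw_of_induce_connected (hT : T.IsTree) {S : Set V}
    (hc : (T.induce S).Connected) {a b t : V} (ha : a ∈ S) (hb : b ∈ S)
    (hbtw : Btw T a t b) : t ∈ S := by
  obtain ⟨w⟩ := hc.preconnected ⟨a, ha⟩ ⟨b, hb⟩
  let f : T.induce S →g T := ⟨Subtype.val, fun h => h⟩
  have hmem := walk_passes hT hbtw (w.map f)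
  rw [Walk.support_map] at hmem
  obtain ⟨⟨t', ht'⟩, _, rfl⟩ := List.mem_map.mp hmem
  exact ht'

/-- Every branch contains a leaf. -/
lemma exists_leaf_in_branch [Finite V] (hT : T.IsTree) {c g : V} (hg : T.Adj c g) :
    ∃ ℓ, (T.neighborSet ℓ).ncard = 1 ∧ T.dist g ℓ + 1 = T.dist c ℓ := by
  have hfin : ({x | T.dist g x + 1 = T.dist c x} : Set V).Finite := Set.toFinite _
  have hgmem : g ∈ {x | T.dist g x + 1 = T.dist c x} := by
    simp [SimpleGraph.dist_self, dist_adj hT hg]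
  obtain ⟨ℓ, hℓ, hmax⟩ := Set.Finite.exists_maximal_wrt (fun x => T.dist c x) _ hfin ⟨g, hgmem⟩
  simp only [Set.mem_setOf_eq] at hℓ
  have hcl : ℓ ≠ c := by
    intro he; subst he
    simp [SimpleGraph.dist_self] at hℓ
  obtain ⟨w, hw, dw⟩ := gate_exists hT hcl
  refine ⟨ℓ, ?_, hℓ⟩
  have hset : T.neighborSet ℓ = {w} := by
    ext y
    simp only [mem_neighborSet, Set.mem_singleton_iff]
    constructor
    · intro hy
      have ccl : T.dist ℓ c = T.dist c ℓ := SimpleGraph.dist_comm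
      rcases adj_dist hT hy c with hcase | hcase
      · -- dist ℓ c = dist y c + 1, so y is a gate of ℓ towards c
        exact gate_unique hT hcl hy (by omega) hw dw
      · -- y is farther : contradiction with maximality
        exfalso
        have ccy : T.dist y c = T.dist c y := SimpleGraph.dist_comm
        have hly : T.dist ℓ y = 1 := dist_adj hT hy
        have tri1 : T.dist g y ≤ T.dist g ℓ + T.dist ℓ y := hT.isConnected.dist_triangle
        have tri2 : T.dist c y ≤ T.dist c g + T.dist g y := hT.isConnected.dist_triangle
        have hcg : T.dist c g = 1 := dist_adj hT hg
        have hybr : y ∈ {x | T.dist g x + 1 = T.dist c x} := by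
          simp only [Set.mem_setOf_eq]
          omega
        have := hmax y hybr (by omega)
        omega
    · intro hy; subst hy; exact hw
  rw [hset, Set.ncard_singleton]


section Degrees

variable [Fintype V]

lemma exists_adj (hT : T.IsTree) (hn : 2 ≤ Fintype.card V) (v : V) :
    ∃ w, T.Adj v w := by
  obtain ⟨u, hu⟩ := Fintype.exists_ne_of_one_lt_card (by omega) v
  obtain ⟨g, hg, _⟩ := gate_exists hT (Ne.symm hu)
  exact ⟨g, hg⟩

lemma two_le_deg {v g1 g2 : V} (h1 : T.Adj v g1) (h2 : T.Adj v g2) (hne : g1 ≠ g2) :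
    2 ≤ (T.neighborSet v).ncard := by
  rw [show (2:ℕ) = 1 + 1 by rfl]
  exact Set.one_lt_ncard_iff (Set.toFinite _) |>.mpr ⟨g1, g2, h1, h2, hne⟩

lemma three_le_deg {v g1 g2 g3 : V} (h1 : T.Adj v g1) (h2 : T.Adj v g2) (h3 : T.Adj v g3)
    (h12 : g1 ≠ g2) (h13 : g1 ≠ g3) (h23 : g2 ≠ g3) :
    3 ≤ (T.neighborSet v).ncard := by
  rw [show (3:ℕ) = 2 + 1 by rfl]
  exact Set.two_lt_ncard_iff (Set.toFinite _) |>.mpr ⟨g1, g2, g3, h1, h2, h3, h12, h13, h23⟩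

lemma exists_third {v : V} (h : 3 ≤ (T.neighborSet v).ncard) (g1 g2 : V) :
    ∃ g3, T.Adj v g3 ∧ g3 ≠ g1 ∧ g3 ≠ g2 := by
  by_contra hc
  push_neg at hc
  have hsub : T.neighborSet v ⊆ {g1, g2} := by
    intro x hx
    rcases Classical.em (x = g1) with h' | h'
    · exact Or.inl h'
    rcases Classical.em (x = g2) with h'' | h''
    · exact Or.inr h''
    · exact absurd (hc x hx h') (by simp [h''])
  have := Set.ncard_le_ncard hsub (Set.toFinite _)
  have h2 : ({g1, g2} : Set V).ncard ≤ 2 := by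
    apply le_trans (Set.ncard_insert_le _ _)
    simp
  omega

lemma exists_second {v : V} (h : 2 ≤ (T.neighborSet v).ncard) (g1 : V) :
    ∃ g2, T.Adj v g2 ∧ g2 ≠ g1 := by
  by_contra hc
  push_neg at hc
  have hsub : T.neighborSet v ⊆ {g1} := fun x hx => hc x hx
  have := Set.ncard_le_ncard hsub (Set.toFinite _)
  rw [Set.ncard_singleton] at this
  omega

lemma deg_one_unique {v a b : V} (h : (T.neighborSet v).ncard = 1)
    (h1 : T.Adj v a) (h2 : T.Adj v b) : a = b := by
  obtain ⟨c, hc⟩ := Set.ncard_eq_one.mp h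
  have ha : a ∈ T.neighborSet v := h1
  have hb : b ∈ T.neighborSet v := h2
  rw [hc] at ha hb
  simp at ha hb
  rw [ha, hb]

lemma exists_leaf (hT : T.IsTree) (hn : 2 ≤ Fintype.card V) :
    ∃ ℓ, (T.neighborSet ℓ).ncard = 1 := by
  have : Nonempty V := Fintype.card_pos_iff.mp (by omega)
  obtain ⟨g, hg⟩ := exists_adj hT hn (Classical.arbitrary V)
  obtain ⟨ℓ, hℓ, _⟩ := exists_leaf_in_branch hT hg
  exact ⟨ℓ, hℓ⟩

lemma iso_path_of_no_major (hT : T.IsTree) (hn : 2 ≤ Fintype.card V)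
    (hd : ∀ v, (T.neighborSet v).ncard ≤ 2) :
    Nonempty (T ≃g pathGraph (Fintype.card V)) := by
  obtain ⟨r, hr⟩ := exists_leaf hT hn
  have hinj : ∀ k, ∀ x y : V, T.dist r x = k → T.dist r y = k → x = y := by
    intro k
    induction k with
    | zero =>
      intro x y hx hy
      have h1 : r = x := eq_of_dist_eq_zero hT hx
      have h2 : r = y := eq_of_dist_eq_zero hT hy
      rw [← h1, ← h2]
    | succ k ih =>
      intro x y hx hy
      by_contra hxy
      have hxr : x ≠ r := by
        intro he; subst he
        simp [SimpleGraph.dist_self] at hx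
      have hyr : y ≠ r := by
        intro he; subst he
        simp [SimpleGraph.dist_self] at hy
      obtain ⟨gx, hgx, dgx⟩ := gate_exists hT hxr
      obtain ⟨gy, hgy, dgy⟩ := gate_exists hT hyr
      have crx : T.dist x r = T.dist r x := SimpleGraph.dist_comm
      have cry : T.dist y r = T.dist r y := SimpleGraph.dist_comm
      have cgx : T.dist gx r = T.dist r gx := SimpleGraph.dist_comm
      have cgy : T.dist gy r = T.dist r gy := SimpleGraph.dist_comm
      have hgg : gx = gy := ih gx gy (by omega) (by omega)
      subst hgg
      -- gx has distinct neighbors x and y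
      cases Nat.eq_zero_or_pos k with
      | inl h0 =>
        subst h0
        have : r = gx := eq_of_dist_eq_zero hT (by omega)
        subst this
        exact hxy (deg_one_unique hr hgx.symm hgy.symm)
      | inr hk =>
        have hgxr : gx ≠ r := by
          intro he
          have h0 : T.dist gx r = 0 := by rw [he, SimpleGraph.dist_self]
          omega
        obtain ⟨gu, hgu, dgu⟩ := gate_exists hT hgxr
        have cgu : T.dist gu r = T.dist r gu := SimpleGraph.dist_comm
        have hguk : T.dist r gu + 1 = k := by omega
        have hgux : gu ≠ x := by
          intro he; rw [he] at hguk; omega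
        have hguy : gu ≠ y := by
          intro he; rw [he] at hguk; omega
        have h3 := three_le_deg hgx.symm hgy.symm hgu hxy (Ne.symm hgux) (Ne.symm hguy)
        have := hd gx
        omega
  have hlt : ∀ v : V, T.dist r v < Fintype.card V := by
    intro v
    obtain ⟨p, hp, hlen⟩ := hT.isConnected.exists_path_of_dist r v
    rw [← hlen]
    exact hp.length_lt
  let f : V → Fin (Fintype.card V) := fun v => ⟨T.dist r v, hlt v⟩
  have hfinj : Function.Injective f := by
    intro x y h
    simp only [f, Fin.mk.injEq] at h
    exact hinj _ x y h rfl
  have hbij : Function.Bijective f :=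
    (Fintype.bijective_iff_injective_and_card f).mpr ⟨hfinj, by simp⟩
  refine ⟨⟨Equiv.ofBijective f hbij, ?_⟩⟩
  intro a b
  show (pathGraph (Fintype.card V)).Adj (f a) (f b) ↔ T.Adj a b
  rw [pathGraph_adj]
  simp only [f]
  constructor
  · rintro (h | h)
    · -- dist r a + 1 = dist r b
      have hbr : b ≠ r := by
        intro he
        rw [he, SimpleGraph.dist_self] at h
        omega
      obtain ⟨gb, hgb, dgb⟩ := gate_exists hT hbr
      have cgb : T.dist gb r = T.dist r gb := SimpleGraph.dist_comm
      have cbr : T.dist b r = T.dist r b := SimpleGraph.dist_comm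
      have : gb = a := hinj (T.dist r a) gb a (by omega) rfl
      rw [← this]
      exact hgb.symm
    · have har : a ≠ r := by
        intro he
        rw [he, SimpleGraph.dist_self] at h
        omega
      obtain ⟨ga, hga, dga⟩ := gate_exists hT har
      have cga : T.dist ga r = T.dist r ga := SimpleGraph.dist_comm
      have car : T.dist a r = T.dist r a := SimpleGraph.dist_comm
      have : ga = b := hinj (T.dist r b) ga b (by omega) rfl
      rw [← this]
      exact hga
  · intro h
    rcases adj_dist hT h r with h' | h' <;>
      [right; left] <;>
      · have c1 : T.dist a r = T.dist r a := SimpleGraph.dist_comm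
        have c2 : T.dist b r = T.dist r b := SimpleGraph.dist_comm
        omega

lemma exists_major (hT : T.IsTree) (hn : 2 ≤ Fintype.card V)
    (hnp : ¬ Nonempty (T ≃g pathGraph (Fintype.card V))) :
    ∃ v, 3 ≤ (T.neighborSet v).ncard := by
  by_contra h
  push_neg at h
  exact hnp (iso_path_of_no_major hT hn (fun v => by have := h v; omega))

end Degrees

section Structure

variable [Fintype V]

lemma terminal_unique {ℓ v v' : V} (h : IsTerminalOf T ℓ v) (h' : IsTerminalOf T ℓ v') :
    v = v' := by
  by_contra hne
  have h1 := h.2.2 v' h'.2.1 (Ne.symm hne)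
  have h2 := h'.2.2 v h.2.1 hne
  omega

lemma terminal_ne {ℓ v : V} (h : IsTerminalOf T ℓ v) : ℓ ≠ v := by
  intro he
  have h1 : (T.neighborSet ℓ).ncard = 1 := h.1
  have h2 : 3 ≤ (T.neighborSet v).ncard := h.2.1
  rw [he] at h1
  omega

lemma exists_terminal (hT : T.IsTree) (hM : ∃ v, IsMajorVertex T v) {ℓ : V}
    (hℓ : IsEndVertex T ℓ) : ∃ v, IsTerminalOf T ℓ v := by
  have hfin : ({v | IsMajorVertex T v} : Set V).Finite := Set.toFinite _
  obtain ⟨v, hv, hmin⟩ := Set.Finite.exists_minimal_wrt (fun w => T.dist ℓ w) _ hfin hM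
  simp only [Set.mem_setOf_eq] at hv
  refine ⟨v, hℓ, hv, ?_⟩
  intro w hw hwv
  have hle : ¬ T.dist ℓ w < T.dist ℓ v := by
    intro hlt
    have := hmin w hw (le_of_lt hlt)
    omega
  by_contra hnlt
  have heq : T.dist ℓ v = T.dist ℓ w := by omega
  -- median argument
  obtain ⟨m, hmvw, hmvl, hmwl⟩ := median hT v w ℓ
  -- Btw v m w, Btw v m ℓ, Btw w m ℓ
  have hml : Btw T ℓ m v := btw_symm hmvl
  have hml' : Btw T ℓ m w := btw_symm hmwl
  have hvw : 0 < T.dist v w := dist_pos hT (fun hh => hwv hh.symm)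
  have hmv : m ≠ v := by
    intro he
    have h1 : T.dist ℓ m = T.dist ℓ v := by rw [he]
    have h2 : T.dist v w = T.dist m w := by rw [he]
    unfold Btw at hml'
    omega
  have hmw : m ≠ w := by
    intro he
    have h1 : T.dist ℓ m = T.dist ℓ w := by rw [he]
    have c1 : T.dist v w = T.dist w v := SimpleGraph.dist_comm
    have h2 : T.dist w v = T.dist m v := by rw [he]
    unfold Btw at hml
    omega
  -- m is closer to ℓ than v
  have hmlt : T.dist ℓ m < T.dist ℓ v := by
    unfold Btw at hml
    have := dist_pos hT hmv
    omega
  have hmnotmajor : ¬ IsMajorVertex T m := by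
    intro hmm
    have := hmin m hmm (le_of_lt hmlt)
    omega
  obtain ⟨gv, hgv, dgv⟩ := gate_exists hT hmv
  obtain ⟨gw, hgw, dgw⟩ := gate_exists hT hmw
  have hgvw : gv ≠ gw := gate_ne_of_btw hT hmvw hmv hmw hgv dgv hgw dgw
  by_cases hmℓ : m = ℓ
  · subst hmℓ
    have := two_le_deg hgv hgw hgvw
    have h1 : (T.neighborSet m).ncard = 1 := hℓ
    omega
  · obtain ⟨gl, hgl, dgl⟩ := gate_exists hT hmℓ
    have hglv : gv ≠ gl := gate_ne_of_btw hT (btw_symm hml) hmv hmℓ hgv dgv hgl dgl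
    have hglw : gw ≠ gl := gate_ne_of_btw hT (btw_symm hml') hmw hmℓ hgw dgw hgl dgl
    exact hmnotmajor (three_le_deg hgv hgw hgl hgvw hglv hglw)

open Classical in
/-- The unique nearest major vertex of an end vertex. -/
noncomputable def vmaj (T : SimpleGraph V) (ℓ : V) : V :=
  if h : ∃ v, IsTerminalOf T ℓ v then h.choose else ℓ

lemma vmaj_eq {ℓ v : V} (h : IsTerminalOf T ℓ v) : vmaj T ℓ = v := by
  unfold vmaj
  rw [dif_pos (⟨v, h⟩ : ∃ v, IsTerminalOf T ℓ v)]
  exact terminal_unique (⟨v, h⟩ : ∃ v, IsTerminalOf T ℓ v).choose_spec h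

lemma vmaj_spec (hT : T.IsTree) (hM : ∃ v, IsMajorVertex T v) {ℓ : V}
    (hℓ : IsEndVertex T ℓ) : IsTerminalOf T ℓ (vmaj T ℓ) := by
  obtain ⟨v, hv⟩ := exists_terminal hT hM hℓ
  rw [vmaj_eq hv]
  exact hv

/-- The leg of an end vertex: the half-open segment from `ℓ` to its major vertex. -/
def Leg (T : SimpleGraph V) (ℓ : V) : Set V :=
  {x | Btw T ℓ x (vmaj T ℓ) ∧ x ≠ vmaj T ℓ}

lemma mem_leg_self (hT : T.IsTree) (hM : ∃ v, IsMajorVertex T v) {ℓ : V}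
    (hℓ : IsEndVertex T ℓ) : ℓ ∈ Leg T ℓ :=
  ⟨btw_left _ _, terminal_ne (vmaj_spec hT hM hℓ)⟩

lemma leg_not_major (hT : T.IsTree) (hM : ∃ v, IsMajorVertex T v) {ℓ x : V}
    (hℓ : IsEndVertex T ℓ) (hx : x ∈ Leg T ℓ) : ¬ IsMajorVertex T x := by
  intro hmaj
  obtain ⟨hbtw, hne⟩ := hx
  have hterm := vmaj_spec hT hM hℓ
  have := hterm.2.2 x hmaj hne
  unfold Btw at hbtw
  omega

/-- Everything outside the leg of `ℓ` is beyond its major vertex. -/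
lemma leg_separates (hT : T.IsTree) (hM : ∃ v, IsMajorVertex T v) {ℓ : V}
    (hℓ : IsEndVertex T ℓ) {y : V} (hy : y ∉ Leg T ℓ) :
    Btw T ℓ (vmaj T ℓ) y := by
  set v := vmaj T ℓ with hv
  obtain ⟨m, hℓmv, hℓmy, hvmy⟩ := median hT ℓ v y
  by_cases hmv : m = v
  · subst hmv; exact hℓmy
  have hmleg : m ∈ Leg T ℓ := ⟨hℓmv, hmv⟩
  by_cases hmy : m = y
  · exact absurd (hmy ▸ hmleg) hy
  by_cases hmℓ : m = ℓ
  · exfalso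
    subst hmℓ
    obtain ⟨gv, hgv, dgv⟩ := gate_exists hT hmv
    obtain ⟨gy, hgy, dgy⟩ := gate_exists hT hmy
    have hne : gv ≠ gy := gate_ne_of_btw hT hvmy hmv hmy hgv dgv hgy dgy
    have := two_le_deg hgv hgy hne
    have h1 : (T.neighborSet m).ncard = 1 := hℓ
    omega
  · exfalso
    obtain ⟨gv, hgv, dgv⟩ := gate_exists hT hmv
    obtain ⟨gy, hgy, dgy⟩ := gate_exists hT hmy
    obtain ⟨gl, hgl, dgl⟩ := gate_exists hT hmℓ
    have h1 : gv ≠ gy := gate_ne_of_btw hT hvmy hmv hmy hgv dgv hgy dgy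
    have h2 : gv ≠ gl := gate_ne_of_btw hT (btw_symm hℓmv) hmv hmℓ hgv dgv hgl dgl
    have h3 : gy ≠ gl := gate_ne_of_btw hT (btw_symm hℓmy) hmy hmℓ hgy dgy hgl dgl
    exact leg_not_major hT hM hℓ hmleg
      (three_le_deg hgv hgy hgl h1 h2 h3)

lemma two_le_deg_of_btw (hT : T.IsTree) {a x b : V} (h : Btw T a x b)
    (hxa : x ≠ a) (hxb : x ≠ b) : 2 ≤ (T.neighborSet x).ncard := by
  obtain ⟨ga, hga, dga⟩ := gate_exists hT hxa
  obtain ⟨gb, hgb, dgb⟩ := gate_exists hT hxb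
  exact two_le_deg hga hgb (gate_ne_of_btw hT h hxa hxb hga dga hgb dgb)

lemma leg_disjoint (hT : T.IsTree) (hM : ∃ v, IsMajorVertex T v) {ℓ1 ℓ2 : V}
    (h1 : IsEndVertex T ℓ1) (h2 : IsEndVertex T ℓ2) (hne : ℓ1 ≠ ℓ2)
    {x : V} (hx1 : x ∈ Leg T ℓ1) (hx2 : x ∈ Leg T ℓ2) : False := by
  have hl2n : ℓ2 ∉ Leg T ℓ1 := by
    intro hmem
    have hd2 := two_le_deg_of_btw hT hmem.1 (Ne.symm hne) hmem.2
    have hd : (T.neighborSet ℓ2).ncard = 1 := h2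
    omega
  have hl1n : ℓ1 ∉ Leg T ℓ2 := by
    intro hmem
    have hd2 := two_le_deg_of_btw hT hmem.1 hne hmem.2
    have hd : (T.neighborSet ℓ1).ncard = 1 := h1
    omega
  have hv2n : vmaj T ℓ2 ∉ Leg T ℓ1 := fun hmem =>
    leg_not_major hT hM h1 hmem (vmaj_spec hT hM h2).2.1
  have hv1n : vmaj T ℓ1 ∉ Leg T ℓ2 := fun hmem =>
    leg_not_major hT hM h2 hmem (vmaj_spec hT hM h1).2.1
  have hs1 : Btw T ℓ1 (vmaj T ℓ1) (vmaj T ℓ2) := leg_separates hT hM h1 hv2n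
  have hs2 : Btw T ℓ2 (vmaj T ℓ2) (vmaj T ℓ1) := leg_separates hT hM h2 hv1n
  obtain ⟨hbx1, hxv1⟩ := hx1
  obtain ⟨hbx2, hxv2⟩ := hx2
  have e1 : Btw T x (vmaj T ℓ1) (vmaj T ℓ2) := (btw_trans hT hbx1 hs1).1
  have e2 : Btw T x (vmaj T ℓ2) (vmaj T ℓ1) := (btw_trans hT hbx2 hs2).1
  have hv12 : vmaj T ℓ1 = vmaj T ℓ2 := by
    have c1 : T.dist (vmaj T ℓ1) (vmaj T ℓ2) = T.dist (vmaj T ℓ2) (vmaj T ℓ1) :=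
      SimpleGraph.dist_comm
    unfold Btw at e1 e2
    exact eq_of_dist_eq_zero hT (by omega)
  by_cases hxℓ1 : x = ℓ1
  · exact hl1n (hxℓ1 ▸ ⟨hbx2, hxv2⟩)
  by_cases hxℓ2 : x = ℓ2
  · exact hl2n (hxℓ2 ▸ ⟨hbx1, hxv1⟩)
  · -- x strictly interior to both legs: distance contradiction
    have hsep1 : Btw T ℓ1 (vmaj T ℓ1) ℓ2 := leg_separates hT hM h1 hl2n
    have e3 : Btw T x (vmaj T ℓ1) ℓ2 := (btw_trans hT hbx1 hsep1).1
    have hxpos : 0 < T.dist x (vmaj T ℓ1) := dist_pos hT hxv1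
    have c1 : T.dist x ℓ2 = T.dist ℓ2 x := SimpleGraph.dist_comm
    have c2 : T.dist (vmaj T ℓ1) ℓ2 = T.dist ℓ2 (vmaj T ℓ1) := SimpleGraph.dist_comm
    have c3 : T.dist x (vmaj T ℓ2) = T.dist x (vmaj T ℓ1) := by rw [hv12]
    have c4 : T.dist ℓ2 (vmaj T ℓ2) = T.dist ℓ2 (vmaj T ℓ1) := by rw [hv12]
    unfold Btw at e3 hbx2
    omega

lemma gate_mem_leg (hT : T.IsTree) (hM : ∃ v, IsMajorVertex T v) {ℓ g : V}
    (hℓ : IsEndVertex T ℓ) (hg : T.Adj (vmaj T ℓ) g)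
    (hd : T.dist g ℓ + 1 = T.dist (vmaj T ℓ) ℓ) : g ∈ Leg T ℓ := by
  refine ⟨?_, fun he => T.irrefl (he ▸ hg)⟩
  show T.dist ℓ g + T.dist g (vmaj T ℓ) = T.dist ℓ (vmaj T ℓ)
  have c1 : T.dist ℓ g = T.dist g ℓ := SimpleGraph.dist_comm
  have c2 : T.dist g (vmaj T ℓ) = 1 := dist_adj hT hg.symm
  have c3 : T.dist ℓ (vmaj T ℓ) = T.dist (vmaj T ℓ) ℓ := SimpleGraph.dist_comm
  omega

/-- A gate of the major vertex towards `ℓ` is a gate towards every point of the leg. -/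
lemma gate_leg (hT : T.IsTree) {ℓ g x : V} (hx : x ∈ Leg T ℓ)
    (hg : T.Adj (vmaj T ℓ) g) (hd : T.dist g ℓ + 1 = T.dist (vmaj T ℓ) ℓ) :
    T.dist g x + 1 = T.dist (vmaj T ℓ) x := by
  obtain ⟨hbtw, hxv⟩ := hx
  have hb : Btw T (vmaj T ℓ) x ℓ := btw_symm hbtw
  have hvℓ : vmaj T ℓ ≠ ℓ := by
    intro he
    rw [he] at hbtw
    unfold Btw at hbtw
    have hz : T.dist ℓ ℓ = 0 := SimpleGraph.dist_self
    have hp : 0 < T.dist x ℓ := dist_pos hT (fun hh => hxv (hh.trans he.symm))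
    omega
  obtain ⟨g', hg', dg'⟩ := gate_exists hT (Ne.symm hxv)
  have : T.dist g' ℓ + 1 = T.dist (vmaj T ℓ) ℓ := gate_of_btw hT hb hxv hg' dg'
  rw [gate_unique hT hvℓ hg hd hg' this]
  exact dg'

lemma one_le_deg (hT : T.IsTree) (hn : 2 ≤ Fintype.card V) (v : V) :
    1 ≤ (T.neighborSet v).ncard := by
  obtain ⟨w, hw⟩ := exists_adj hT hn v
  have : (T.neighborSet v).Nonempty := ⟨w, hw⟩
  have := Set.ncard_pos (Set.toFinite _) |>.mpr this
  omega

lemma mem_leg_of_exterior {x : V} (hx : IsExteriorDeg2 T x) :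
    ∃ ℓ, IsEndVertex T ℓ ∧ x ∈ Leg T ℓ := by
  obtain ⟨hdeg, v, ℓ, hterm, hdist⟩ := hx
  refine ⟨ℓ, hterm.1, ?_, ?_⟩
  · show T.dist ℓ x + T.dist x (vmaj T ℓ) = T.dist ℓ (vmaj T ℓ)
    rw [vmaj_eq hterm]
    exact hdist
  · rw [vmaj_eq hterm]
    intro he
    have h3 : 3 ≤ (T.neighborSet v).ncard := hterm.2.1
    have h2 : (T.neighborSet x).ncard = 2 := hdeg
    rw [he] at h2
    omega

lemma leg_deg2_exterior (hT : T.IsTree) (hM : ∃ v, IsMajorVertex T v) {ℓ x : V}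
    (hℓ : IsEndVertex T ℓ) (hx : x ∈ Leg T ℓ) (hdeg : deg T x = 2) :
    IsExteriorDeg2 T x :=
  ⟨hdeg, vmaj T ℓ, ℓ, vmaj_spec hT hM hℓ, hx.1⟩

lemma classify (hT : T.IsTree) (hn : 2 ≤ Fintype.card V) (hM : ∃ v, IsMajorVertex T v)
    (x : V) : (IsMajorVertex T x ∨ IsInteriorDeg2 T x) ∨
      ∃ ℓ, IsEndVertex T ℓ ∧ x ∈ Leg T ℓ := by
  have h1 := one_le_deg hT hn x
  by_cases h3 : 3 ≤ (T.neighborSet x).ncard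
  · exact Or.inl (Or.inl h3)
  by_cases hd1 : (T.neighborSet x).ncard = 1
  · exact Or.inr ⟨x, hd1, mem_leg_self hT hM hd1⟩
  · have hd2 : deg T x = 2 := by
      show (T.neighborSet x).ncard = 2
      omega
    by_cases hext : IsExteriorDeg2 T x
    · exact Or.inr (mem_leg_of_exterior hext)
    · exact Or.inl (Or.inr ⟨hd2, hext⟩)

lemma core_not_in_leg (hT : T.IsTree) (hM : ∃ v, IsMajorVertex T v) {x ℓ : V}
    (hℓ : IsEndVertex T ℓ) (hcore : IsMajorVertex T x ∨ IsInteriorDeg2 T x)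
    (hx : x ∈ Leg T ℓ) : False := by
  rcases hcore with hmaj | hint
  · exact leg_not_major hT hM hℓ hx hmaj
  · exact hint.2 (leg_deg2_exterior hT hM hℓ hx hint.1)

lemma terminal_iff (hT : T.IsTree) (hM : ∃ v, IsMajorVertex T v) {ℓ v : V} :
    IsTerminalOf T ℓ v ↔ IsEndVertex T ℓ ∧ vmaj T ℓ = v := by
  constructor
  · exact fun h => ⟨h.1, vmaj_eq h⟩
  · rintro ⟨hℓ, rfl⟩
    exact vmaj_spec hT hM hℓ

/-- Pulling a gate back: if `v` is between `c` and `y` then the gate of `c`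
towards `y` is also the gate towards `v`. -/
lemma gate_pull (hT : T.IsTree) {c v y g : V} (hbtw : Btw T c v y) (hvc : v ≠ c)
    (hcy : c ≠ y) (hg : T.Adj c g) (hd : T.dist g y + 1 = T.dist c y) :
    T.dist g v + 1 = T.dist c v := by
  obtain ⟨g'', hg'', dg''⟩ := gate_exists hT (Ne.symm hvc)
  have h2 : T.dist g'' y + 1 = T.dist c y := gate_of_btw hT hbtw hvc hg'' dg''
  rw [gate_unique hT hcy hg hd hg'' h2]
  exact dg''

/-- Two distinct unhit legs at the same major vertex contradict resolvability. -/
lemma unhit_leg_unique (hT : T.IsTree) (hM : ∃ v, IsMajorVertex T v) {S : Set V}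
    (hres : IsResolving T S) {ℓ1 ℓ2 : V}
    (h1 : IsEndVertex T ℓ1) (h2 : IsEndVertex T ℓ2) (hne : ℓ1 ≠ ℓ2)
    (hv : vmaj T ℓ1 = vmaj T ℓ2)
    (hu1 : ∀ x ∈ S, x ∉ Leg T ℓ1) (hu2 : ∀ x ∈ S, x ∉ Leg T ℓ2) : False := by
  have hvℓ1 : vmaj T ℓ1 ≠ ℓ1 := Ne.symm (terminal_ne (vmaj_spec hT hM h1))
  have hvℓ2 : vmaj T ℓ2 ≠ ℓ2 := Ne.symm (terminal_ne (vmaj_spec hT hM h2))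
  obtain ⟨x, hx, dx⟩ := gate_exists hT hvℓ1
  obtain ⟨y', hy', dy'⟩ := gate_exists hT hvℓ2
  have hxleg : x ∈ Leg T ℓ1 := gate_mem_leg hT hM h1 hx dx
  have hyleg : y' ∈ Leg T ℓ2 := gate_mem_leg hT hM h2 hy' dy'
  have hxy : x ≠ y' := by
    intro he
    exact leg_disjoint hT hM h1 h2 hne hxleg (he ▸ hyleg)
  obtain ⟨z, hz, hzd⟩ := hres x y' hxy
  have hz1 : z ∉ Leg T ℓ1 := hu1 z hz
  have hz2 : z ∉ Leg T ℓ2 := hu2 z hz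
  have hs1 : Btw T ℓ1 (vmaj T ℓ1) z := leg_separates hT hM h1 hz1
  have hs2 : Btw T ℓ2 (vmaj T ℓ2) z := leg_separates hT hM h2 hz2
  have e1 : Btw T x (vmaj T ℓ1) z := (btw_trans hT hxleg.1 hs1).1
  have e2 : Btw T y' (vmaj T ℓ2) z := (btw_trans hT hyleg.1 hs2).1
  apply hzd
  have c1 : T.dist z x = T.dist x z := SimpleGraph.dist_comm
  have c2 : T.dist z y' = T.dist y' z := SimpleGraph.dist_comm
  have c3 : T.dist x (vmaj T ℓ1) = 1 := dist_adj hT hx.symm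
  have c4 : T.dist y' (vmaj T ℓ2) = 1 := dist_adj hT hy'.symm
  have c5 : T.dist (vmaj T ℓ1) z = T.dist (vmaj T ℓ2) z := by rw [hv]
  unfold Btw at e1 e2
  omega

/-- Any branch at a core vertex that is not a leg of that vertex contains an element
of any resolving set. -/
lemma branch_hits (hT : T.IsTree) (hM : ∃ v, IsMajorVertex T v)
    {S : Set V} (hres : IsResolving T S) :
    ∀ (n : ℕ) (c g : V), ({x | T.dist g x + 1 = T.dist c x} : Set V).ncard ≤ n →
      T.Adj c g → (IsMajorVertex T c ∨ IsInteriorDeg2 T c) →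
      (∀ ℓ, IsEndVertex T ℓ → vmaj T ℓ = c → T.dist g ℓ + 1 = T.dist c ℓ → False) →
      ∃ x ∈ S, T.dist g x + 1 = T.dist c x := by
  intro n
  induction n with
  | zero =>
    intro c g hcard hg _ _
    exfalso
    have hgmem : g ∈ {x | T.dist g x + 1 = T.dist c x} := by
      simp [SimpleGraph.dist_self, dist_adj hT hg]
    have := Set.ncard_pos (Set.toFinite _) |>.mpr ⟨g, hgmem⟩
    omega
  | succ n ih =>
    intro c g hcard hg hcore hno
    obtain ⟨ℓ, hℓdeg, hℓbr⟩ := exists_leaf_in_branch hT hg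
    have hℓ : IsEndVertex T ℓ := hℓdeg
    have hterm := vmaj_spec hT hM hℓ
    have hcnotleg : c ∉ Leg T ℓ := fun hmem => core_not_in_leg hT hM hℓ hcore hmem
    have hsep : Btw T ℓ (vmaj T ℓ) c := leg_separates hT hM hℓ hcnotleg
    have hvc : vmaj T ℓ ≠ c := by
      intro he
      exact hno ℓ hℓ he hℓbr
    have hcl : c ≠ ℓ := fun he => hcnotleg (by rw [he]; exact mem_leg_self hT hM hℓ)
    have hgv : T.dist g (vmaj T ℓ) + 1 = T.dist c (vmaj T ℓ) :=
      gate_pull hT (btw_symm hsep) hvc hcl hg hℓbr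
    have hlegsub : ∀ ℓ' x, IsEndVertex T ℓ' → vmaj T ℓ' = vmaj T ℓ → x ∈ Leg T ℓ' →
        T.dist g x + 1 = T.dist c x := by
      intro ℓ' x hℓ' hv' hxleg
      have hcn' : c ∉ Leg T ℓ' := fun hmem => core_not_in_leg hT hM hℓ' hcore hmem
      have hsep' : Btw T ℓ' (vmaj T ℓ') c := leg_separates hT hM hℓ' hcn'
      have e1 : Btw T x (vmaj T ℓ') c := (btw_trans hT hxleg.1 hsep').1
      rw [hv'] at e1
      exact gate_of_btw hT (btw_symm e1) hvc hg hgv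
    by_cases htwo : ∃ ℓa ℓb, IsTerminalOf T ℓa (vmaj T ℓ) ∧ IsTerminalOf T ℓb (vmaj T ℓ)
        ∧ ℓa ≠ ℓb
    · obtain ⟨ℓa, ℓb, ha, hb, hab⟩ := htwo
      by_cases hha : ∃ x ∈ S, x ∈ Leg T ℓa
      · obtain ⟨x, hxS, hxleg⟩ := hha
        exact ⟨x, hxS, hlegsub ℓa x ha.1 (vmaj_eq ha) hxleg⟩
      by_cases hhb : ∃ x ∈ S, x ∈ Leg T ℓb
      · obtain ⟨x, hxS, hxleg⟩ := hhb
        exact ⟨x, hxS, hlegsub ℓb x hb.1 (vmaj_eq hb) hxleg⟩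
      · exfalso
        push_neg at hha hhb
        exact unhit_leg_unique hT hM hres ha.1 hb.1 hab
          (by rw [vmaj_eq ha, vmaj_eq hb]) hha hhb
    · push_neg at htwo
      have hvmaj : IsMajorVertex T (vmaj T ℓ) := hterm.2.1
      have hvl : vmaj T ℓ ≠ ℓ := Ne.symm (terminal_ne hterm)
      obtain ⟨gc, hgc, dgc⟩ := gate_exists hT hvc
      obtain ⟨gl, hgl, dgl⟩ := gate_exists hT hvl
      have hgcgl : gc ≠ gl :=
        gate_ne_of_btw hT (btw_symm hsep) hvc hvl hgc dgc hgl dgl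
      obtain ⟨g3, hg3, h3c, h3l⟩ := exists_third hvmaj gc gl
      have hsub : {x | T.dist g3 x + 1 = T.dist (vmaj T ℓ) x} ⊆
          {x | T.dist g x + 1 = T.dist c x} := by
        intro x hx
        simp only [Set.mem_setOf_eq] at hx ⊢
        have hbx : Btw T x (vmaj T ℓ) c := btw_of_gate_ne hT hg3 hgc h3c hx dgc
        exact gate_of_btw hT (btw_symm hbx) hvc hg hgv
      have hvmem : vmaj T ℓ ∈ {x | T.dist g x + 1 = T.dist c x} := hgv
      have hvnot : vmaj T ℓ ∉ {x | T.dist g3 x + 1 = T.dist (vmaj T ℓ) x} := by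
        simp [SimpleGraph.dist_self]
      have hlt : ({x | T.dist g3 x + 1 = T.dist (vmaj T ℓ) x} : Set V).ncard <
          ({x | T.dist g x + 1 = T.dist c x} : Set V).ncard :=
        Set.ncard_lt_ncard
          (ssubset_iff_subset_not_subset.mpr ⟨hsub, fun hsup => hvnot (hsup hvmem)⟩)
          (Set.toFinite _)
      have hno' : ∀ ℓ', IsEndVertex T ℓ' → vmaj T ℓ' = vmaj T ℓ →
          T.dist g3 ℓ' + 1 = T.dist (vmaj T ℓ) ℓ' → False := by
        intro ℓ' hℓ' hv' hd'
        have hterm' : IsTerminalOf T ℓ' (vmaj T ℓ) := (terminal_iff hT hM).mpr ⟨hℓ', hv'⟩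
        have he := htwo ℓ' ℓ hterm' hterm
        rw [he] at hd'
        exact h3l (gate_unique hT hvl hg3 hd' hgl dgl)
      obtain ⟨x, hxS, hxbr⟩ := ih (vmaj T ℓ) g3 (by omega) hg3 (Or.inl hvmaj) hno'
      exact ⟨x, hxS, hsub hxbr⟩

/-- Every core vertex belongs to every connected resolving set. -/
lemma core_subset (hT : T.IsTree) (hn : 2 ≤ Fintype.card V) (hM : ∃ v, IsMajorVertex T v)
    {S : Set V} (hres : IsResolving T S) (hconn : (T.induce S).Connected)
    {c : V} (hcore : IsMajorVertex T c ∨ IsInteriorDeg2 T c) : c ∈ S := by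
  classical
  have hitof : ∀ g', T.Adj c g' →
      (∀ ℓ, IsEndVertex T ℓ → vmaj T ℓ = c → T.dist g' ℓ + 1 = T.dist c ℓ → False) →
      ∃ x ∈ S, T.dist g' x + 1 = T.dist c x :=
    fun g' hg' hno => branch_hits hT hM hres _ c g' le_rfl hg' hcore hno
  have atmost : ∀ g1 g2, T.Adj c g1 → T.Adj c g2 → g1 ≠ g2 →
      (¬ ∃ x ∈ S, T.dist g1 x + 1 = T.dist c x) →
      (¬ ∃ x ∈ S, T.dist g2 x + 1 = T.dist c x) → False := by
    intro g1 g2 hg1 hg2 hne hu1 hu2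
    have mk : ∀ g', T.Adj c g' → (¬ ∃ x ∈ S, T.dist g' x + 1 = T.dist c x) →
        ∃ ℓ, IsEndVertex T ℓ ∧ vmaj T ℓ = c ∧ T.dist g' ℓ + 1 = T.dist c ℓ ∧
          ∀ x ∈ S, x ∉ Leg T ℓ := by
      intro g' hg' hu
      by_cases hex : ∃ ℓ, IsEndVertex T ℓ ∧ vmaj T ℓ = c ∧ T.dist g' ℓ + 1 = T.dist c ℓ
      · obtain ⟨ℓ, hℓ, hv, hd⟩ := hex
        refine ⟨ℓ, hℓ, hv, hd, ?_⟩
        intro x hx hleg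
        apply hu
        refine ⟨x, hx, ?_⟩
        have hg'' : T.Adj (vmaj T ℓ) g' := by rw [hv]; exact hg'
        have hd'' : T.dist g' ℓ + 1 = T.dist (vmaj T ℓ) ℓ := by rw [hv]; exact hd
        have hout := gate_leg hT hleg hg'' hd''
        rw [hv] at hout
        exact hout
      · exact absurd (hitof g' hg' (fun ℓ hℓ hv hd => hex ⟨ℓ, hℓ, hv, hd⟩)) hu
    obtain ⟨ℓ1, hℓ1, hv1, hd1, hu1'⟩ := mk g1 hg1 hu1
    obtain ⟨ℓ2, hℓ2, hv2, hd2, hu2'⟩ := mk g2 hg2 hu2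
    have hcℓ1 : c ≠ ℓ1 := by
      intro he
      exact terminal_ne (vmaj_spec hT hM hℓ1) (hv1.trans he).symm
    have hne12 : ℓ1 ≠ ℓ2 := by
      intro he
      rw [← he] at hd2
      exact hne (gate_unique hT hcℓ1 hg1 hd1 hg2 hd2)
    exact unhit_leg_unique hT hM hres hℓ1 hℓ2 hne12 (hv1.trans hv2.symm) hu1' hu2'
  have main : ∃ g1 g2, T.Adj c g1 ∧ T.Adj c g2 ∧ g1 ≠ g2 ∧
      (∃ x ∈ S, T.dist g1 x + 1 = T.dist c x) ∧
      (∃ x ∈ S, T.dist g2 x + 1 = T.dist c x) := by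
    rcases hcore with hmaj | hint
    · obtain ⟨g1, hg1⟩ := exists_adj hT hn c
      obtain ⟨g2, hg2, h21⟩ := exists_second (T := T) (v := c)
        (by have : 3 ≤ (T.neighborSet c).ncard := hmaj; omega) g1
      obtain ⟨g3, hg3, h31, h32⟩ := exists_third hmaj g1 g2
      by_cases H1 : ∃ x ∈ S, T.dist g1 x + 1 = T.dist c x
      · by_cases H2 : ∃ x ∈ S, T.dist g2 x + 1 = T.dist c x
        · exact ⟨g1, g2, hg1, hg2, Ne.symm h21, H1, H2⟩
        · have H3 : ∃ x ∈ S, T.dist g3 x + 1 = T.dist c x := by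
            by_contra H3
            exact atmost g2 g3 hg2 hg3 (Ne.symm h32) H2 H3
          exact ⟨g1, g3, hg1, hg3, Ne.symm h31, H1, H3⟩
      · have H2 : ∃ x ∈ S, T.dist g2 x + 1 = T.dist c x := by
          by_contra H2
          exact atmost g1 g2 hg1 hg2 (Ne.symm h21) H1 H2
        have H3 : ∃ x ∈ S, T.dist g3 x + 1 = T.dist c x := by
          by_contra H3
          exact atmost g1 g3 hg1 hg3 (Ne.symm h31) H1 H3
        exact ⟨g2, g3, hg2, hg3, Ne.symm h32, H2, H3⟩
    · obtain ⟨g1, hg1⟩ := exists_adj hT hn c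
      have hd2 : (T.neighborSet c).ncard = 2 := hint.1
      obtain ⟨g2, hg2, h21⟩ := exists_second (T := T) (v := c) (by omega) g1
      have hnotmaj : ¬ IsMajorVertex T c := by
        intro h
        have : 3 ≤ (T.neighborSet c).ncard := h
        omega
      have hno : ∀ g' ℓ, IsEndVertex T ℓ → vmaj T ℓ = c →
          T.dist g' ℓ + 1 = T.dist c ℓ → False :=
        fun g' ℓ hℓ hv _ => hnotmaj (hv ▸ (vmaj_spec hT hM hℓ).2.1)
      exact ⟨g1, g2, hg1, hg2, Ne.symm h21,
        hitof g1 hg1 (hno g1), hitof g2 hg2 (hno g2)⟩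
  obtain ⟨g1, g2, hg1, hg2, hne, ⟨x1, hx1S, hb1⟩, ⟨x2, hx2S, hb2⟩⟩ := main
  exact mem_of_btw_of_induce_connected hT hconn hx1S hx2S
    (btw_of_gate_ne hT hg1 hg2 hne hb1 hb2)

/-- The core: major vertices and interior degree-2 vertices. -/
def CoreSet (T : SimpleGraph V) : Set V :=
  {x | IsMajorVertex T x ∨ IsInteriorDeg2 T x}

lemma core_decomp (hT : T.IsTree) :
    CoreSet T = {x | IsInteriorDeg2 T x ∨ (IsMajorVertex T x ∧ terminalDeg T x = 0)} ∪
      {v | IsExteriorMajor T v} := by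
  ext x
  simp only [CoreSet, Set.mem_setOf_eq, Set.mem_union]
  constructor
  · rintro (hmaj | hint)
    · by_cases h0 : terminalDeg T x = 0
      · exact Or.inl (Or.inr ⟨hmaj, h0⟩)
      · obtain ⟨ℓ, hℓ⟩ := Set.nonempty_of_ncard_ne_zero h0
        exact Or.inr ⟨hmaj, ℓ, hℓ⟩
    · exact Or.inl (Or.inl hint)
  · rintro ((hint | ⟨hmaj, _⟩) | ⟨hmaj, _⟩)
    · exact Or.inr hint
    · exact Or.inl hmaj
    · exact Or.inl hmaj

lemma core_card (hT : T.IsTree) :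
    (CoreSet T).ncard =
      {x | IsInteriorDeg2 T x ∨ (IsMajorVertex T x ∧ terminalDeg T x = 0)}.ncard +
      {v | IsExteriorMajor T v}.ncard := by
  rw [core_decomp hT]
  apply Set.ncard_union_eq _ (Set.toFinite _) (Set.toFinite _)
  rw [Set.disjoint_left]
  rintro x (hint | ⟨hmaj, h0⟩) ⟨hmaj', ℓ, hℓ⟩
  · have h2 : (T.neighborSet x).ncard = 2 := hint.1
    have h3 : 3 ≤ (T.neighborSet x).ncard := hmaj'
    omega
  · have : ({ℓ' | IsTerminalOf T ℓ' x} : Set V).Nonempty := ⟨ℓ, hℓ⟩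
    have := Set.ncard_pos (Set.toFinite _) |>.mpr this
    have h0' : ({ℓ' | IsTerminalOf T ℓ' x} : Set V).ncard = 0 := h0
    omega

lemma core_btw_closed (hT : T.IsTree) (hn : 2 ≤ Fintype.card V)
    (hM : ∃ v, IsMajorVertex T v) {a b t : V} (ha : a ∈ CoreSet T) (hb : b ∈ CoreSet T)
    (hbtw : Btw T a t b) : t ∈ CoreSet T := by
  by_contra ht
  rcases classify hT hn hM t with hcore | ⟨ℓ, hℓ, hleg⟩
  · exact ht hcore
  have han : a ∉ Leg T ℓ := fun hmem => core_not_in_leg hT hM hℓ ha hmem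
  have hbn : b ∉ Leg T ℓ := fun hmem => core_not_in_leg hT hM hℓ hb hmem
  have hsa : Btw T ℓ (vmaj T ℓ) a := leg_separates hT hM hℓ han
  have hsb : Btw T ℓ (vmaj T ℓ) b := leg_separates hT hM hℓ hbn
  have e1 : Btw T t (vmaj T ℓ) a := (btw_trans hT hleg.1 hsa).1
  have e2 : Btw T t (vmaj T ℓ) b := (btw_trans hT hleg.1 hsb).1
  have htv : 0 < T.dist t (vmaj T ℓ) := dist_pos hT hleg.2
  have tri : T.dist a b ≤ T.dist a (vmaj T ℓ) + T.dist (vmaj T ℓ) b :=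
    hT.isConnected.dist_triangle
  have c1 : T.dist a t = T.dist t a := SimpleGraph.dist_comm
  have c2 : T.dist a (vmaj T ℓ) = T.dist (vmaj T ℓ) a := SimpleGraph.dist_comm
  unfold Btw at hbtw e1 e2
  omega

/-- Lower bound: every connected resolving set has at least `|D| + σ` elements. -/
lemma lower_bound (hT : T.IsTree) (hn : 2 ≤ Fintype.card V) (hM : ∃ v, IsMajorVertex T v)
    {S : Set V} (hcr : IsConnResolving T S) :
    {x | IsInteriorDeg2 T x ∨ (IsMajorVertex T x ∧ terminalDeg T x = 0)}.ncard +
      {v | IsEndVertex T v}.ncard ≤ S.ncard := by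
  classical
  obtain ⟨hres, hconn⟩ := hcr
  have hcoreS : CoreSet T ⊆ S := fun c hc => core_subset hT hn hM hres hconn hc
  -- the set of leaves whose leg is hit
  set hitL : Set V := {ℓ | IsEndVertex T ℓ ∧ ∃ x, x ∈ S ∧ x ∈ Leg T ℓ} with hhitL
  -- choice of a hit element for each hit leaf
  have hchoice : ∀ ℓ ∈ hitL, ∃ x, x ∈ S ∧ x ∈ Leg T ℓ := fun ℓ hℓ => hℓ.2
  choose pick hpickS hpickLeg using hchoice
  -- Count: the image of hitL under pick, together with the core, is inside S
  have hsub : CoreSet T ∪ (Set.image (fun ℓ : hitL => pick ℓ ℓ.2) Set.univ) ⊆ S := by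
    rintro x (hx | hx)
    · exact hcoreS hx
    · obtain ⟨⟨ℓ, hℓ⟩, _, rfl⟩ := hx
      exact hpickS ℓ hℓ
  have hinjpick : Function.Injective (fun ℓ : hitL => pick ℓ ℓ.2) := by
    rintro ⟨ℓ1, h1⟩ ⟨ℓ2, h2⟩ he
    simp only at he
    by_contra hne
    have hne' : ℓ1 ≠ ℓ2 := fun hh => hne (Subtype.ext hh)
    exact leg_disjoint hT hM h1.1 h2.1 hne' (hpickLeg ℓ1 h1) (he ▸ hpickLeg ℓ2 h2)
  have hdisj : Disjoint (CoreSet T) (Set.image (fun ℓ : hitL => pick ℓ ℓ.2) Set.univ) := by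
    rw [Set.disjoint_left]
    rintro x hx ⟨⟨ℓ, hℓ⟩, _, rfl⟩
    exact core_not_in_leg hT hM hℓ.1 hx (hpickLeg ℓ hℓ)
  have himgcard : (Set.image (fun ℓ : hitL => pick ℓ ℓ.2) Set.univ).ncard = hitL.ncard := by
    rw [Set.ncard_image_of_injective _ hinjpick, Set.ncard_univ, Nat.card_coe_set_eq]
  have hcount1 : (CoreSet T).ncard + hitL.ncard ≤ S.ncard := by
    have := Set.ncard_le_ncard hsub (Set.toFinite _)
    rw [Set.ncard_union_eq hdisj (Set.toFinite _) (Set.toFinite _), himgcard] at this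
    exact this
  -- unhit leaves inject into exterior major vertices
  have hunhit : ({v | IsEndVertex T v} \ hitL).ncard ≤ {v | IsExteriorMajor T v}.ncard := by
    apply Set.ncard_le_ncard_of_injOn (fun ℓ => vmaj T ℓ)
    · rintro ℓ ⟨hℓ, hℓn⟩
      have hterm := vmaj_spec hT hM hℓ
      exact ⟨hterm.2.1, ℓ, hterm⟩
    · rintro ℓ1 ⟨h1, h1n⟩ ℓ2 ⟨h2, h2n⟩ he
      by_contra hne
      simp only [hhitL, Set.mem_setOf_eq] at h1n h2n
      have hu1 : ∀ x ∈ S, x ∉ Leg T ℓ1 := by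
        intro x hx hleg
        exact h1n ⟨h1, x, hx, hleg⟩
      have hu2 : ∀ x ∈ S, x ∉ Leg T ℓ2 := by
        intro x hx hleg
        exact h2n ⟨h2, x, hx, hleg⟩
      exact unhit_leg_unique hT hM hres h1 h2 hne he hu1 hu2
  have hsplit : hitL ⊆ {v | IsEndVertex T v} := fun ℓ hℓ => hℓ.1
  have hcount2 : {v | IsEndVertex T v}.ncard ≤
      hitL.ncard + {v | IsExteriorMajor T v}.ncard := by
    have hd : ({v | IsEndVertex T v} \ hitL).ncard =
        {v | IsEndVertex T v}.ncard - hitL.ncard := Set.ncard_diff hsplit (Set.toFinite _)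
    have hle := Set.ncard_le_ncard hsplit (Set.toFinite _)
    omega
  have hcc := core_card hT
  omega

open Classical in
/-- A choice of terminal vertex for each exterior major vertex. -/
noncomputable def pck (T : SimpleGraph V) (v : V) : V :=
  if h : ∃ ℓ, IsTerminalOf T ℓ v then h.choose else v

lemma pck_spec {v : V} (h : ∃ ℓ, IsTerminalOf T ℓ v) : IsTerminalOf T (pck T v) v := by
  unfold pck
  rw [dif_pos h]
  exact h.choose_spec

open Classical in
/-- A choice of gate. -/
noncomputable def gat (T : SimpleGraph V) (a b : V) : V :=
  if h : ∃ g, T.Adj a g ∧ T.dist g b + 1 = T.dist a b then h.choose else a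

lemma gat_spec (hT : T.IsTree) {a b : V} (hab : a ≠ b) :
    T.Adj a (gat T a b) ∧ T.dist (gat T a b) b + 1 = T.dist a b := by
  unfold gat
  rw [dif_pos (gate_exists hT hab)]
  exact (gate_exists hT hab).choose_spec

/-- The optimal connected resolving set. -/
def UpSet (T : SimpleGraph V) : Set V :=
  CoreSet T ∪ {x | ∃ ℓ, IsEndVertex T ℓ ∧ pck T (vmaj T ℓ) ≠ ℓ ∧ x = gat T (vmaj T ℓ) ℓ}

lemma vmaj_ne_leaf (hT : T.IsTree) (hM : ∃ v, IsMajorVertex T v) {ℓ : V}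
    (hℓ : IsEndVertex T ℓ) : vmaj T ℓ ≠ ℓ :=
  Ne.symm (terminal_ne (vmaj_spec hT hM hℓ))

lemma gat_mem_leg (hT : T.IsTree) (hM : ∃ v, IsMajorVertex T v) {ℓ : V}
    (hℓ : IsEndVertex T ℓ) : gat T (vmaj T ℓ) ℓ ∈ Leg T ℓ := by
  obtain ⟨h1, h2⟩ := gat_spec hT (vmaj_ne_leaf hT hM hℓ)
  exact gate_mem_leg hT hM hℓ h1 h2

lemma up_connected (hT : T.IsTree) (hn : 2 ≤ Fintype.card V)
    (hM : ∃ v, IsMajorVertex T v) : (T.induce (UpSet T)).Connected := by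
  have hMne : (UpSet T).Nonempty := by
    obtain ⟨v, hv⟩ := hM
    exact ⟨v, Or.inl (Or.inl hv)⟩
  apply induce_connected_of_walks hMne
  have hcore_walk : ∀ c1 ∈ CoreSet T, ∀ c2 ∈ CoreSet T,
      ∃ p : T.Walk c1 c2, ∀ t ∈ p.support, t ∈ CoreSet T := by
    intro c1 h1 c2 h2
    obtain ⟨p, hp, _⟩ := hT.isConnected.exists_path_of_dist c1 c2
    exact ⟨p, fun t ht => core_btw_closed hT hn hM h1 h2 (btw_of_mem_support hT hp ht)⟩
  have hstep : ∀ s ∈ UpSet T, s ∈ CoreSet T ∨ ∃ c ∈ CoreSet T, T.Adj s c := by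
    rintro s (hs | ⟨ℓ, hℓ, hpk, rfl⟩)
    · exact Or.inl hs
    · obtain ⟨hadj, _⟩ := gat_spec hT (vmaj_ne_leaf hT hM hℓ)
      exact Or.inr ⟨vmaj T ℓ, Or.inl (vmaj_spec hT hM hℓ).2.1, hadj.symm⟩
  intro a ha b hb
  rcases hstep a ha with hca | ⟨ca, hcaC, haadj⟩
  · rcases hstep b hb with hcb | ⟨cb, hcbC, hbadj⟩
    · obtain ⟨p, hsup⟩ := hcore_walk a hca b hcb
      exact ⟨p, fun t ht => Or.inl (hsup t ht)⟩
    · obtain ⟨p, hsup⟩ := hcore_walk a hca cb hcbC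
      refine ⟨p.concat hbadj.symm, ?_⟩
      intro t ht
      rw [Walk.support_concat] at ht
      rw [List.mem_append, List.mem_singleton] at ht
      rcases ht with ht | rfl
      · exact Or.inl (hsup t ht)
      · exact hb
  · rcases hstep b hb with hcb | ⟨cb, hcbC, hbadj⟩
    · obtain ⟨p, hsup⟩ := hcore_walk ca hcaC b hcb
      refine ⟨Walk.cons haadj p, ?_⟩
      intro t ht
      rw [Walk.support_cons, List.mem_cons] at ht
      rcases ht with rfl | ht
      · exact ha
      · exact Or.inl (hsup t ht)
    · obtain ⟨p, hsup⟩ := hcore_walk ca hcaC cb hcbC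
      refine ⟨Walk.cons haadj (p.concat hbadj.symm), ?_⟩
      intro t ht
      rw [Walk.support_cons, List.mem_cons] at ht
      rcases ht with rfl | ht
      · exact ha
      rw [Walk.support_concat] at ht
      rw [List.mem_append, List.mem_singleton] at ht
      rcases ht with ht | rfl
      · exact Or.inl (hsup t ht)
      · exact hb

lemma resolve_two_legs (hT : T.IsTree) (hn : 2 ≤ Fintype.card V)
    (hM : ∃ v, IsMajorVertex T v) {ℓx ℓy x y : V}
    (hℓx : IsEndVertex T ℓx) (hℓy : IsEndVertex T ℓy) (hll : ℓx ≠ ℓy)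
    (hxleg : x ∈ Leg T ℓx) (hyleg : y ∈ Leg T ℓy) (hvv : vmaj T ℓx = vmaj T ℓy)
    (hpk : pck T (vmaj T ℓx) ≠ ℓx)
    (hdv : T.dist (vmaj T ℓx) x = T.dist (vmaj T ℓx) y) :
    ∃ z ∈ UpSet T, T.dist z x ≠ T.dist z y := by
  have huU : gat T (vmaj T ℓx) ℓx ∈ UpSet T := Or.inr ⟨ℓx, hℓx, hpk, rfl⟩
  obtain ⟨huadj, hud⟩ := gat_spec hT (vmaj_ne_leaf hT hM hℓx)
  have huleg : gat T (vmaj T ℓx) ℓx ∈ Leg T ℓx := gat_mem_leg hT hM hℓx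
  have hux : T.dist (gat T (vmaj T ℓx) ℓx) x + 1 = T.dist (vmaj T ℓx) x :=
    gate_leg hT hxleg huadj hud
  have hyv : y ≠ vmaj T ℓy := hyleg.2
  obtain ⟨gy, hgy, dgy⟩ := gate_exists hT (Ne.symm hyv)
  have hgyl : gy ∈ Leg T ℓy := by
    apply gate_mem_leg hT hM hℓy hgy
    have hbtw : Btw T (vmaj T ℓy) y ℓy := btw_symm hyleg.1
    exact gate_of_btw hT hbtw hyv hgy dgy
  have hugy : gat T (vmaj T ℓx) ℓx ≠ gy := by
    intro he
    exact leg_disjoint hT hM hℓx hℓy hll huleg (he ▸ hgyl)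
  have huadj' : T.Adj (vmaj T ℓy) (gat T (vmaj T ℓx) ℓx) := hvv ▸ huadj
  have hbuy : Btw T (gat T (vmaj T ℓx) ℓx) (vmaj T ℓy) y := by
    apply btw_of_gate_ne hT huadj' hgy hugy _ dgy
    have h0 : T.dist (gat T (vmaj T ℓx) ℓx) (gat T (vmaj T ℓx) ℓx) = 0 :=
      SimpleGraph.dist_self
    have h1 : T.dist (vmaj T ℓy) (gat T (vmaj T ℓx) ℓx) = 1 := dist_adj hT huadj'
    omega
  refine ⟨gat T (vmaj T ℓx) ℓx, huU, ?_⟩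
  have c1 : T.dist (vmaj T ℓx) y = T.dist (vmaj T ℓy) y := by rw [hvv]
  have c2 : T.dist (gat T (vmaj T ℓx) ℓx) (vmaj T ℓy) = 1 := dist_adj hT huadj'.symm
  have hxv : 0 < T.dist (vmaj T ℓx) x := by
    have h2 := dist_pos hT (Ne.symm hxleg.2)
    have c3 : T.dist (vmaj T ℓx) x = T.dist x (vmaj T ℓx) := SimpleGraph.dist_comm
    omega
  unfold Btw at hbuy
  omega

lemma up_resolving (hT : T.IsTree) (hn : 2 ≤ Fintype.card V)
    (hM : ∃ v, IsMajorVertex T v) : IsResolving T (UpSet T) := by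
  intro x y hxy
  by_cases hxS : x ∈ UpSet T
  · refine ⟨x, hxS, ?_⟩
    have h0 : T.dist x x = 0 := SimpleGraph.dist_self
    have := dist_pos hT hxy
    omega
  by_cases hyS : y ∈ UpSet T
  · refine ⟨y, hyS, ?_⟩
    have h0 : T.dist y y = 0 := SimpleGraph.dist_self
    have := dist_pos hT (Ne.symm hxy)
    have c : T.dist y x = T.dist x y := SimpleGraph.dist_comm
    omega
  obtain ⟨ℓx, hℓx, hxleg⟩ : ∃ ℓ, IsEndVertex T ℓ ∧ x ∈ Leg T ℓ := by
    rcases classify hT hn hM x with hcore | h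
    · exact absurd (Or.inl hcore : x ∈ UpSet T) hxS
    · exact h
  obtain ⟨ℓy, hℓy, hyleg⟩ : ∃ ℓ, IsEndVertex T ℓ ∧ y ∈ Leg T ℓ := by
    rcases classify hT hn hM y with hcore | h
    · exact absurd (Or.inl hcore : y ∈ UpSet T) hyS
    · exact h
  have hvxU : vmaj T ℓx ∈ UpSet T := Or.inl (Or.inl (vmaj_spec hT hM hℓx).2.1)
  have hvyU : vmaj T ℓy ∈ UpSet T := Or.inl (Or.inl (vmaj_spec hT hM hℓy).2.1)
  by_cases hvv : vmaj T ℓx = vmaj T ℓy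
  · by_cases hdv : T.dist (vmaj T ℓx) x = T.dist (vmaj T ℓx) y
    · by_cases hll : ℓx = ℓy
      · exfalso
        subst hll
        have hbx : Btw T ℓx x (vmaj T ℓx) := hxleg.1
        have hby : Btw T ℓx y (vmaj T ℓx) := hyleg.1
        have heq : T.dist ℓx x = T.dist ℓx y := by
          have c1 : T.dist x (vmaj T ℓx) = T.dist (vmaj T ℓx) x := SimpleGraph.dist_comm
          have c2 : T.dist y (vmaj T ℓx) = T.dist (vmaj T ℓx) y := SimpleGraph.dist_comm
          unfold Btw at hbx hby
          omega
        exact hxy (btw_inj hT hbx hby heq)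
      · by_cases hpk : pck T (vmaj T ℓx) = ℓx
        · have hpk' : pck T (vmaj T ℓy) ≠ ℓy := by
            rw [← hvv, hpk]
            exact hll
          have hdv' : T.dist (vmaj T ℓy) y = T.dist (vmaj T ℓy) x := by
            rw [← hvv]
            omega
          obtain ⟨z, hzU, hz⟩ := resolve_two_legs hT hn hM hℓy hℓx (Ne.symm hll)
            hyleg hxleg hvv.symm hpk' hdv'
          exact ⟨z, hzU, Ne.symm hz⟩
        · exact resolve_two_legs hT hn hM hℓx hℓy hll hxleg hyleg hvv hpk hdv
    · exact ⟨vmaj T ℓx, hvxU, hdv⟩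
  · by_cases h1 : T.dist (vmaj T ℓx) x = T.dist (vmaj T ℓx) y
    · by_cases h2 : T.dist (vmaj T ℓy) x = T.dist (vmaj T ℓy) y
      · exfalso
        -- distances through the two distinct major vertices give a contradiction
        have hvxn : vmaj T ℓx ∉ Leg T ℓy :=
          fun hmem => core_not_in_leg hT hM hℓy (Or.inl (vmaj_spec hT hM hℓx).2.1) hmem
        have hvyn : vmaj T ℓy ∉ Leg T ℓx :=
          fun hmem => core_not_in_leg hT hM hℓx (Or.inl (vmaj_spec hT hM hℓy).2.1) hmem
        have hsy : Btw T ℓy (vmaj T ℓy) (vmaj T ℓx) := leg_separates hT hM hℓy hvxn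
        have hsx : Btw T ℓx (vmaj T ℓx) (vmaj T ℓy) := leg_separates hT hM hℓx hvyn
        have e1 : Btw T y (vmaj T ℓy) (vmaj T ℓx) := (btw_trans hT hyleg.1 hsy).1
        have e2 : Btw T x (vmaj T ℓx) (vmaj T ℓy) := (btw_trans hT hxleg.1 hsx).1
        have hd : 0 < T.dist (vmaj T ℓx) (vmaj T ℓy) := dist_pos hT hvv
        have c1 : T.dist y (vmaj T ℓy) = T.dist (vmaj T ℓy) y := SimpleGraph.dist_comm
        have c2 : T.dist x (vmaj T ℓx) = T.dist (vmaj T ℓx) x := SimpleGraph.dist_comm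
        have c3 : T.dist y (vmaj T ℓx) = T.dist (vmaj T ℓx) y := SimpleGraph.dist_comm
        have c4 : T.dist x (vmaj T ℓy) = T.dist (vmaj T ℓy) x := SimpleGraph.dist_comm
        have c5 : T.dist (vmaj T ℓy) (vmaj T ℓx) = T.dist (vmaj T ℓx) (vmaj T ℓy) :=
          SimpleGraph.dist_comm
        unfold Btw at e1 e2
        omega
      · exact ⟨vmaj T ℓy, hvyU, h2⟩
    · exact ⟨vmaj T ℓx, hvxU, h1⟩

lemma up_card (hT : T.IsTree) (hn : 2 ≤ Fintype.card V) (hM : ∃ v, IsMajorVertex T v) :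
    (UpSet T).ncard =
      {x | IsInteriorDeg2 T x ∨ (IsMajorVertex T x ∧ terminalDeg T x = 0)}.ncard +
        {v | IsEndVertex T v}.ncard := by
  classical
  have hUeq : {x | ∃ ℓ, IsEndVertex T ℓ ∧ pck T (vmaj T ℓ) ≠ ℓ ∧ x = gat T (vmaj T ℓ) ℓ} =
      (fun ℓ => gat T (vmaj T ℓ) ℓ) '' {ℓ | IsEndVertex T ℓ ∧ pck T (vmaj T ℓ) ≠ ℓ} := by
    ext x
    simp only [Set.mem_setOf_eq, Set.mem_image]
    constructor
    · rintro ⟨ℓ, h1, h2, h3⟩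
      exact ⟨ℓ, ⟨h1, h2⟩, h3.symm⟩
    · rintro ⟨ℓ, ⟨h1, h2⟩, h3⟩
      exact ⟨ℓ, h1, h2, h3.symm⟩
  have hinj : Set.InjOn (fun ℓ => gat T (vmaj T ℓ) ℓ)
      {ℓ | IsEndVertex T ℓ ∧ pck T (vmaj T ℓ) ≠ ℓ} := by
    rintro ℓ1 ⟨h1, _⟩ ℓ2 ⟨h2, _⟩ he
    simp only at he
    by_contra hne
    exact leg_disjoint hT hM h1 h2 hne (gat_mem_leg hT hM h1)
      (he ▸ gat_mem_leg hT hM h2)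
  have hU : ({x | ∃ ℓ, IsEndVertex T ℓ ∧ pck T (vmaj T ℓ) ≠ ℓ ∧
      x = gat T (vmaj T ℓ) ℓ} : Set V).ncard =
      ({ℓ | IsEndVertex T ℓ ∧ pck T (vmaj T ℓ) ≠ ℓ} : Set V).ncard := by
    rw [hUeq, Set.ncard_image_of_injOn hinj]
  have hPeq : {v | IsEndVertex T v} \ {ℓ | IsEndVertex T ℓ ∧ pck T (vmaj T ℓ) ≠ ℓ} =
      {ℓ | IsEndVertex T ℓ ∧ pck T (vmaj T ℓ) = ℓ} := by
    ext ℓ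
    simp only [Set.mem_diff, Set.mem_setOf_eq]
    tauto
  have hPcard : ({ℓ | IsEndVertex T ℓ ∧ pck T (vmaj T ℓ) = ℓ} : Set V).ncard =
      ({v | IsExteriorMajor T v} : Set V).ncard := by
    have himg : (fun ℓ => vmaj T ℓ) '' {ℓ | IsEndVertex T ℓ ∧ pck T (vmaj T ℓ) = ℓ} =
        {v | IsExteriorMajor T v} := by
      ext v
      simp only [Set.mem_image, Set.mem_setOf_eq]
      constructor
      · rintro ⟨ℓ, ⟨hℓ, _⟩, rfl⟩
        exact ⟨(vmaj_spec hT hM hℓ).2.1, ℓ, vmaj_spec hT hM hℓ⟩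
      · rintro ⟨hmaj, ℓ, hterm⟩
        have hpterm : IsTerminalOf T (pck T v) v := pck_spec ⟨ℓ, hterm⟩
        refine ⟨pck T v, ⟨hpterm.1, ?_⟩, vmaj_eq hpterm⟩
        rw [vmaj_eq hpterm]
    have hinj2 : Set.InjOn (fun ℓ => vmaj T ℓ)
        {ℓ | IsEndVertex T ℓ ∧ pck T (vmaj T ℓ) = ℓ} := by
      rintro ℓ1 ⟨h1, hp1⟩ ℓ2 ⟨h2, hp2⟩ he
      simp only at he
      rw [← hp1, ← hp2, he]
    rw [← himg, Set.ncard_image_of_injOn hinj2]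
  have hdisj : Disjoint (CoreSet T)
      {x | ∃ ℓ, IsEndVertex T ℓ ∧ pck T (vmaj T ℓ) ≠ ℓ ∧ x = gat T (vmaj T ℓ) ℓ} := by
    rw [Set.disjoint_left]
    rintro x hx ⟨ℓ, hℓ, _, rfl⟩
    exact core_not_in_leg hT hM hℓ hx (gat_mem_leg hT hM hℓ)
  have hcc := core_card hT
  have hun : (UpSet T).ncard = (CoreSet T).ncard +
      ({x | ∃ ℓ, IsEndVertex T ℓ ∧ pck T (vmaj T ℓ) ≠ ℓ ∧
        x = gat T (vmaj T ℓ) ℓ} : Set V).ncard := by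
    rw [UpSet]
    exact Set.ncard_union_eq hdisj (Set.toFinite _) (Set.toFinite _)
  have hsplit : {ℓ | IsEndVertex T ℓ ∧ pck T (vmaj T ℓ) ≠ ℓ} ⊆ {v | IsEndVertex T v} :=
    fun ℓ h => h.1
  have hdiff := Set.ncard_diff hsplit (Set.toFinite _)
  rw [hPeq] at hdiff
  have hle := Set.ncard_le_ncard hsplit (Set.toFinite _)
  omega

end Structure

end TreeAux


/-- Let `T` be a finite tree of order at least 2 that is not a path,
and let `D` be the set of interior degree-two vertices together with major vertices of
terminal degree zero.  Then `cdim(T) = |D| + σ(T)`. -/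
theorem stmt_12 {V : Type*} [Fintype V] (T : SimpleGraph V) (hT : T.IsTree)
    (hn : 2 ≤ Fintype.card V)
    (hnp : ¬ Nonempty (T ≃g pathGraph (Fintype.card V))) :
    cdim T =
      {x : V | IsInteriorDeg2 T x ∨ (IsMajorVertex T x ∧ terminalDeg T x = 0)}.ncard +
        {v : V | IsEndVertex T v}.ncard := by
  have hM : ∃ v, IsMajorVertex T v := TreeAux.exists_major hT hn hnp
  have hmem : (TreeAux.UpSet T).ncard ∈ {n | ∃ S : Set V, IsConnResolving T S ∧ S.ncard = n} :=
    ⟨TreeAux.UpSet T, ⟨TreeAux.up_resolving hT hn hM, TreeAux.up_connected hT hn hM⟩, rfl⟩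
  apply le_antisymm
  · calc cdim T ≤ (TreeAux.UpSet T).ncard := Nat.sInf_le hmem
      _ = _ := TreeAux.up_card hT hn hM
  · apply le_csInf ⟨_, hmem⟩
    rintro n ⟨S, hcr, rfl⟩
    exact TreeAux.lower_bound hT hn hM hcr
end
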